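/- arXiv:1512.09007 — 12 statements merged into one kernel-verified Lean document; each statement's English description precedes it below -/
import Mathlib

section
/- Every group homomorphism g from the Baer–Specker group ℤ^ℕ to ℤ factors through a finite subproduct: there exist n ∈ ℕ and a group homomorphism g' : ℤ^n → ℤ such that g = g' ∘ π_n, where π_n : ℤ^ℕ → ℤ^n is the projection onto the first n coordinates. -/
lemma my_sign_mul_self (a : ℤ) (h : a ≠ 0) : a.sign * a = |a| := by
  rcases lt_trichotomy a 0 with h1 | h1 | h1
  · rw [Int.sign_eq_neg_one_of_neg h1, abs_of_neg h1]; ring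
  · exact absurd h1 h
  · rw [Int.sign_eq_one_of_pos h1, abs_of_pos h1]; ring

lemma specker_key (g : (ℕ → ℤ) →+ ℤ) :
    ∃ N : ℕ, ∀ x : ℕ → ℤ, (∀ i < N, x i = 0) → g x = 0 := by
  by_contra hcon
  push_neg at hcon
  choose x hx0 hxg using hcon
  set a : ℕ → ℕ × ℤ := fun m => Nat.rec ((0 : ℕ), (0 : ℤ))
    (fun m p => (p.1 + 2 + (p.2 + 2 ^ p.1 * |g (x m)|).toNat,
                 p.2 + 2 ^ p.1 * |g (x m)|)) m with ha
  set n : ℕ → ℕ := fun m => (a m).1 with hn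
  set S : ℕ → ℤ := fun m => (a m).2 with hS
  have hSrec : ∀ m : ℕ, S (m + 1) = S m + 2 ^ (n m) * |g (x m)| := fun m => rfl
  have hnrec : ∀ m : ℕ, n (m + 1) = n m + 2 + (S (m + 1)).toNat := fun m => rfl
  have hS0 : S 0 = 0 := rfl
  have habs : ∀ m : ℕ, (1 : ℤ) ≤ |g (x m)| := fun m => Int.one_le_abs (hxg m)
  have hSmono : ∀ m : ℕ, S m + 1 ≤ S (m + 1) := by
    intro m
    have h1 : (1 : ℤ) ≤ 2 ^ (n m) := one_le_pow₀ (by norm_num)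
    have h2 : (1 : ℤ) ≤ 2 ^ (n m) * |g (x m)| := by nlinarith [habs m]
    rw [hSrec]; linarith
  have hSge : ∀ m : ℕ, (m : ℤ) ≤ S m := by
    intro m
    induction m with
    | zero => simp [hS0]
    | succ k ih => have := hSmono k; push_cast; linarith
  have hnm : ∀ m : ℕ, n m < n (m + 1) := by intro m; rw [hnrec]; omega
  have hmono : ∀ {k m : ℕ}, m ≤ k → n m ≤ n k := by
    intro k m h
    induction k with
    | zero => have : m = 0 := by omega
              subst this; exact le_refl _
    | succ j ih =>
      rcases Nat.lt_succ_iff_lt_or_eq.mp (Nat.lt_succ_of_le h) with h' | h'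
      · exact le_trans (ih (by omega)) (le_of_lt (hnm j))
      · subst h'; exact le_refl _
  have hbig : ∀ m : ℕ, 2 * S (m + 1) < 2 ^ (n (m + 1)) := by
    intro m
    have hTS : S (m + 1) ≤ ((S (m + 1)).toNat : ℤ) := Int.self_le_toNat _
    have h1 : (S (m + 1)).toNat < 2 ^ (S (m + 1)).toNat := Nat.lt_two_pow_self
    have h2 : ((S (m + 1)).toNat : ℤ) < 2 ^ (S (m + 1)).toNat := by exact_mod_cast h1
    have h3 : (2 : ℤ) ^ (n m + 2 + (S (m + 1)).toNat)
        = 4 * 2 ^ (S (m + 1)).toNat * 2 ^ (n m) := by ring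
    rw [hnrec m, h3]
    have h4 : (1 : ℤ) ≤ 2 ^ (n m) := one_le_pow₀ (by norm_num)
    nlinarith
  set c : ℕ → ℤ := fun k => (g (x k)).sign * 2 ^ (n k) with hc
  have hcg : ∀ k : ℕ, c k * g (x k) = 2 ^ (n k) * |g (x k)| := by
    intro k
    show ((g (x k)).sign * 2 ^ (n k)) * g (x k) = _
    rw [mul_comm (g (x k)).sign, mul_assoc, my_sign_mul_self _ (hxg k)]
  have hSsum : ∀ m : ℕ, S m = ∑ k ∈ Finset.range m, c k * g (x k) := by
    intro m
    induction m with
    | zero => simp [hS0]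
    | succ j ih => rw [Finset.sum_range_succ, ← ih, hSrec, hcg]
  set y : ℕ → ℤ := fun i => ∑ k ∈ Finset.range (i + 1), c k * x k i with hy
  set z : ℕ → ℕ → ℤ := fun m i =>
    ∑ k ∈ Finset.Ico m (i + 1), (g (x k)).sign * 2 ^ (n k - n m) * x k i with hz
  have hdecomp' : ∀ m i : ℕ,
      y i = (∑ k ∈ Finset.range m, c k * x k i) + 2 ^ (n m) * z m i := by
    intro m i
    show (∑ k ∈ Finset.range (i + 1), c k * x k i)
      = (∑ k ∈ Finset.range m, c k * x k i)
        + 2 ^ (n m) * ∑ k ∈ Finset.Ico m (i + 1), (g (x k)).sign * 2 ^ (n k - n m) * x k i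
    rcases le_or_gt (i + 1) m with h | h
    · rw [Finset.Ico_eq_empty (by omega), Finset.sum_empty, mul_zero, add_zero]
      apply Finset.sum_subset (Finset.range_subset_range.mpr h)
      intro k hk hk'
      simp only [Finset.mem_range] at hk hk'
      rw [hx0 k i (by omega), mul_zero]
    · rw [Finset.range_eq_Ico,
        ← Finset.sum_Ico_consecutive (fun k => c k * x k i) (Nat.zero_le m)
          (by omega : m ≤ i + 1)]
      congr 1
      · rw [Finset.range_eq_Ico]
      rw [Finset.mul_sum]
      apply Finset.sum_congr rfl
      intro k hk
      simp only [Finset.mem_Ico] at hk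
      have hkm : n m ≤ n k := hmono hk.1
      have h2 : (2 : ℤ) ^ (n k) = 2 ^ (n m) * 2 ^ (n k - n m) := by
        rw [← pow_add, Nat.add_sub_cancel' hkm]
      show ((g (x k)).sign * 2 ^ (n k)) * x k i = _
      rw [h2]; ring
  have hgy : ∀ m : ℕ, g y = S m + 2 ^ (n m) * g (z m) := by
    intro m
    have hd : y = (∑ k ∈ Finset.range m, c k • x k) + (2 : ℤ) ^ (n m) • z m := by
      funext i
      rw [hdecomp' m i]
      simp [Finset.sum_apply]
    rw [hd, map_add, map_zsmul, smul_eq_mul, map_sum, hSsum]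
    congr 1
    apply Finset.sum_congr rfl
    intro k _
    rw [map_zsmul, smul_eq_mul]
  set t := g y with ht
  set m := t.natAbs + 1 with hm
  have h1 : |t| < S m := by
    have h0 := hSge m
    have he : ((m : ℕ) : ℤ) = (t.natAbs : ℤ) + 1 := by rw [hm]; push_cast; ring
    calc |t| = (t.natAbs : ℤ) := (Int.abs_eq_natAbs t)
    _ < (m : ℤ) := by rw [he]; linarith
    _ ≤ S m := hSge m
  have h6 : t ≤ |t| := le_abs_self t
  have h7 : -|t| ≤ t := neg_abs_le t
  have h2 : t ≠ S m := by omega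
  have h3 : g (z m) ≠ 0 := by
    intro h
    rw [hgy m, h, mul_zero, add_zero] at h2
    exact h2 rfl
  have h4 : (2 : ℤ) ^ (n m) ≤ |t - S m| := by
    rw [hgy m]
    have he : |S m + 2 ^ (n m) * g (z m) - S m| = 2 ^ (n m) * |g (z m)| := by
      rw [add_sub_cancel_left, abs_mul, abs_pow]
      norm_num
    rw [he]
    have := Int.one_le_abs h3
    nlinarith [pow_pos (by norm_num : (0:ℤ) < 2) (n m)]
  have h5 : 2 * S m < 2 ^ (n m) := hbig t.natAbs
  have h8 : |t - S m| = S m - t := by rw [abs_sub_comm]; exact abs_of_pos (by omega)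
  omega

/-- Every group homomorphism `g` from the Baer–Specker group `ℤ^ℕ` to `ℤ` factors through
a finite subproduct: there exist `n : ℕ` and a group homomorphism `g' : ℤ^n →+ ℤ` such that
`g = g' ∘ π_n`, where `π_n` is the projection onto the first `n` coordinates. -/
theorem specker_factors_through_finite_projection (g : (ℕ → ℤ) →+ ℤ) :
    ∃ (n : ℕ) (g' : (Fin n → ℤ) →+ ℤ), ∀ x : ℕ → ℤ, g x = g' (fun i : Fin n => x i) := by
  obtain ⟨N, hN⟩ := specker_key g
  refine ⟨N, g.comp
    { toFun := fun v i => if h : i < N then v ⟨i, h⟩ else 0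
      map_zero' := by funext i; by_cases h : i < N <;> simp [h]
      map_add' := by
        intro v w
        funext i
        by_cases h : i < N <;> simp [h] }, ?_⟩
  intro x
  have hzero : g (x - fun i => if h : i < N then x i else 0) = 0 := by
    apply hN
    intro i hi
    simp [hi]
  have := g.map_sub x (fun i => if h : i < N then x i else 0)
  rw [hzero] at this
  have hx : g x = g (fun i => if h : i < N then x i else 0) := by linarith
  rw [hx]
  rfl
end

section
/- Every group homomorphism g : ℤ^ℕ → ℤ is continuous, where ℤ^ℕ carries the Tychonoff product topology of the discrete topology on ℤ, and ℤ carries the discrete topology. -/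
open Finset

/-- State machine for the Specker construction: `(speckerA a k).1` is the exponent `s k`,
`(speckerA a k).2` is the partial sum `P k = ∑_{j<k} 2^(s j) * a j`. -/
def speckerA (a : ℕ → ℤ) : ℕ → ℕ × ℤ
  | 0 => (1, 0)
  | k+1 =>
    let p := speckerA a k
    let P := p.2 + 2 ^ p.1 * a k
    (2 * P.natAbs + p.1 + 1, P)

/-- Splitting lemma: if all coordinates of `y` from `K` on are divisible by `d`, then
`g y` is a finite sum plus a multiple of `d`. -/
lemma specker_split (g : (ℕ → ℤ) →+ ℤ) (y : ℕ → ℤ) (K : ℕ) (d : ℤ)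
    (hd : ∀ q, K ≤ q → d ∣ y q) :
    g y = (∑ m ∈ Finset.range K, y m * g (Pi.single m 1)) +
      d * g (fun q => if K ≤ q then y q / d else 0) := by
  have hy : y = (∑ m ∈ Finset.range K, y m • Pi.single m (1:ℤ)) +
      d • (fun q => if K ≤ q then y q / d else 0) := by
    funext q
    simp only [Pi.add_apply, Finset.sum_apply, Pi.smul_apply, smul_eq_mul, Pi.single_apply,
      mul_ite, mul_one, mul_zero]
    rw [Finset.sum_ite_eq (Finset.range K) q y]
    by_cases h : K ≤ q
    · rw [if_pos h, if_neg (by simpa using h), Int.mul_ediv_cancel' (hd q h), zero_add]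
    · rw [if_neg h, if_pos (by simpa using Nat.lt_of_not_le h), add_zero]
  conv_lhs => rw [hy]
  rw [map_add, map_sum, map_zsmul, smul_eq_mul]
  congr 1
  apply Finset.sum_congr rfl
  intro m _
  rw [map_zsmul, smul_eq_mul]

/-- If `g` kills the standard basis vectors from `N` on, it kills every sequence that
vanishes below `N` and whose `m`-th coordinate is divisible by `p^m`. -/
lemma specker_div_zero (g : (ℕ → ℤ) →+ ℤ) (N : ℕ)
    (hN : ∀ m, N ≤ m → g (Pi.single m 1) = 0)
    (y : ℕ → ℤ) (hy0 : ∀ m, m < N → y m = 0)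
    (p : ℤ) (hp : 2 ≤ p) (hdvd : ∀ m, p ^ m ∣ y m) : g y = 0 := by
  have key : ∀ K, N ≤ K → p ^ K ∣ g y := by
    intro K hK
    have hsplit := specker_split g y K (p ^ K)
      (fun q hq => dvd_trans (pow_dvd_pow p hq) (hdvd q))
    rw [hsplit]
    have hz : ∑ m ∈ Finset.range K, y m * g (Pi.single m 1) = 0 := by
      apply Finset.sum_eq_zero
      intro m _
      rcases lt_or_ge m N with h | h
      · rw [hy0 m h, zero_mul]
      · rw [hN m h, mul_zero]
    rw [hz, zero_add]
    exact Dvd.intro _ rfl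
  by_contra hc
  set c := g y with hcdef
  have hcb : |c| < p ^ (N + c.natAbs) := by
    have h1 : (c.natAbs : ℤ) < 2 ^ c.natAbs := by exact_mod_cast Nat.lt_two_pow_self (n := c.natAbs)
    calc |c| = (c.natAbs : ℤ) := Int.abs_eq_natAbs c
    _ < 2 ^ c.natAbs := h1
    _ ≤ p ^ c.natAbs := pow_le_pow_left₀ (by norm_num) hp _
    _ ≤ p ^ (N + c.natAbs) := pow_le_pow_right₀ (by linarith) (by omega)
  exact hc (Int.eq_zero_of_abs_lt_dvd (key _ (by omega)) hcb)

/-- Only finitely many basis vectors have nonzero image under `g`. -/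
lemma specker_finite (g : (ℕ → ℤ) →+ ℤ) :
    {m | g (Pi.single m 1) ≠ 0}.Finite := by
  classical
  by_contra hfin
  have hfin : {m | g (Pi.single m 1) ≠ 0}.Infinite := hfin
  set n : ℕ → ℕ := Nat.nth (fun m => g (Pi.single m 1) ≠ 0) with hn
  have hmono : StrictMono n := Nat.nth_strictMono hfin
  have hmem : ∀ k, g (Pi.single (n k) 1) ≠ 0 := fun k => Nat.nth_mem_of_infinite hfin k
  set a : ℕ → ℤ := fun k => g (Pi.single (n k) 1) with ha
  set s : ℕ → ℕ := fun k => (speckerA a k).1 with hs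
  set P : ℕ → ℤ := fun k => (speckerA a k).2 with hP
  have hP0 : P 0 = 0 := rfl
  have hs0 : s 0 = 1 := rfl
  have hPsucc : ∀ k, P (k+1) = P k + 2 ^ s k * a k := fun k => rfl
  have hssucc : ∀ k, s (k+1) = 2 * (P (k+1)).natAbs + s k + 1 := fun k => rfl
  have hsmono : StrictMono s :=
    strictMono_nat_of_lt_succ (fun k => by rw [hssucc]; omega)
  have hsge : ∀ k, 2 * (P k).natAbs < s k := by
    intro k
    cases k with
    | zero => simp [hs0, hP0]
    | succ k => rw [hssucc]; omega
  have hpow : ∀ k, 2 * |P k| < 2 ^ s k := by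
    intro k
    have h1 : (s k : ℤ) < 2 ^ s k := by exact_mod_cast Nat.lt_two_pow_self (n := s k)
    have h2 := hsge k
    rw [Int.abs_eq_natAbs]
    have h3 : ((2 * (P k).natAbs : ℕ) : ℤ) < (s k : ℤ) := by exact_mod_cast h2
    push_cast at h3 ⊢
    linarith
  -- the diagonal element
  set x : ℕ → ℤ := fun m => if h : ∃ k, n k = m then 2 ^ s (Nat.find h) else 0 with hx
  have hxn : ∀ k, x (n k) = 2 ^ s k := by
    intro k
    have h : ∃ j, n j = n k := ⟨k, rfl⟩
    have hf : n (Nat.find h) = n k := Nat.find_spec h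
    have : Nat.find h = k := hmono.injective hf
    simp only [hx, dif_pos h, this]
  have hPsum : ∀ K, P K = ∑ k ∈ Finset.range K, 2 ^ s k * a k := by
    intro K
    induction K with
    | zero => simp [hP0]
    | succ K ih => rw [hPsucc, ih, Finset.sum_range_succ]
  -- divisibility of the tail
  have hd : ∀ K q, n K ≤ q → (2:ℤ) ^ s K ∣ x q := by
    intro K q hq
    by_cases h : ∃ k, n k = q
    · have hf : n (Nat.find h) = q := Nat.find_spec h
      have hK : K ≤ Nat.find h := by
        by_contra hlt
        have : n (Nat.find h) < n K := hmono (Nat.lt_of_not_le hlt)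
        omega
      simp only [hx, dif_pos h]
      exact pow_dvd_pow 2 (hsmono.monotone hK)
    · simp only [hx, dif_neg h]
      exact dvd_zero _
  -- the key congruence
  have hcong : ∀ K, (2:ℤ) ^ s K ∣ g x - P K := by
    intro K
    rw [specker_split g x (n K) ((2:ℤ) ^ s K) (hd K)]
    have hsum : ∑ m ∈ Finset.range (n K), x m * g (Pi.single m 1) = P K := by
      rw [← Finset.sum_subset (s₁ := (Finset.range K).image n)
        (fun m hm => by
          obtain ⟨k, hk, rfl⟩ := Finset.mem_image.1 hm
          exact Finset.mem_range.2 (hmono (Finset.mem_range.1 hk)))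
        (fun m hm hnotin => by
          by_cases h : ∃ k, n k = m
          · exfalso
            apply hnotin
            have hf : n (Nat.find h) = m := Nat.find_spec h
            refine Finset.mem_image.2 ⟨Nat.find h, Finset.mem_range.2 ?_, hf⟩
            by_contra hge
            have : n K ≤ n (Nat.find h) := hmono.monotone (Nat.le_of_not_lt hge)
            have := Finset.mem_range.1 hm
            omega
          · simp only [hx, dif_neg h, zero_mul])]
      rw [Finset.sum_image (fun x _ y _ h => hmono.injective h), hPsum]
      apply Finset.sum_congr rfl
      intro k _
      rw [hxn k]
    rw [hsum]
    ring_nf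
    exact ⟨g fun q => if n K ≤ q then x q / 2 ^ s K else 0, by ring⟩
  -- conclusion
  set c := g x with hc
  have heq : ∀ k, 2 * c.natAbs ≤ k → c = P k := by
    intro k hk
    have h1 : 2 * |c| < 2 ^ s k := by
      have hsk : k ≤ s k := hsmono.le_apply
      have h2 : (s k : ℤ) < 2 ^ s k := by exact_mod_cast Nat.lt_two_pow_self (n := s k)
      have : ((2 * c.natAbs : ℕ) : ℤ) ≤ (s k : ℤ) := by exact_mod_cast le_trans hk hsk
      rw [Int.abs_eq_natAbs]
      push_cast at this ⊢
      linarith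
    have h3 := hpow k
    have h4 := hcong k
    have h5 : |c - P k| < 2 ^ s k := by
      calc |c - P k| ≤ |c| + |P k| := abs_sub c (P k)
      _ < 2 ^ s k := by linarith
    have := Int.eq_zero_of_abs_lt_dvd h4 h5
    linarith [this]
  have h1 := heq (2 * c.natAbs) le_rfl
  have h2 := heq (2 * c.natAbs + 1) (by omega)
  rw [hPsucc] at h2
  have : (2:ℤ) ^ s (2 * c.natAbs) * a (2 * c.natAbs) = 0 := by linarith
  have hne : (2:ℤ) ^ s (2 * c.natAbs) ≠ 0 := by positivity
  exact hmem (2 * c.natAbs) (by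
    have := mul_eq_zero.1 this
    tauto)

/-- Every group homomorphism `g : ℤ^ℕ → ℤ` is continuous, where `ℤ^ℕ` carries the Tychonoff
product topology of the discrete topology on `ℤ`, and `ℤ` is discrete (note that the standard
topology on `ℤ` in Mathlib is the discrete one, and `ℕ → ℤ` carries the product topology). -/
theorem specker_hom_continuous (g : (ℕ → ℤ) →+ ℤ) : Continuous g := by
  classical
  obtain ⟨N, hN⟩ : ∃ N, ∀ m, N ≤ m → g (Pi.single m 1) = 0 := by
    obtain ⟨B, hB⟩ := (specker_finite g).bddAbove
    refine ⟨B + 1, fun m hm => by_contra fun h => ?_⟩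
    have : m ≤ B := hB h
    omega
  -- g kills everything supported above N
  have key : ∀ x : ℕ → ℤ, (∀ i, i < N → x i = 0) → g x = 0 := by
    intro x hx0
    have hco : ∀ m : ℕ, ∃ u v : ℤ, x m = 2 ^ m * u + 3 ^ m * v := by
      intro m
      have h23 : IsCoprime (2:ℤ) 3 := by
        rw [Int.isCoprime_iff_gcd_eq_one]; decide
      obtain ⟨A, B, hAB⟩ := (h23.pow (m := m) (n := m))
      exact ⟨A * x m, B * x m, by linear_combination (- x m) * hAB⟩
    choose u v huv using hco
    set U : ℕ → ℤ := fun m => if m < N then 0 else 2 ^ m * u m with hU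
    set V : ℕ → ℤ := fun m => if m < N then 0 else 3 ^ m * v m with hV
    have hxUV : x = U + V := by
      funext m
      simp only [hU, hV, Pi.add_apply]
      by_cases h : m < N
      · rw [if_pos h, if_pos h, hx0 m h, add_zero]
      · rw [if_neg h, if_neg h, huv m]
    have hgU : g U = 0 := by
      apply specker_div_zero g N hN U (fun m hm => by simp [hU, hm]) 2 le_rfl
      intro m
      simp only [hU]
      by_cases h : m < N
      · rw [if_pos h]; exact dvd_zero _
      · rw [if_neg h]; exact Dvd.intro _ rfl
    have hgV : g V = 0 := by
      apply specker_div_zero g N hN V (fun m hm => by simp [hV, hm]) 3 (by norm_num)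
      intro m
      simp only [hV]
      by_cases h : m < N
      · rw [if_pos h]; exact dvd_zero _
      · rw [if_neg h]; exact Dvd.intro _ rfl
    rw [hxUV, map_add, hgU, hgV, add_zero]
  -- explicit formula for g
  have hrep : ∀ x : ℕ → ℤ, g x = ∑ i ∈ Finset.range N, x i * g (Pi.single i 1) := by
    intro x
    have h0 : g (x - ∑ i ∈ Finset.range N, x i • Pi.single i (1:ℤ)) = 0 := by
      apply key
      intro i hi
      simp only [Pi.sub_apply, Finset.sum_apply, Pi.smul_apply, smul_eq_mul, Pi.single_apply,
        mul_ite, mul_one, mul_zero]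
      rw [Finset.sum_ite_eq (Finset.range N) i x, if_pos (Finset.mem_range.2 hi), sub_self]
    rw [map_sub, sub_eq_zero] at h0
    rw [h0, map_sum]
    apply Finset.sum_congr rfl
    intro i _
    rw [map_zsmul, smul_eq_mul]
  have hfun : (g : (ℕ → ℤ) → ℤ) = fun x => ∑ i ∈ Finset.range N, x i * g (Pi.single i 1) :=
    funext hrep
  rw [hfun]
  exact continuous_finset_sum _ fun i _ => (continuous_apply i).mul continuous_const
end

section
/- The coordinate projections g_n : ℤ^ℕ → ℤ, defined by g_n(x) = x(n), form a basis of the group Hom(ℤ^ℕ, ℤ): every group homomorphism from ℤ^ℕ to ℤ can be written uniquely as a finite ℤ-linear combination of the maps g_n. In particular, Hom(ℤ^ℕ, ℤ) is a free abelian group on countably many generators. -/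
namespace SpeckerAux

/-- If `d` divides every coordinate of `x`, it divides `φ x`. -/
lemma dvd_apply (φ : (ℕ → ℤ) →+ ℤ) (d : ℤ) (x : ℕ → ℤ) (h : ∀ n, d ∣ x n) : d ∣ φ x := by
  choose y hy using h
  refine ⟨φ y, ?_⟩
  have : x = d • y := by funext n; simp [hy n]
  rw [this, map_zsmul, smul_eq_mul]

lemma single_smul (n : ℕ) (c : ℤ) : (Pi.single n c : ℕ → ℤ) = c • Pi.single n (1:ℤ) := by
  funext k; simp [Pi.single_apply]

lemma map_single (φ : (ℕ → ℤ) →+ ℤ) (n : ℕ) (c : ℤ) :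
    φ (Pi.single n c) = c * φ (Pi.single n 1) := by
  rw [single_smul, map_zsmul, smul_eq_mul]

/-- `φ` of a vector whose `n`-th coordinate is divisible by `p ^ n` is zero,
provided `φ` kills all `Pi.single`s. -/
lemma apply_eq_zero_of_pow_dvd (φ : (ℕ → ℤ) →+ ℤ) (h : ∀ n, φ (Pi.single n 1) = 0)
    (p : ℤ) (hp : 2 ≤ p) (x : ℕ → ℤ) (hx : ∀ n, p ^ n ∣ x n) : φ x = 0 := by
  have key : ∀ N : ℕ, p ^ N ∣ φ x := by
    intro N
    have hd : ∀ M : ℕ, φ (fun k => if k < M then x k else 0) = 0 := by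
      intro M
      induction M with
      | zero => exact map_zero φ
      | succ M ih =>
        have : (fun k => if k < M + 1 then x k else 0)
            = (fun k => if k < M then x k else 0) + Pi.single M (x M) := by
          funext k
          by_cases h1 : k < M
          · simp [h1, Nat.lt_succ_of_lt h1, Pi.single_apply, (Nat.ne_of_lt h1)]
          · by_cases h2 : k = M
            · subst h2; simp [h1]
            · have : ¬ k < M + 1 := by omega
              simp [h1, h2, this, Pi.single_apply]
        rw [this, map_add, ih, map_single, h, mul_zero, add_zero]
    have hsplit : φ x = φ (fun k => if k < N then x k else 0)
        + φ (fun k => if k < N then 0 else x k) := by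
      rw [← map_add]
      congr 1
      funext k
      by_cases h1 : k < N <;> simp [h1]
    rw [hsplit, hd, zero_add]
    refine dvd_apply φ _ _ (fun n => ?_)
    by_cases h1 : n < N
    · simp [h1]
    · simp only [if_neg h1]
      exact dvd_trans (pow_dvd_pow p (by omega)) (hx n)
  by_contra hc
  have h1 : |φ x| < p ^ (φ x).natAbs := by
    calc |φ x| = ((φ x).natAbs : ℤ) := by rw [Int.abs_eq_natAbs]
    _ < (2:ℤ) ^ (φ x).natAbs := by
        exact_mod_cast (Nat.lt_two_pow_self (n := (φ x).natAbs))
    _ ≤ p ^ (φ x).natAbs := pow_le_pow_left₀ (by norm_num) hp _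
  exact hc (Int.eq_zero_of_abs_lt_dvd (key _) h1)

/-- A homomorphism killing all the `Pi.single`s is zero (via `2^n`/`3^n` splitting). -/
lemma eq_zero_of_single (φ : (ℕ → ℤ) →+ ℤ) (h : ∀ n, φ (Pi.single n 1) = 0) : φ = 0 := by
  ext x
  have hco : ∀ n : ℕ, ∃ a b : ℤ, x n = a * 2 ^ n + b * 3 ^ n := by
    intro n
    have : IsCoprime ((2:ℤ) ^ n) ((3:ℤ) ^ n) := IsCoprime.pow (by norm_num)
    obtain ⟨u, v, huv⟩ := this
    exact ⟨x n * u, x n * v, by linear_combination (x n) * huv.symm⟩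
  choose a b hab using hco
  have hx : x = (fun n => a n * 2 ^ n) + (fun n => b n * 3 ^ n) := by
    funext n; exact hab n
  rw [AddMonoidHom.zero_apply, hx, map_add,
    apply_eq_zero_of_pow_dvd φ h 2 le_rfl _ (fun n => ⟨a n, mul_comm _ _⟩),
    apply_eq_zero_of_pow_dvd φ h 3 (by norm_num) _ (fun n => ⟨b n, mul_comm _ _⟩),
    add_zero]

/-- Specker's key finiteness: `φ` kills all but finitely many `Pi.single`s. -/
lemma finite_support (φ : (ℕ → ℤ) →+ ℤ) : {n : ℕ | φ (Pi.single n 1) ≠ 0}.Finite := by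
  classical
  by_contra hfin
  set p : ℕ → Prop := fun n => φ (Pi.single n 1) ≠ 0 with hp
  have hinf : (setOf p).Infinite := hfin
  set f : ℕ → ℕ := Nat.nth p with hfdef
  have hfmono : StrictMono f := Nat.nth_strictMono hinf
  have hfinj : Function.Injective f := hfmono.injective
  set d : ℕ → ℤ := fun i => φ (Pi.single (f i) 1) with hd
  have hdne : ∀ i, d i ≠ 0 := fun i => Nat.nth_mem_of_infinite hinf i
  have hdone : ∀ i, 1 ≤ |d i| := fun i => Int.one_le_abs (hdne i)
  -- the recursively defined scalars `M` and partial sums `s`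
  set ms : ℕ → ℤ × ℤ := fun i => Nat.rec ((1 : ℤ), d 0)
    (fun i prev => (prev.1 * (2 * |prev.2| + 1),
      prev.2 + prev.1 * (2 * |prev.2| + 1) * d (i+1))) i with hms
  set M : ℕ → ℤ := fun i => (ms i).1 with hM
  set s : ℕ → ℤ := fun i => (ms i).2 with hs
  have hM0 : M 0 = 1 := rfl
  have hs0 : s 0 = d 0 := rfl
  have hMsucc : ∀ i, M (i+1) = M i * (2 * |s i| + 1) := fun i => rfl
  have hssucc : ∀ i, s (i+1) = s i + M (i+1) * d (i+1) := fun i => rfl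
  have hMpos : ∀ i, 0 < M i := by
    intro i
    induction i with
    | zero => norm_num [hM0]
    | succ i ih => rw [hMsucc]; positivity
  have hMbig : ∀ i, 2 * |s i| < M (i+1) := by
    intro i
    have h1 : 1 ≤ M i := hMpos i
    have := abs_nonneg (s i)
    rw [hMsucc]; nlinarith
  have hsgrow : ∀ i, |s i| + 1 ≤ |s (i+1)| := by
    intro i
    have h1 : M (i+1) ≤ M (i+1) * |d (i+1)| := le_mul_of_one_le_right (le_of_lt (hMpos (i+1))) (hdone (i+1))
    have h2 : |M (i+1) * d (i+1)| - |s i| ≤ |s (i+1)| := by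
      calc |M (i+1) * d (i+1)| - |s i| ≤ |s i + M (i+1) * d (i+1)| := by
            have h := abs_sub_abs_le_abs_sub (M (i+1) * d (i+1)) (-(s i))
            simp only [abs_neg, sub_neg_eq_add] at h
            calc |M (i+1) * d (i+1)| - |s i| ≤ |M (i+1) * d (i+1) + s i| := h
            _ = |s i + M (i+1) * d (i+1)| := by rw [add_comm]
          _ = |s (i+1)| := by rw [hssucc]
    have h3 : |M (i+1) * d (i+1)| = M (i+1) * |d (i+1)| := by
      rw [abs_mul, abs_of_pos (hMpos (i+1))]
    have h4 := hMbig i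
    have h5 := abs_nonneg (s i)
    nlinarith [h2, h3, h1]
  have hslb : ∀ i : ℕ, (i : ℤ) + 1 ≤ |s i| := by
    intro i
    induction i with
    | zero => simpa [hs0] using hdone 0
    | succ i ih =>
      have := hsgrow i
      push_cast
      linarith
  have hMdvd : ∀ i j, i ≤ j → M i ∣ M j := by
    intro i j hij
    induction hij with
    | refl => exact dvd_rfl
    | @step j h ih =>
      rw [hMsucc j]
      exact ih.mul_right _
  -- the test vector
  set x : ℕ → ℤ := fun n => if h : ∃ i, f i = n then M h.choose else 0 with hx
  have hxf : ∀ i, x (f i) = M i := by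
    intro i
    have h : ∃ j, f j = f i := ⟨i, rfl⟩
    have he : h.choose = i := hfinj h.choose_spec
    simp only [hx, dif_pos h, he]
  have hxnot : ∀ n, (∀ i, f i ≠ n) → x n = 0 := by
    intro n hn
    simp only [hx]
    rw [dif_neg]
    push_neg
    exact hn
  -- heads
  set head : ℕ → (ℕ → ℤ) := fun i => ∑ j ∈ Finset.range (i+1), Pi.single (f j) (M j) with hhead
  have head_succ : ∀ i, head (i+1) = head i + Pi.single (f (i+1)) (M (i+1)) := by
    intro i
    simp only [hhead]
    rw [Finset.sum_range_succ]
  have head_apply_mem : ∀ i j, j ≤ i → head i (f j) = M j := by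
    intro i j hij
    simp only [hhead, Finset.sum_apply]
    rw [Finset.sum_eq_single_of_mem j (Finset.mem_range.mpr (by omega))]
    · simp
    · intro k _ hk
      simp only [Pi.single_apply]
      rw [if_neg (fun h : f j = f k => hk (hfinj h.symm))]
  have head_apply_not : ∀ i n, (∀ j, j ≤ i → f j ≠ n) → head i n = 0 := by
    intro i n hn
    simp only [hhead, Finset.sum_apply]
    refine Finset.sum_eq_zero (fun k hk => ?_)
    have : f k ≠ n := hn k (by have := Finset.mem_range.mp hk; omega)
    simp [Pi.single_apply, this.symm]
  have hphihead : ∀ i, φ (head i) = s i := by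
    intro i
    induction i with
    | zero =>
      have : head 0 = Pi.single (f 0) (M 0) := by
        simp only [hhead]; rw [Finset.sum_range_one]
      rw [this, map_single, hM0, one_mul, hs0]
    | succ i ih =>
      rw [head_succ, map_add, ih, map_single, hssucc]
  -- key congruence : M (i+1) ∣ φ x - s i
  have hkey : ∀ i, M (i+1) ∣ φ x - s i := by
    intro i
    have hsplit : φ x - s i = φ (fun n => x n - head i n) := by
      have h1 : (fun n => x n - head i n) = x - head i := rfl
      rw [h1, map_sub, hphihead]
    rw [hsplit]
    refine dvd_apply φ _ _ (fun n => ?_)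
    by_cases h : ∃ j, f j = n
    · obtain ⟨j, rfl⟩ := h
      by_cases hj : j ≤ i
      · rw [hxf, head_apply_mem i j hj, sub_self]
        exact dvd_zero _
      · rw [hxf, head_apply_not i (f j) (fun k hk hfk => hj (by rw [hfinj hfk] at hk; omega)),
          sub_zero]
        exact hMdvd (i+1) j (by omega)
    · push_neg at h
      rw [hxnot n h, head_apply_not i n (fun j _ => h j), sub_self]
      exact dvd_zero _
  -- contradiction
  set c : ℤ := φ x with hc
  set i : ℕ := c.natAbs with hi
  have hica : ((i : ℕ) : ℤ) = |c| := by rw [hi, Int.abs_eq_natAbs]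
  have h1 : |c| < |s i| := by
    have h := hslb i
    linarith [h, hica.ge]
  have h2 : c - s i ≠ 0 := by
    intro h
    rw [sub_eq_zero] at h
    rw [h] at h1
    exact absurd h1 (lt_irrefl _)
  have h3 : M (i+1) ≤ |c - s i| := Int.le_of_dvd (abs_pos.mpr h2) ((dvd_abs _ _).mpr (hkey i))
  have h4 : |c - s i| ≤ |c| + |s i| := abs_sub c (s i)
  have h5 := hMbig i
  linarith

end SpeckerAux

open SpeckerAux in
/-- The coordinate projections `g_n : ℤ^ℕ → ℤ`, `g_n x = x n`, form a basis of the
group `Hom(ℤ^ℕ, ℤ)` (as a `ℤ`-module, i.e. as an abelian group): every homomorphism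
`ℤ^ℕ →+ ℤ` is uniquely a finite `ℤ`-linear combination of the `g_n`.  In particular,
`Hom(ℤ^ℕ, ℤ)` is free abelian on countably many generators. -/
theorem specker_dual_free_on_projections :
    ∃ b : Module.Basis ℕ ℤ ((ℕ → ℤ) →+ ℤ),
      ∀ n : ℕ, b n = Pi.evalAddMonoidHom (fun _ : ℕ => ℤ) n := by
  classical
  set g : ℕ → ((ℕ → ℤ) →+ ℤ) := fun n => Pi.evalAddMonoidHom (fun _ : ℕ => ℤ) n with hg
  -- the coordinates of a homomorphism
  set coords : ((ℕ → ℤ) →+ ℤ) → (ℕ →₀ ℤ) := fun φ =>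
    ⟨(finite_support φ).toFinset, fun n => φ (Pi.single n 1),
      fun n => by simp [Set.Finite.mem_toFinset]⟩ with hcoords
  have coords_apply : ∀ φ n, coords φ n = φ (Pi.single n 1) := fun φ n => rfl
  set lc : (ℕ →₀ ℤ) → ((ℕ → ℤ) →+ ℤ) :=
    fun l => Finsupp.linearCombination ℤ g l with hlc
  have lc_single : ∀ (l : ℕ →₀ ℤ) (n : ℕ), (lc l) (Pi.single n 1) = l n := by
    intro l n
    simp only [hlc, Finsupp.linearCombination_apply]
    have h1 : (l.sum fun j c => c • g j) (Pi.single n 1)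
        = l.sum fun j c => c * ((Pi.single n 1 : ℕ → ℤ) j) := by
      rw [Finsupp.sum, Finsupp.sum, AddMonoidHom.finset_sum_apply]
      rfl
    rw [h1, Finsupp.sum]
    by_cases hn : n ∈ l.support
    · rw [Finset.sum_eq_single_of_mem n hn]
      · simp
      · intro k _ hk
        simp [Pi.single_apply, hk]
    · rw [Finsupp.notMem_support_iff.mp hn]
      refine Finset.sum_eq_zero (fun k hk => ?_)
      have hkn : k ≠ n := fun h => hn (h ▸ hk)
      simp [Pi.single_apply, hkn]
  have right_inv : ∀ l, coords (lc l) = l := by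
    intro l
    ext n
    rw [coords_apply, lc_single]
  have left_inv : ∀ φ, lc (coords φ) = φ := by
    intro φ
    have hz : ∀ n, (φ - lc (coords φ)) (Pi.single n 1) = 0 := by
      intro n
      simp [AddMonoidHom.sub_apply, lc_single, coords_apply]
    have h0 := eq_zero_of_single _ hz
    rw [sub_eq_zero] at h0
    exact h0.symm
  refine ⟨Module.Basis.ofRepr ⟨⟨⟨coords, ?_⟩, ?_⟩, lc, left_inv, right_inv⟩, ?_⟩
  · intro φ ψ
    ext n
    simp [coords_apply]
  · intro c φ
    ext n
    simp only [coords_apply, Finsupp.coe_smul, Pi.smul_apply, smul_eq_mul]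
    rfl
  · intro n
    rw [Module.Basis.coe_ofRepr]
    show lc (Finsupp.single n 1) = g n
    simp only [hlc]
    rw [Finsupp.linearCombination_single, one_smul]
end

section
/- The group G is not discrete; that is, the singleton {0} is not an open subset of G. -/
/-- The topology of pointwise convergence on `G = Hom(ℤ^ℕ, ℤ)`, i.e. the topology induced
from the product `ℤ^(ℤ^ℕ)` with `ℤ` discrete. -/
noncomputable instance : TopologicalSpace ((ℕ → ℤ) →+ ℤ) :=
  TopologicalSpace.induced (fun g : (ℕ → ℤ) →+ ℤ => (g : (ℕ → ℤ) → ℤ)) Pi.topologicalSpace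

/-- For any finite set of elements of `ℤ^ℕ`, there is a nonzero homomorphism
`ℤ^ℕ → ℤ` vanishing on all of them. -/
lemma exists_ne_zero_vanishing (s : Finset (ℕ → ℤ)) :
    ∃ g : (ℕ → ℤ) →+ ℤ, g ≠ 0 ∧ ∀ x ∈ s, g x = 0 := by
  classical
  set m := s.card + 1 with hm
  -- the linear map sending coefficients `c` to the values of `∑ c j * πⱼ` on `s`
  let φ : (Fin m → ℤ) →ₗ[ℤ] ({x : ℕ → ℤ // x ∈ s} → ℤ) :=
    { toFun := fun c x => ∑ j : Fin m, c j * (x : ℕ → ℤ) j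
      map_add' := by
        intro a b
        funext x
        simp [add_mul, Finset.sum_add_distrib]
      map_smul' := by
        intro a b
        funext x
        simp [Finset.mul_sum, mul_assoc] }
  have hni : ¬ Function.Injective φ := by
    intro hinj
    have h1 := LinearMap.rank_le_of_injective φ hinj
    rw [rank_fin_fun, rank_fun'] at h1
    have : Fintype.card {x : ℕ → ℤ // x ∈ s} = s.card := by
      simp
    rw [this] at h1
    have : (m : Cardinal) ≤ (s.card : Cardinal) := h1
    have := Nat.cast_le.mp this
    omega
  rw [Function.not_injective_iff] at hni
  obtain ⟨a, b, hab, hne⟩ := hni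
  set c := a - b with hc
  have hc0 : c ≠ 0 := sub_ne_zero_of_ne hne
  have hφc : φ c = 0 := by
    rw [hc, map_sub, hab, sub_self]
  obtain ⟨j, hj⟩ := Function.ne_iff.mp hc0
  refine ⟨{ toFun := fun x => ∑ k : Fin m, c k * x k
            map_zero' := by simp
            map_add' := by
              intro a b
              simp [mul_add, Finset.sum_add_distrib] }, ?_, ?_⟩
  · intro h0
    have : (∑ k : Fin m, c k * Pi.single (M := fun _ : ℕ => ℤ) (j : ℕ) 1 k) = 0 := by
      have := DFunLike.congr_fun h0 (Pi.single (M := fun _ : ℕ => ℤ) (j : ℕ) 1)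
      simpa using this
    rw [Finset.sum_eq_single j] at this
    · simp at this
      exact hj this
    · intro k _ hk
      have : Pi.single (M := fun _ : ℕ => ℤ) (j : ℕ) 1 (k : ℕ) = 0 := by
        apply Pi.single_eq_of_ne
        exact fun h => hk (Fin.ext h)
      simp [this]
    · simp
  · intro x hx
    have := congr_fun hφc ⟨x, hx⟩
    simpa [φ] using this

/-- `G = Hom(ℤ^ℕ, ℤ)` with the topology of pointwise convergence is not discrete:
the singleton `{0}` is not open. -/
theorem G_not_discrete : ¬ IsOpen ({0} : Set ((ℕ → ℤ) →+ ℤ)) := by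
  intro h
  rw [isOpen_induced_iff] at h
  obtain ⟨V, hV, hpre⟩ := h
  have h0V : ((0 : (ℕ → ℤ) →+ ℤ) : (ℕ → ℤ) → ℤ) ∈ V := by
    have : (0 : (ℕ → ℤ) →+ ℤ) ∈ (fun g : (ℕ → ℤ) →+ ℤ => (g : (ℕ → ℤ) → ℤ)) ⁻¹' V := by
      rw [hpre]; rfl
    exact this
  obtain ⟨I, u, hu, hsub⟩ := isOpen_pi_iff.mp hV _ h0V
  obtain ⟨g, hg0, hgvan⟩ := exists_ne_zero_vanishing I
  have hgV : (g : (ℕ → ℤ) → ℤ) ∈ V := by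
    apply hsub
    intro x hx
    have : g x = 0 := hgvan x hx
    rw [this]
    have h0 : ((0 : (ℕ → ℤ) →+ ℤ) : (ℕ → ℤ) → ℤ) x ∈ u x := (hu x hx).2
    simpa using h0
  have : g ∈ ({0} : Set ((ℕ → ℤ) →+ ℤ)) := by
    rw [← hpre]; exact hgV
  exact hg0 (Set.mem_singleton_iff.mp this)
end

section
/- Every finite subset Y of ℤ^ℕ is contained in a finitely generated subgroup H of ℤ^ℕ such that ℤ^ℕ decomposes as an internal direct sum ℤ^ℕ = H ⊕ N for some subgroup N of ℤ^ℕ. -/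
/-- Extract the gcd from a nonzero integer sequence: `z = g • z'` where the coordinates
of `z'` generate the unit ideal, witnessed by a linear functional `ψ` with `ψ z' = 1`. -/
lemma exists_unimodular_factor (z : ℕ → ℤ) (hz : z ≠ 0) :
    ∃ (g : ℤ) (z' : ℕ → ℤ) (ψ : (ℕ → ℤ) →ₗ[ℤ] ℤ), g ≠ 0 ∧ z = g • z' ∧ ψ z' = 1 := by
  set I : Ideal ℤ := Ideal.span (Set.range z) with hI
  obtain ⟨g, hg⟩ : Submodule.IsPrincipal I := inferInstance
  have hzI : ∀ i, z i ∈ I := fun i => Ideal.subset_span ⟨i, rfl⟩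
  have hdvd : ∀ i, g ∣ z i := by
    intro i
    have h := hzI i
    rw [hg] at h
    obtain ⟨a, ha⟩ := Submodule.mem_span_singleton.mp h
    exact ⟨a, by rw [← ha, smul_eq_mul, mul_comm]⟩
  have hg0 : g ≠ 0 := by
    intro h
    apply hz
    funext i
    have := hdvd i
    rw [h, zero_dvd_iff] at this
    simpa using this
  set z' : ℕ → ℤ := fun i => z i / g with hz'
  have hzz' : z = g • z' := by
    funext i
    simp only [hz', Pi.smul_apply, smul_eq_mul]
    exact (Int.mul_ediv_cancel' (hdvd i)).symm
  have hgI : g ∈ I := by rw [hg]; exact Ideal.mem_span_singleton_self g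
  rw [hI, Ideal.span, Finsupp.mem_span_range_iff_exists_finsupp] at hgI
  obtain ⟨c, hc⟩ := hgI
  set ψ : (ℕ → ℤ) →ₗ[ℤ] ℤ := ∑ i ∈ c.support, c i • (LinearMap.proj i) with hψ
  have hψz : ψ z = g := by
    rw [← hc, Finsupp.sum]
    simp [hψ, LinearMap.sum_apply, smul_eq_mul]
  refine ⟨g, z', ψ, hg0, hzz', ?_⟩
  have h1 : ψ z = g * ψ z' := by rw [hzz', map_smul, smul_eq_mul]
  have : g * ψ z' = g * 1 := by rw [mul_one, ← h1, hψz]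
  exact mul_left_cancel₀ hg0 this

/-- Every finite list of elements of `ℤ^ℕ` is contained in the span of a
biorthogonal system. -/
lemma exists_biorthogonal (L : List (ℕ → ℤ)) :
    ∃ (d : ℕ) (e : Fin d → (ℕ → ℤ)) (φ : Fin d → ((ℕ → ℤ) →ₗ[ℤ] ℤ)),
      (∀ i j, φ i (e j) = if i = j then 1 else 0) ∧
      ∀ y ∈ L, y ∈ Submodule.span ℤ (Set.range e) := by
  induction L with
  | nil => exact ⟨0, Fin.elim0, Fin.elim0, fun i => i.elim0, by simp⟩
  | cons y L ih =>
    obtain ⟨d, e, φ, hbi, hmem⟩ := ih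
    have heH : ∀ j, e j ∈ Submodule.span ℤ (Set.range e) :=
      fun j => Submodule.subset_span ⟨j, rfl⟩
    set z : ℕ → ℤ := y - ∑ i, (φ i y) • e i with hzdef
    have hφz : ∀ i, φ i z = 0 := by
      intro i
      simp only [hzdef, map_sub, map_sum, map_smul, smul_eq_mul, hbi]
      rw [Finset.sum_eq_single i (fun j _ hj => by simp [if_neg (Ne.symm hj)]) (by simp)]
      simp
    by_cases hz : z = 0
    · refine ⟨d, e, φ, hbi, ?_⟩
      intro w hw
      rcases List.mem_cons.mp hw with h | h
      · rw [h]
        have hy : y = ∑ i, (φ i y) • e i := sub_eq_zero.mp hz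
        rw [hy]
        exact Submodule.sum_mem _ fun i _ => Submodule.smul_mem _ _ (heH i)
      · exact hmem w h
    · obtain ⟨g, z', ψ, hg0, hzz', hψz'⟩ := exists_unimodular_factor z hz
      have hφz' : ∀ i, φ i z' = 0 := by
        intro i
        have : g * φ i z' = 0 := by rw [← smul_eq_mul, ← map_smul, ← hzz', hφz]
        exact (mul_eq_zero.mp this).resolve_left hg0
      set e' : Fin (d + 1) → (ℕ → ℤ) := Fin.snoc e z' with he'
      set χ : (ℕ → ℤ) →ₗ[ℤ] ℤ := ψ - ∑ i, ψ (e i) • φ i with hχ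
      set φ' : Fin (d + 1) → ((ℕ → ℤ) →ₗ[ℤ] ℤ) := Fin.snoc φ χ with hφ'
      have hχe : ∀ j, χ (e j) = 0 := by
        intro j
        simp only [hχ, LinearMap.sub_apply, LinearMap.sum_apply, LinearMap.smul_apply,
          smul_eq_mul, hbi]
        rw [Finset.sum_eq_single j (fun i _ hi => by simp [if_neg hi]) (by simp)]
        simp
      have hχz' : χ z' = 1 := by
        simp [hχ, hψz', hφz']
      refine ⟨d + 1, e', φ', ?_, ?_⟩
      · intro i j
        refine Fin.lastCases ?_ (fun i' => ?_) i
        · refine Fin.lastCases ?_ (fun j' => ?_) j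
          · simp [hφ', he', Fin.snoc_last, hχz']
          · simp [hφ', he', Fin.snoc_last, Fin.snoc_castSucc, hχe j',
              (Fin.castSucc_lt_last j').ne']
        · refine Fin.lastCases ?_ (fun j' => ?_) j
          · simp [hφ', he', Fin.snoc_last, Fin.snoc_castSucc, hφz' i',
              (Fin.castSucc_lt_last i').ne]
          · simp only [hφ', he', Fin.snoc_castSucc, hbi i' j', Fin.castSucc_inj]
      · have hsub : Set.range e ⊆ Set.range e' := by
          rintro _ ⟨j, rfl⟩
          exact ⟨j.castSucc, by simp [he']⟩
        have hspan := Submodule.span_mono (R := ℤ) hsub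
        intro w hw
        rcases List.mem_cons.mp hw with h | h
        · rw [h]
          have hz'mem : z' ∈ Submodule.span ℤ (Set.range e') :=
            Submodule.subset_span ⟨Fin.last d, by simp [he']⟩
          have : y = ∑ i, (φ i y) • e i + g • z' := by
            rw [← hzz', hzdef]; abel
          rw [this]
          exact Submodule.add_mem _
            (Submodule.sum_mem _ fun i _ => Submodule.smul_mem _ _ (hspan (heH i)))
            (Submodule.smul_mem _ _ hz'mem)
        · exact hspan (hmem w h)

/-- Every finite subset `Y` of `ℤ^ℕ` is contained in a finitely generated subgroup `H`
of `ℤ^ℕ` which is a direct summand: `ℤ^ℕ = H ⊕ N` (internally) for some subgroup `N`. -/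
theorem finset_in_fg_direct_summand (Y : Finset (ℕ → ℤ)) :
    ∃ H N : AddSubgroup (ℕ → ℤ),
      AddSubgroup.FG H ∧ (Y : Set (ℕ → ℤ)) ⊆ (H : Set (ℕ → ℤ)) ∧ IsCompl H N := by
  obtain ⟨d, e, φ, hbi, hmem⟩ := exists_biorthogonal Y.toList
  set Hs : Submodule ℤ (ℕ → ℤ) := Submodule.span ℤ (Set.range e) with hHs
  set H : AddSubgroup (ℕ → ℤ) := Hs.toAddSubgroup with hH
  set N : AddSubgroup (ℕ → ℤ) := (⨅ i, LinearMap.ker (φ i)).toAddSubgroup with hN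
  have hmemN : ∀ x, x ∈ N ↔ ∀ i, φ i x = 0 := by
    intro x
    simp [hN, Submodule.mem_toAddSubgroup, Submodule.mem_iInf, LinearMap.mem_ker]
  refine ⟨H, N, ?_, ?_, ?_, ?_⟩
  · rw [hH, hHs, Submodule.span_int_eq_addSubgroupClosure]
    exact ⟨(Set.finite_range e).toFinset, by simp⟩
  · intro y hy
    exact hmem y (Finset.mem_toList.mpr hy)
  · -- Disjoint
    rw [disjoint_iff]
    ext x
    simp only [AddSubgroup.mem_inf, AddSubgroup.mem_bot]
    constructor
    · rintro ⟨hxH, hxN⟩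
      rw [hH, Submodule.mem_toAddSubgroup, hHs, Submodule.mem_span_range_iff_exists_fun] at hxH
      obtain ⟨c, rfl⟩ := hxH
      rw [hmemN] at hxN
      have hc : ∀ j, c j = 0 := by
        intro j
        have := hxN j
        simp only [map_sum, map_smul, smul_eq_mul, hbi] at this
        rwa [Finset.sum_eq_single j (fun i _ hi => by simp [Ne.symm hi]) (by simp),
          if_pos rfl, mul_one] at this
      simp [hc]
    · rintro rfl
      exact ⟨zero_mem H, zero_mem N⟩
  · -- Codisjoint
    rw [codisjoint_iff, eq_top_iff]
    intro x _
    rw [AddSubgroup.mem_sup]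
    refine ⟨∑ i, (φ i x) • e i, ?_, x - ∑ i, (φ i x) • e i, ?_, by abel⟩
    · exact Submodule.sum_mem _ fun i _ =>
        Submodule.smul_mem _ _ (Submodule.subset_span ⟨i, rfl⟩)
    · rw [hmemN]
      intro j
      simp only [map_sub, map_sum, map_smul, smul_eq_mul, hbi]
      rw [Finset.sum_eq_single j (fun i _ hi => by simp [Ne.symm hi]) (by simp),
        if_pos rfl, mul_one, sub_self]
end

section
/- The evaluation map e : ℤ^ℕ × G → ℤ defined by e(x, g) = g(x) is separately continuous: for each fixed x ∈ ℤ^ℕ the map g ↦ g(x) is continuous on G, and for each fixed g ∈ G the map x ↦ g(x) is continuous on ℤ^ℕ (where ℤ^ℕ carries the product topology of the discrete topology on ℤ, and ℤ is discrete). -/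
/-- If every coordinate of `z` is divisible by `m`, then `g z` is divisible by `m`. -/
lemma dvd_apply_of_forall_dvd (g : (ℕ → ℤ) →+ ℤ) (m : ℤ) (z : ℕ → ℤ)
    (h : ∀ i, m ∣ z i) : m ∣ g z := by
  have hz : z = m • fun i => z i / m := by
    funext i
    simp only [Pi.smul_apply, smul_eq_mul]
    exact (Int.mul_ediv_cancel' (h i)).symm
  rw [hz, map_zsmul]
  exact Dvd.intro _ rfl

/-- Specker's key lemma: every homomorphism `ℤ^ℕ → ℤ` vanishes on a tail subgroup. -/
lemma exists_tail_vanish (g : (ℕ → ℤ) →+ ℤ) :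
    ∃ n : ℕ, ∀ x : ℕ → ℤ, (∀ i < n, x i = 0) → g x = 0 := by
  by_contra h
  push_neg at h
  choose x hx hgx using h
  set a : ℕ → ℤ := fun n => g (x n) with ha
  -- moduli
  have : ∃ m : ℕ → ℤ, m 0 = 1 ∧ ∀ n, m (n + 1) = m n * (|a n| + 1) := by
    refine ⟨fun n => Nat.rec 1 (fun k mk => mk * (|a k| + 1)) n, rfl, fun n => rfl⟩
  obtain ⟨m, hm0, hmS⟩ := this
  have hmpos : ∀ n, 0 < m n := by
    intro n
    induction n with
    | zero => simp [hm0]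
    | succ k ih =>
      rw [hmS]
      exact mul_pos ih (by positivity)
  have hmdvd : ∀ {i j : ℕ}, i ≤ j → m i ∣ m j := by
    intro i j hij
    induction j with
    | zero => simpa [Nat.le_zero.mp hij]
    | succ k ih =>
      rcases Nat.lt_or_ge i (k + 1) with hk | hk
      · rw [hmS]; exact (ih (Nat.lt_succ_iff.mp hk)).mul_right _
      · have : i = k + 1 := le_antisymm hij hk
        simp [this]
  -- the coefficients
  set c : (ℕ → Bool) → ℕ → ℤ := fun ε n => if ε n then m n else 0 with hc
  -- the vectors
  set y : (ℕ → Bool) → ℕ → ℤ := fun ε i => ∑ n ∈ Finset.range (i + 1), c ε n * x n i with hy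
  -- key congruence: g (y ε) ≡ ∑_{n<N} c ε n * a n  (mod m N)
  have key : ∀ (ε : ℕ → Bool) (N : ℕ),
      m N ∣ g (y ε) - ∑ n ∈ Finset.range N, c ε n * a n := by
    intro ε N
    have hsum : ∀ n, g (x n) = a n := fun n => rfl
    have : (∑ n ∈ Finset.range N, c ε n * a n) = g (∑ n ∈ Finset.range N, c ε n • x n) := by
      rw [map_sum]
      refine Finset.sum_congr rfl fun k _ => ?_
      rw [map_zsmul, smul_eq_mul]
    rw [this, ← map_sub]
    apply dvd_apply_of_forall_dvd
    intro i
    have hcoord : (y ε - ∑ n ∈ Finset.range N, c ε n • x n) i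
        = y ε i - ∑ n ∈ Finset.range N, c ε n * x n i := by
      simp [Finset.sum_apply]
    rw [hcoord]
    show m N ∣ (∑ n ∈ Finset.range (i + 1), c ε n * x n i) - ∑ n ∈ Finset.range N, c ε n * x n i
    rcases Nat.le_total N (i + 1) with hN | hN
    · -- extra terms n ∈ [N, i+1), each divisible by m N
      rw [← Finset.sum_range_add_sum_Ico _ hN]
      simp only [add_sub_cancel_left]
      apply Finset.dvd_sum
      intro n hn
      have hNn : N ≤ n := (Finset.mem_Ico.mp hn).1
      have : m N ∣ c ε n := by
        rcases hcE : ε n with _ | _ <;> simp [hc, hcE, hmdvd hNn]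
      exact this.mul_right _
    · -- terms n ∈ [i+1, N) vanish since x n i = 0 for i < n
      rw [← Finset.sum_range_add_sum_Ico _ hN]
      have hzero : ∑ n ∈ Finset.Ico (i + 1) N, c ε n * x n i = 0 := by
        apply Finset.sum_eq_zero
        intro n hn
        have : i < n := (Finset.mem_Ico.mp hn).1
        rw [hx n i this, mul_zero]
      rw [hzero]
      simp
  -- injectivity of ε ↦ g (y ε)
  have hinj : Function.Injective fun ε : ℕ → Bool => g (y ε) := by
    intro ε ε' heq
    by_contra hne
    have hne' : ∃ n, ε n ≠ ε' n := by
      by_contra hall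
      push_neg at hall
      exact hne (funext hall)
    classical
    set N := Nat.find hne' with hN
    have hdN : ε N ≠ ε' N := Nat.find_spec hne'
    have hagree : ∀ k < N, ε k = ε' k := fun k hk => by
      by_contra hkne
      exact absurd (Nat.find_le hkne) (not_le.mpr hk)
    have h1 := key ε (N + 1)
    have h2 := key ε' (N + 1)
    have hsum1 : ∑ n ∈ Finset.range (N + 1), c ε n * a n
        = (∑ n ∈ Finset.range N, c ε n * a n) + c ε N * a N := Finset.sum_range_succ _ _
    have hsum2 : ∑ n ∈ Finset.range (N + 1), c ε' n * a n
        = (∑ n ∈ Finset.range N, c ε' n * a n) + c ε' N * a N := Finset.sum_range_succ _ _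
    have hpre : ∑ n ∈ Finset.range N, c ε n * a n = ∑ n ∈ Finset.range N, c ε' n * a n := by
      apply Finset.sum_congr rfl
      intro k hk
      rw [hc]
      simp [hagree k (Finset.mem_range.mp hk)]
    have hdvd : m (N + 1) ∣ (c ε N - c ε' N) * a N := by
      have := dvd_sub h2 h1
      simp only [heq] at this
      rw [hsum1, hsum2, hpre] at this
      have heq2 : (g (y ε') - ((∑ n ∈ Finset.range N, c ε' n * a n) + c ε' N * a N))
          - (g (y ε') - ((∑ n ∈ Finset.range N, c ε' n * a n) + c ε N * a N))
          = (c ε N - c ε' N) * a N := by ring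
      rwa [heq2] at this
    have hceq : ∀ δ : ℕ → Bool, c δ N = if δ N then m N else 0 := fun δ => rfl
    have hcd : c ε N - c ε' N = m N ∨ c ε N - c ε' N = -(m N) := by
      rw [hceq, hceq]
      rcases h1 : ε N with _ | _ <;> rcases h2 : ε' N with _ | _ <;>
        simp_all
    have habs : |(c ε N - c ε' N) * a N| < m (N + 1) := by
      have han : a N ≠ 0 := hgx N
      have : |(c ε N - c ε' N) * a N| = m N * |a N| := by
        rcases hcd with h | h <;>
          rw [h, abs_mul] <;>
          simp [abs_of_pos (hmpos N)]
      rw [this, hmS]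
      have := hmpos N
      nlinarith [abs_nonneg (a N)]
    have hne0 : (c ε N - c ε' N) * a N ≠ 0 := by
      have han : a N ≠ 0 := hgx N
      rcases hcd with h | h <;> rw [h] <;>
        exact mul_ne_zero (by simpa using (hmpos N).ne') han
    exact hne0 (Int.eq_zero_of_abs_lt_dvd hdvd habs)
  -- contradiction: (ℕ → Bool) would be countable
  have : ∃ F : (ℕ → Bool) → ℕ, Function.Injective F := by
    obtain ⟨e⟩ := nonempty_embedding_nat ℤ
    exact ⟨fun ε => e (g (y ε)), fun ε ε' h => hinj (e.injective h)⟩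
  obtain ⟨F, hF⟩ := this
  classical
  set inv : ℕ → (ℕ → Bool) := Function.invFun F with hinv
  have hli : Function.LeftInverse inv F := Function.leftInverse_invFun hF
  set d : ℕ → Bool := fun n => !(inv n n) with hd
  have h2 : d (F d) = !(inv (F d) (F d)) := rfl
  rw [hli d] at h2
  simp at h2

/-- Every homomorphism `ℤ^ℕ → ℤ` is continuous. -/
lemma hom_continuous (g : (ℕ → ℤ) →+ ℤ) : Continuous fun x : ℕ → ℤ => g x := by
  obtain ⟨n, hn⟩ := exists_tail_vanish g
  have hrep : ∀ x : ℕ → ℤ, g x = ∑ i ∈ Finset.range n, x i * g (Pi.single i 1) := by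
    intro x
    have hzero : g (x - ∑ i ∈ Finset.range n, x i • Pi.single i (1 : ℤ)) = 0 := by
      apply hn
      intro j hj
      have hs : ∑ i ∈ Finset.range n, x i * (Pi.single i (1 : ℤ) : ℕ → ℤ) j = x j := by
        rw [Finset.sum_eq_single j]
        · simp
        · intro i _ hij; simp [Pi.single_apply, hij]
        · intro hjm; exact absurd (Finset.mem_range.mpr hj) hjm
      have hco : (x - ∑ i ∈ Finset.range n, x i • Pi.single i (1 : ℤ)) j
          = x j - ∑ i ∈ Finset.range n, x i * (Pi.single i (1 : ℤ) : ℕ → ℤ) j := by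
        simp [Finset.sum_apply]
      rw [hco, hs, sub_self]
    rw [map_sub, map_sum, sub_eq_zero] at hzero
    rw [hzero]
    apply Finset.sum_congr rfl
    intro i _
    rw [map_zsmul, smul_eq_mul]
  have : (fun x : ℕ → ℤ => g x)
      = fun x => ∑ i ∈ Finset.range n, x i * g (Pi.single i 1) := funext hrep
  rw [this]
  exact continuous_finset_sum _ fun i _ =>
    (continuous_apply i).mul continuous_const

/-- The evaluation map `e : ℤ^ℕ × G → ℤ`, `e (x, g) = g x`, is separately continuous:
for fixed `x` the map `g ↦ g x` is continuous on `G`, and for fixed `g` the map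
`x ↦ g x` is continuous on `ℤ^ℕ`. -/
theorem evaluation_separately_continuous :
    (∀ x : ℕ → ℤ, Continuous fun g : (ℕ → ℤ) →+ ℤ => g x) ∧
    (∀ g : (ℕ → ℤ) →+ ℤ, Continuous fun x : ℕ → ℤ => g x) := by
  constructor
  · intro x
    exact (continuous_apply x).comp continuous_induced_dom
  · exact hom_continuous
end

section
/- For every nonempty compact subset K of G there exists m ∈ ℕ such that g(x) = 0 for every g ∈ K and every x ∈ ℤ^ℕ satisfying x(i) = 0 for all i ≤ m. -/
/-- Evaluation at a fixed point is uniformly bounded on a compact set. -/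
lemma eval_bound (K : Set ((ℕ → ℤ) →+ ℤ)) (hK : IsCompact K) (x : ℕ → ℤ) :
    ∃ N : ℕ, ∀ g ∈ K, |g x| ≤ (N : ℤ) := by
  have hcont : Continuous fun g : (ℕ → ℤ) →+ ℤ => g x :=
    (continuous_apply x).comp continuous_induced_dom
  have hfin : Set.Finite ((fun g : (ℕ → ℤ) →+ ℤ => g x) '' K) :=
    (hK.image hcont).finite_of_discrete
  have hfin2 : Set.Finite ((fun v : ℤ => |v|) '' ((fun g : (ℕ → ℤ) →+ ℤ => g x) '' K)) :=
    hfin.image _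
  obtain ⟨N, hN⟩ := hfin2.bddAbove
  refine ⟨N.toNat, fun g hg => ?_⟩
  have : |g x| ≤ N := hN ⟨g x, ⟨g, hg, rfl⟩, rfl⟩
  exact this.trans (Int.self_le_toNat N)

/-- For every nonempty compact subset `K` of `G = Hom(ℤ^ℕ, ℤ)` there exists `m : ℕ` such
that `g x = 0` for all `g ∈ K` and all `x : ℕ → ℤ` vanishing on the first coordinates
`i ≤ m`. -/
theorem compact_subset_kills_tail (K : Set ((ℕ → ℤ) →+ ℤ)) (hK : IsCompact K)
    (hne : K.Nonempty) :
    ∃ m : ℕ, ∀ g ∈ K, ∀ x : ℕ → ℤ, (∀ i ≤ m, x i = 0) → g x = 0 := by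
  by_contra hcon
  push_neg at hcon
  choose g hg x hx hgx using hcon
  choose B hB using fun j => eval_bound K hK (x j)
  -- recursive data: e k = exponent, A k = bound on the prefix sum
  let E : ℕ → ℕ × ℕ := fun k =>
    Nat.rec ((0, 0) : ℕ × ℕ)
      (fun k p => (p.1 + 1 + 2 * (p.2 + 2 ^ p.1 * B k) + 2 * (k + 1),
                   p.2 + 2 ^ p.1 * B k)) k
  let e : ℕ → ℕ := fun k => (E k).1
  let A : ℕ → ℕ := fun k => (E k).2
  have hA0 : A 0 = 0 := rfl
  have hAs : ∀ k, A (k + 1) = A k + 2 ^ (e k) * B k := fun _ => rfl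
  have hes : ∀ k, e (k + 1) = e k + 1 + 2 * A (k + 1) + 2 * (k + 1) := fun _ => rfl
  have hemono : Monotone e := monotone_nat_of_le_succ (fun k => by rw [hes k]; omega)
  have hstar : ∀ k, 2 * A k + 2 * k < 2 ^ (e k) := by
    intro k
    cases k with
    | zero => simp [hA0]
    | succ k =>
      have h1 := hes k
      have h2 := Nat.lt_two_pow_self (n := e (k + 1))
      omega
  have hstarZ : ∀ k, 2 * (A k : ℤ) + 2 * (k : ℤ) < 2 ^ (e k) := by
    intro k; exact_mod_cast hstar k
  have hAsum : ∀ k, (A k : ℤ) = ∑ j ∈ Finset.range k, (2 : ℤ) ^ (e j) * (B j : ℤ) := by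
    intro k
    induction k with
    | zero => simp [hA0]
    | succ k ih => rw [Finset.sum_range_succ, ← ih, hAs k]; push_cast; ring
  let y : ℕ → ℤ := fun i => ∑ j ∈ Finset.range i, (2 : ℤ) ^ (e j) * x j i
  let z : ℕ → ℕ → ℤ := fun n i =>
    ∑ j ∈ Finset.Ico n (max i n), (2 : ℤ) ^ (e j - e n) * x j i
  -- decomposition of y
  have hy : ∀ n : ℕ,
      y = (∑ j ∈ Finset.range n, (2 : ℤ) ^ (e j) • x j) + (2 : ℤ) ^ (e n) • z n := by
    intro n
    funext i
    simp only [Pi.add_apply, Pi.smul_apply, Finset.sum_apply, smul_eq_mul, y, z]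
    have h1 : ∑ j ∈ Finset.range i, (2 : ℤ) ^ (e j) * x j i
        = ∑ j ∈ Finset.range (max i n), (2 : ℤ) ^ (e j) * x j i := by
      refine Finset.sum_subset (Finset.range_subset_range.2 (le_max_left i n)) ?_
      intro j hj hj'
      have : i ≤ j := by
        simp only [Finset.mem_range, not_lt] at hj'
        exact hj'
      rw [hx j i this, mul_zero]
    rw [h1, Finset.range_eq_Ico,
      ← Finset.sum_Ico_consecutive _ (Nat.zero_le n) (le_max_right i n),
      ← Finset.range_eq_Ico, Finset.mul_sum]
    congr 1
    refine Finset.sum_congr rfl ?_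
    intro j hj
    have hnj : n ≤ j := (Finset.mem_Ico.1 hj).1
    rw [← mul_assoc, ← pow_add, Nat.add_sub_cancel' (hemono hnj)]
  have hdecomp : ∀ n : ℕ, ∀ gg : (ℕ → ℤ) →+ ℤ,
      gg y = (∑ j ∈ Finset.range n, (2 : ℤ) ^ (e j) * gg (x j))
        + (2 : ℤ) ^ (e n) * gg (z n) := by
    intro n gg
    rw [hy n, map_add, map_sum, map_zsmul, smul_eq_mul]
    congr 1
    refine Finset.sum_congr rfl ?_
    intro j _
    rw [map_zsmul, smul_eq_mul]
  obtain ⟨M, hM⟩ := eval_bound K hK y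
  set k : ℕ := M + 1 with hk
  have hdk := hdecomp (k + 1) (g k)
  rw [Finset.sum_range_succ] at hdk
  set S : ℤ := ∑ j ∈ Finset.range k, (2 : ℤ) ^ (e j) * g k (x j) with hS
  set T : ℤ := g k (z (k + 1)) with hT
  set b : ℤ := g k (x k) with hbdef
  have hSbound : |S| ≤ (A k : ℤ) := by
    rw [hS, hAsum k]
    refine (Finset.abs_sum_le_sum_abs _ _).trans ?_
    refine Finset.sum_le_sum ?_
    intro j _
    have h1 : |(2 : ℤ) ^ (e j) * g k (x j)| = 2 ^ (e j) * |g k (x j)| := by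
      rw [abs_mul, abs_pow]; norm_num
    rw [h1]
    exact mul_le_mul_of_nonneg_left (hB j (g k) (hg k)) (by positivity)
  have hb1 : (1 : ℤ) ≤ |b| := Int.one_le_abs (hgx k)
  have hbB : |b| ≤ (B k : ℤ) := hB k (g k) (hg k)
  have hMy : |g k y| ≤ (M : ℤ) := hM (g k) (hg k)
  have habs_cb : |(2 : ℤ) ^ (e k) * b| = 2 ^ (e k) * |b| := by
    rw [abs_mul, abs_pow]; norm_num
  have habs_T : |(2 : ℤ) ^ (e (k + 1)) * T| = 2 ^ (e (k + 1)) * |T| := by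
    rw [abs_mul, abs_pow]; norm_num
  have hAsZ : (A (k + 1) : ℤ) = (A k : ℤ) + 2 ^ (e k) * (B k : ℤ) := by
    have := hAs k; push_cast [this]; ring
  by_cases hT0 : T = 0
  · -- then g k y = S + 2^{e k} * b, which is too large
    rw [hT0, mul_zero, add_zero] at hdk
    have h1 : |(2 : ℤ) ^ (e k) * b| ≤ |g k y| + |S| := by
      have : (2 : ℤ) ^ (e k) * b = g k y - S := by rw [hdk]; ring
      rw [this]
      exact abs_sub _ _
    have h2 : (2 : ℤ) ^ (e k) ≤ 2 ^ (e k) * |b| :=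
      le_mul_of_one_le_right (by positivity) hb1
    have h3 := hstarZ k
    have hA0' : (0 : ℤ) ≤ (A k : ℤ) := Int.natCast_nonneg _
    have hkM : (k : ℤ) = (M : ℤ) + 1 := by rw [hk]; push_cast; ring
    rw [habs_cb] at h1
    linarith
  · -- then the tail term is too divisible
    have h1 : |(2 : ℤ) ^ (e (k + 1)) * T|
        ≤ |g k y| + |S| + |(2 : ℤ) ^ (e k) * b| := by
      have : (2 : ℤ) ^ (e (k + 1)) * T = g k y - S - (2 : ℤ) ^ (e k) * b := by
        rw [hdk]; ring
      rw [this]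
      calc |g k y - S - (2 : ℤ) ^ (e k) * b|
          ≤ |g k y - S| + |(2 : ℤ) ^ (e k) * b| := abs_sub _ _
        _ ≤ |g k y| + |S| + |(2 : ℤ) ^ (e k) * b| := by
            have := abs_sub (g k y) S
            linarith
    have h2 : (2 : ℤ) ^ (e (k + 1)) ≤ 2 ^ (e (k + 1)) * |T| :=
      le_mul_of_one_le_right (by positivity) (Int.one_le_abs hT0)
    have h3 := hstarZ (k + 1)
    have hcb : |(2 : ℤ) ^ (e k) * b| ≤ 2 ^ (e k) * (B k : ℤ) := by
      rw [habs_cb]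
      exact mul_le_mul_of_nonneg_left hbB (by positivity)
    have hA0' : (0 : ℤ) ≤ (A k : ℤ) := Int.natCast_nonneg _
    have hkM : (k : ℤ) = (M : ℤ) + 1 := by rw [hk]; push_cast; ring
    rw [habs_T] at h1
    have hk1 : ((k : ℤ) + 1) = (k + 1 : ℕ) := by push_cast; ring
    have h3' : 2 * ((A k : ℤ) + 2 ^ (e k) * (B k : ℤ)) + 2 * ((k : ℤ) + 1)
        < 2 ^ (e (k + 1)) := by
      rw [← hAsZ]
      calc 2 * (A (k + 1) : ℤ) + 2 * ((k : ℤ) + 1)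
          = 2 * (A (k + 1) : ℤ) + 2 * ((k + 1 : ℕ) : ℤ) := by push_cast; ring
        _ < 2 ^ (e (k + 1)) := hstarZ (k + 1)
    linarith
end

section
/- For every nonempty compact subset K of G there exists m ∈ ℕ such that g(δ_n) = 0 for every g ∈ K and every n > m, where δ_n ∈ ℤ^ℕ is the sequence with δ_n(n) = 1 and δ_n(i) = 0 for i ≠ n. -/

def dd (n : ℕ) : ℕ → ℤ := fun i => if i = n then 1 else 0

lemma bdd (K : Set ((ℕ → ℤ) →+ ℤ)) (hK : IsCompact K) (x : ℕ → ℤ) :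
    ∃ B : ℤ, ∀ g ∈ K, |g x| ≤ B := by
  have hc : Continuous (fun g : (ℕ → ℤ) →+ ℤ => g x) :=
    (continuous_apply x).comp continuous_induced_dom
  have hcomp : IsCompact ((fun g : (ℕ → ℤ) →+ ℤ => |g x|) '' K) :=
    hK.image (by continuity)
  have hfin : ((fun g : (ℕ → ℤ) →+ ℤ => |g x|) '' K).Finite := hcomp.finite_of_discrete
  obtain ⟨B, hB⟩ := hfin.bddAbove
  exact ⟨B, fun g hg => hB ⟨g, hg, rfl⟩⟩

lemma dvd_apply (g : (ℕ → ℤ) →+ ℤ) (D : ℤ) (y : ℕ → ℤ) (hy : ∀ i, D ∣ y i) : D ∣ g y := by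
  have : y = D • (fun i => y i / D) := by
    funext i; simp only [Pi.smul_apply, smul_eq_mul]
    exact (Int.mul_ediv_cancel' (hy i)).symm
  rw [this, map_zsmul]
  exact Dvd.intro _ rfl

lemma apply_eq_sum (g : (ℕ → ℤ) →+ ℤ) (f : ℕ → ℤ) (n : ℕ) (hf : ∀ i, n < i → f i = 0) :
    g f = ∑ i ∈ Finset.range (n + 1), f i * g (dd i) := by
  have hrep : f = ∑ i ∈ Finset.range (n + 1), f i • dd i := by
    funext j
    rw [Finset.sum_apply]
    by_cases hj : j ≤ n
    · rw [Finset.sum_eq_single j]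
      · simp [dd]
      · intro i hi hij; simp [dd, Ne.symm hij]
      · intro hj'; exact absurd (Finset.mem_range.2 (Nat.lt_succ_of_le hj)) hj'
    · push_neg at hj
      rw [hf j hj, Finset.sum_eq_zero]
      intro i hi
      have : j ≠ i := by
        intro h; subst h; exact absurd (Finset.mem_range.1 hi) (by omega)
      simp [dd, this]
  conv_lhs => rw [hrep]
  rw [map_sum]
  simp only [map_zsmul, smul_eq_mul]

structure SpSt where
  k : ℕ
  n : ℕ
  D : ℤ
  c : ℕ → ℤ

def SpInv (s : SpSt) : Prop := 1 ≤ s.D ∧ ∀ i, s.n < i → s.c i = 0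

def SpGood (K : Set ((ℕ → ℤ) →+ ℤ)) (s t : SpSt) : Prop :=
  t.k = s.k + 1 ∧ s.n < t.n ∧ s.D ∣ t.D ∧
  (∀ i, i ≠ t.n → t.c i = s.c i) ∧ s.D ∣ t.c t.n ∧
  ∃ g ∈ K,
    (t.k : ℤ) ≤ |∑ i ∈ Finset.range (t.n + 1), t.c i * g (dd i)| ∧
    |∑ i ∈ Finset.range (t.n + 1), t.c i * g (dd i)| + (t.k : ℤ) + 1 ≤ t.D

lemma exists_step (K : Set ((ℕ → ℤ) →+ ℤ))
    (h : ∀ m, ∃ g ∈ K, ∃ n, m < n ∧ g (dd n) ≠ 0)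
    (s : SpSt) (hs : SpInv s) : ∃ t, SpInv t ∧ SpGood K s t := by
  obtain ⟨g, hgK, n', hn', ha⟩ := h s.n
  set a : ℤ := g (dd n') with ha'
  set P : ℤ := ∑ i ∈ Finset.range n', s.c i * g (dd i) with hP
  set c : ℤ := s.D * (a * ((s.k : ℤ) + 1 + |P|)) with hc
  set S : ℤ := P + c * a with hSdef
  have h1 : (0:ℤ) ≤ (s.k : ℤ) + 1 + |P| := by positivity
  have ha2 : 1 ≤ a ^ 2 := by nlinarith [Int.one_le_abs ha, sq_abs a, abs_nonneg a]
  have hS : (s.k : ℤ) + 1 ≤ S := by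
    have hca : c * a = s.D * (((s.k : ℤ) + 1 + |P|) * a ^ 2) := by rw [hc]; ring
    have step1 : ((s.k : ℤ) + 1 + |P|) * 1 ≤ ((s.k : ℤ) + 1 + |P|) * a ^ 2 :=
      mul_le_mul_of_nonneg_left ha2 h1
    have step2 : 1 * (((s.k : ℤ) + 1 + |P|) * a ^ 2) ≤ s.D * (((s.k : ℤ) + 1 + |P|) * a ^ 2) :=
      mul_le_mul_of_nonneg_right hs.1 (by positivity)
    nlinarith [neg_abs_le P]
  have hS0 : 0 ≤ S := le_trans (by positivity) hS
  have hD1 : (1:ℤ) ≤ S + (s.k : ℤ) + 2 := by linarith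
  have hDD : (1:ℤ) ≤ s.D * (S + (s.k : ℤ) + 2) := by
    have := mul_le_mul hs.1 hD1 zero_le_one (le_trans zero_le_one hs.1)
    linarith
  refine ⟨⟨s.k + 1, n', s.D * (S + (s.k : ℤ) + 2), Function.update s.c n' c⟩,
    ⟨hDD, ?_⟩, rfl, hn', ⟨_, rfl⟩, ?_, ?_, g, hgK, ?_⟩
  · intro i hi
    show Function.update s.c n' c i = 0
    have hi' : n' < i := hi
    rw [Function.update_of_ne (by omega)]
    exact hs.2 i (lt_trans hn' hi')
  · intro i hi
    exact Function.update_of_ne hi _ _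
  · show s.D ∣ Function.update s.c n' c n'
    rw [Function.update_self]; exact ⟨_, rfl⟩
  · have hsum : ∑ i ∈ Finset.range (n' + 1), (Function.update s.c n' c) i * g (dd i) = S := by
      rw [Finset.sum_range_succ, Function.update_self, hSdef, ← ha']
      congr 1
      refine Finset.sum_congr rfl fun i hi => ?_
      rw [Function.update_of_ne (by simp at hi; omega)]
    show ((s.k:ℕ)+1 : ℤ) ≤ _ ∧ _
    rw [show (⟨s.k + 1, n', s.D * (S + (s.k : ℤ) + 2), Function.update s.c n' c⟩ : SpSt).n = n' from rfl] at *
    rw [hsum, abs_of_nonneg hS0]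
    constructor
    · push_cast; linarith
    · push_cast
      have := mul_le_mul_of_nonneg_left hD1 (le_trans zero_le_one hs.1)
      nlinarith [hs.1]

/-- For every nonempty compact subset `K` of `G = Hom(ℤ^ℕ, ℤ)` there exists `m : ℕ` such
that `g δ_n = 0` for all `g ∈ K` and all `n > m`, where `δ_n` is the sequence with
`δ_n n = 1` and `δ_n i = 0` for `i ≠ n`. -/
theorem compact_subset_kills_deltas (K : Set ((ℕ → ℤ) →+ ℤ)) (hK : IsCompact K)
    (hne : K.Nonempty) :
    ∃ m : ℕ, ∀ g ∈ K, ∀ n > m, g (fun i : ℕ => if i = n then 1 else 0) = 0 := by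
  by_contra hcon
  push_neg at hcon
  have h : ∀ m, ∃ g ∈ K, ∃ n, m < n ∧ g (dd n) ≠ 0 := by
    intro m
    obtain ⟨g, hgK, n, hn, hne'⟩ := hcon m
    exact ⟨g, hgK, n, hn, hne'⟩
  -- build the recursive sequence of states
  let seq : ℕ → {s : SpSt // SpInv s} := fun l =>
    Nat.rec ⟨⟨0, 0, 1, fun _ => 0⟩, le_refl 1, fun _ _ => rfl⟩
      (fun _ p => ⟨(exists_step K h p.1 p.2).choose,
        (exists_step K h p.1 p.2).choose_spec.1⟩) l
  have hGood : ∀ l, SpGood K (seq l).1 (seq (l + 1)).1 := fun l =>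
    (exists_step K h (seq l).1 (seq l).2).choose_spec.2
  -- basic invariants
  have hk : ∀ l, (seq l).1.k = l := by
    intro l; induction l with
    | zero => rfl
    | succ l ih => rw [(hGood l).1, ih]
  have hnmono : ∀ l l', l ≤ l' → (seq l).1.n ≤ (seq l').1.n := by
    intro l l' hle
    induction l', hle using Nat.le_induction with
    | base => exact le_refl _
    | succ l' hle ih => exact le_trans ih (le_of_lt (hGood l').2.1)
  have hnge : ∀ l, l ≤ (seq l).1.n := by
    intro l; induction l with
    | zero => exact Nat.zero_le _
    | succ l ih => exact Nat.succ_le_of_lt (lt_of_le_of_lt ih (hGood l).2.1)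
  have hDdvd : ∀ l l', l ≤ l' → (seq l).1.D ∣ (seq l').1.D := by
    intro l l' hle
    induction l', hle using Nat.le_induction with
    | base => exact dvd_refl _
    | succ l' hle ih => exact dvd_trans ih (hGood l').2.2.1
  have hcstab : ∀ l l', l ≤ l' → ∀ i, i ≤ (seq l).1.n → (seq l').1.c i = (seq l).1.c i := by
    intro l l' hle
    induction l', hle using Nat.le_induction with
    | base => intro i _; rfl
    | succ l' hle ih =>
      intro i hi
      rw [(hGood l').2.2.2.1 i ?_, ih i hi]
      have := hnmono l l' hle
      have := (hGood l').2.1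
      omega
  have hcd : ∀ l l', l ≤ l' → ∀ i, (seq l).1.D ∣ ((seq l').1.c i - (seq l).1.c i) := by
    intro l l' hle
    induction l', hle using Nat.le_induction with
    | base => intro i; simp
    | succ l' hle ih =>
      intro i
      have key : (seq l).1.D ∣ ((seq (l' + 1)).1.c i - (seq l').1.c i) := by
        by_cases hi : i = (seq (l' + 1)).1.n
        · subst hi
          have hz : (seq l').1.c (seq (l' + 1)).1.n = 0 :=
            (seq l').2.2 _ (hGood l').2.1
          rw [hz, sub_zero]
          exact dvd_trans (hDdvd l l' hle) (hGood l').2.2.2.2.1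
        · rw [(hGood l').2.2.2.1 i hi, sub_self]
          exact dvd_zero _
      have := dvd_add key (ih i)
      simpa using this
  -- the limit sequence
  set x : ℕ → ℤ := fun i => (seq (i + 1)).1.c i with hxdef
  have hx : ∀ l i, i ≤ (seq l).1.n → x i = (seq l).1.c i := by
    intro l i hi
    have hxi : x i = (seq (i + 1)).1.c i := rfl
    rcases le_total l (i + 1) with hcase | hcase
    · rw [hxi]; exact hcstab l (i + 1) hcase i hi
    · rw [hxi]
      exact (hcstab (i + 1) l hcase i
        (le_of_lt (lt_of_lt_of_le (Nat.lt_succ_self i) (hnge (i+1))))).symm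
  have hxd : ∀ l i, (seq l).1.D ∣ (x i - (seq l).1.c i) := by
    intro l i
    rcases le_total l (i + 1) with hcase | hcase
    · exact hcd l (i + 1) hcase i
    · rw [hx l i (le_trans (by omega) (hnge l)), sub_self]
      exact dvd_zero _
  -- pointwise bound on the compact set
  obtain ⟨B, hB⟩ := bdd K hK x
  -- each step gives an element of K with large value at x
  have hbig : ∀ l : ℕ, ∃ g ∈ K, ((l : ℤ) + 1) ≤ |g x| := by
    intro l
    obtain ⟨g, hgK, hS1, hS2⟩ := (hGood l).2.2.2.2.2
    set t := (seq (l + 1)).1 with htdef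
    set S : ℤ := ∑ i ∈ Finset.range (t.n + 1), t.c i * g (dd i) with hSdef
    have hgc : g t.c = S := apply_eq_sum g t.c t.n (seq (l + 1)).2.2
    have hdvd : t.D ∣ (g x - S) := by
      rw [← hgc, ← map_sub]
      exact dvd_apply g t.D _ (fun i => by
        have := hxd (l + 1) i
        simpa using this)
    have htk : (t.k : ℤ) = (l : ℤ) + 1 := by
      rw [hk (l + 1)]; push_cast; ring
    refine ⟨g, hgK, ?_⟩
    by_cases hgx : g x = S
    · rw [hgx]; linarith [hS1, htk.symm.le]
    · have hne0 : g x - S ≠ 0 := sub_ne_zero.2 hgx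
      have hle : t.D ≤ |g x - S| :=
        Int.le_of_dvd (abs_pos.2 hne0) ((dvd_abs _ _).2 hdvd)
      have htri : |g x - S| ≤ |g x| + |S| := abs_sub _ _
      linarith [hS2, htk.le]
  obtain ⟨g, hgK, hg⟩ := hbig B.toNat
  have := hB g hgK
  have hBle : (B : ℤ) ≤ (B.toNat : ℤ) := Int.self_le_toNat B
  linarith
end

section
/- The map ψ : G → ℤ^ℕ defined by ψ(g)(n) = g(δ_n), where δ_n ∈ ℤ^ℕ is the sequence with δ_n(n) = 1 and δ_n(i) = 0 for i ≠ n, is injective; that is, a group homomorphism g : ℤ^ℕ → ℤ that vanishes on every δ_n is the zero homomorphism. -/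
open Finset

private lemma head_vanish (g : (ℕ → ℤ) →+ ℤ)
    (hδ : ∀ n : ℕ, g (fun i : ℕ => if i = n then 1 else 0) = 0) (x : ℕ → ℤ) (N : ℕ) :
    g x = g (fun k => if k < N then 0 else x k) := by
  induction N with
  | zero => simp
  | succ N ih =>
      rw [ih]
      have hfe : (fun k => if k < N then 0 else x k)
          = (fun k => if k < N + 1 then 0 else x k)
            + x N • (fun i : ℕ => if i = N then (1 : ℤ) else 0) := by
        funext k
        simp only [Pi.add_apply, Pi.smul_apply, smul_eq_mul]
        by_cases h1 : k < N
        · have h2 : k < N + 1 := by omega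
          have h3 : k ≠ N := by omega
          simp [h1, h2, h3]
        · by_cases h2 : k = N
          · subst h2
            simp
          · have h3 : ¬ k < N + 1 := by omega
            simp [h1, h2, h3]
      rw [hfe, map_add, map_zsmul, hδ, smul_zero, add_zero]

private lemma dvd_apply_s12 (g : (ℕ → ℤ) →+ ℤ)
    (hδ : ∀ n : ℕ, g (fun i : ℕ => if i = n then 1 else 0) = 0) (d : ℤ) (N : ℕ) (y : ℕ → ℤ)
    (hy : ∀ k, N ≤ k → d ∣ y k) : d ∣ g y := by
  rw [head_vanish g hδ y N]
  have hfe : (fun k => if k < N then 0 else y k)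
      = d • (fun k => if k < N then 0 else y k / d) := by
    funext k
    simp only [Pi.smul_apply, smul_eq_mul]
    by_cases h : k < N
    · simp [h]
    · simp [h, Int.mul_ediv_cancel' (hy k (le_of_not_gt h))]
  rw [hfe, map_zsmul, smul_eq_mul]
  exact Dvd.intro _ rfl

private lemma vanish (g : (ℕ → ℤ) →+ ℤ)
    (hδ : ∀ n : ℕ, g (fun i : ℕ => if i = n then 1 else 0) = 0) (x : ℕ → ℤ) : g x = 0 := by
  classical
  by_contra hs
  set s : ℤ := g x with hs_def
  set M : ℤ := |s| + 1 with hM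
  have habs : |s| < M := by simp [hM]
  have hM1 : 1 ≤ M := by
    have := abs_nonneg s
    omega
  set c : (ℕ → Bool) → ℕ → ℤ :=
    fun ε k => ∑ i ∈ range (k + 1), (if ε i then M ^ i else 0) with hc
  set F : (ℕ → Bool) → ℤ := fun ε => g (fun k => x k * c ε k) with hF
  have key : ∀ ε j, (M ^ (j + 1)) ∣ F ε - c ε j * s := by
    intro ε j
    have h1 : F ε - c ε j * s = g ((fun k => x k * c ε k) - c ε j • x) := by
      rw [map_sub, map_zsmul, smul_eq_mul, ← hs_def]
    rw [h1]
    apply dvd_apply_s12 g hδ _ j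
    intro k hk
    have h2 : ((fun k => x k * c ε k) - c ε j • x) k = x k * (c ε k - c ε j) := by
      simp only [Pi.sub_apply, Pi.smul_apply, smul_eq_mul]
      ring
    rw [h2]
    apply Dvd.dvd.mul_left
    have h3 : c ε k - c ε j = ∑ i ∈ Ico (j + 1) (k + 1), (if ε i then M ^ i else 0) := by
      rw [hc]
      simp only
      rw [Finset.sum_Ico_eq_sub _ (by omega : j + 1 ≤ k + 1)]
    rw [h3]
    apply Finset.dvd_sum
    intro i hi
    have hij : j + 1 ≤ i := (Finset.mem_Ico.1 hi).1
    by_cases h : ε i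
    · simpa [h] using pow_dvd_pow M hij
    · simp [h]
  have Finj : Function.Injective F := by
    intro ε ε' hFe
    by_contra hne
    have hex : ∃ j, ε j ≠ ε' j := Function.ne_iff.1 hne
    set j := Nat.find hex with hj_def
    have hj : ε j ≠ ε' j := Nat.find_spec hex
    have hlt : ∀ i, i < j → ε i = ε' i := fun i hi => not_not.1 (Nat.find_min hex hi)
    have hcc : c ε j - c ε' j
        = (if ε j then M ^ j else 0) - (if ε' j then M ^ j else 0) := by
      rw [hc]
      simp only
      rw [Finset.sum_range_succ, Finset.sum_range_succ]
      rw [Finset.sum_congr rfl (fun i hi => by rw [hlt i (Finset.mem_range.1 hi)])]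
      ring
    have hcases : c ε j - c ε' j = M ^ j ∨ c ε j - c ε' j = -(M ^ j) := by
      rcases Bool.eq_false_or_eq_true (ε j) with h1 | h1 <;>
        rcases Bool.eq_false_or_eq_true (ε' j) with h2 | h2 <;>
          simp [h1, h2] at hj hcc ⊢ <;> omega
    have hdvd : M ^ (j + 1) ∣ (c ε j - c ε' j) * s := by
      have k1 := key ε j
      have k2 := key ε' j
      rw [hFe] at k1
      have : (c ε j - c ε' j) * s = (F ε' - c ε' j * s) - (F ε' - c ε j * s) := by ring
      rw [this]
      exact dvd_sub k2 k1
    have hMdvd : M ∣ s := by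
      have hpow : M ^ (j + 1) ∣ M ^ j * s := by
        rcases hcases with h | h
        · rwa [h] at hdvd
        · rw [h, neg_mul] at hdvd
          exact dvd_neg.1 hdvd
      rw [pow_succ] at hpow
      have hMj : (M : ℤ) ^ j ≠ 0 := pow_ne_zero j (by omega)
      exact (mul_dvd_mul_iff_left hMj).1 hpow
    have : M ≤ |s| := Int.le_of_dvd (abs_pos.2 hs) ((dvd_abs M s).2 hMdvd)
    omega
  -- Cantor contradiction
  have cantor : Function.Injective
      (fun S : Set ℕ => (Denumerable.eqv ℤ) (F (fun n => decide (n ∈ S)))) := by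
    intro S S' h
    have h2 : F (fun n => decide (n ∈ S)) = F (fun n => decide (n ∈ S')) :=
      (Denumerable.eqv ℤ).injective h
    have h3 := Finj h2
    ext n
    have h4 := congrFun h3 n
    simpa using h4
  exact Function.cantor_injective _ cantor

/-- The map `ψ : G → ℤ^ℕ`, `ψ g n = g δ_n` (where `δ_n` has `1` at coordinate `n` and `0`
elsewhere), is injective; that is, a homomorphism `g : ℤ^ℕ →+ ℤ` vanishing on every `δ_n`
is the zero homomorphism. -/
theorem psi_injective :
    Function.Injective
      (fun (g : (ℕ → ℤ) →+ ℤ) => (fun n : ℕ => g (fun i : ℕ => if i = n then 1 else 0))) := by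
  intro g₁ g₂ h
  have hδ : ∀ n : ℕ, (g₁ - g₂) (fun i : ℕ => if i = n then (1 : ℤ) else 0) = 0 := by
    intro n
    have := congrFun h n
    simp only [AddMonoidHom.sub_apply]
    simpa using sub_eq_zero.2 this
  ext x
  have := vanish (g₁ - g₂) hδ x
  simp only [AddMonoidHom.sub_apply] at this
  linarith [this]
end

section
/- Every compact subset of the group G is finite. -/
/-- standard basis vector of `ℤ^ℕ` -/
def specE (n : ℕ) : ℕ → ℤ := Pi.single n 1

/-- evaluating a hom on a "head truncation" gives a finite sum. -/
lemma specker_head (φ : (ℕ → ℤ) →+ ℤ) (x : ℕ → ℤ) (k : ℕ) :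
    φ (fun i => if i < k then x i else 0)
      = ∑ i ∈ Finset.range k, x i * φ (specE i) := by
  have hys : (fun i => if i < k then x i else 0) = ∑ i ∈ Finset.range k, x i • specE i := by
    funext j
    rw [Finset.sum_apply]
    simp only [Pi.smul_apply, specE, Pi.single_apply, smul_eq_mul, mul_ite, mul_one, mul_zero]
    rw [Finset.sum_ite_eq (Finset.range k) j x]
    simp [Finset.mem_range]
  rw [hys, map_sum]
  simp only [map_zsmul, smul_eq_mul]

/-- divisibility of tails controls the hom value modulo the head. -/
lemma specker_key_s13 (φ : (ℕ → ℤ) →+ ℤ) (x : ℕ → ℤ) (d : ℤ) (k : ℕ)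
    (h : ∀ i, k ≤ i → d ∣ x i) :
    d ∣ φ x - ∑ i ∈ Finset.range k, x i * φ (specE i) := by
  set y : ℕ → ℤ := fun i => if i < k then x i else 0 with hy
  set u : ℕ → ℤ := fun i => if i < k then 0 else x i / d with hu
  have hxy : x = y + d • u := by
    funext i
    by_cases hik : i < k
    · simp [hy, hu, hik]
    · simp [hy, hu, hik, Int.mul_ediv_cancel' (h i (le_of_not_gt hik))]
  have h1 : φ x = φ y + d * φ u := by
    rw [hxy, map_add, map_zsmul, smul_eq_mul]
  have h2 : φ y = ∑ i ∈ Finset.range k, x i * φ (specE i) := by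
    rw [hy]; exact specker_head φ x k
  rw [h1, h2, add_comm, add_sub_cancel_right]
  exact dvd_mul_right d (φ u)

/-- A hom vanishing on all basis vectors vanishes. -/
lemma specker_vanish (φ : (ℕ → ℤ) →+ ℤ) (h : ∀ n, φ (specE n) = 0) : φ = 0 := by
  have main : ∀ (p : ℤ), 2 ≤ p → ∀ (x : ℕ → ℤ), (∀ i, p ^ i ∣ x i) → φ x = 0 := by
    intro p hp x hx
    have hdvd : ∀ k : ℕ, p ^ k ∣ φ x := by
      intro k
      have := specker_key_s13 φ x (p ^ k) k (fun i hi => dvd_trans (pow_dvd_pow p hi) (hx i))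
      simpa [h] using this
    by_contra h0
    have hk := hdvd (φ x).natAbs
    have h1 : p ^ (φ x).natAbs ≤ |φ x| :=
      Int.le_of_dvd (abs_pos.mpr h0) ((dvd_abs _ _).mpr hk)
    have h2 : |φ x| < 2 ^ (φ x).natAbs := by
      rw [Int.abs_eq_natAbs]
      exact_mod_cast (Nat.lt_two_pow_self (n := (φ x).natAbs))
    have h3 : (2:ℤ) ^ (φ x).natAbs ≤ p ^ (φ x).natAbs :=
      pow_le_pow_left₀ (by norm_num) hp _
    linarith
  ext x
  show φ x = 0
  have hdec : ∀ n : ℕ, ∃ uv : ℤ × ℤ, x n = 2 ^ n * uv.1 + 3 ^ n * uv.2 := by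
    intro n
    have hc : IsCoprime ((2:ℤ) ^ n) ((3:ℤ) ^ n) :=
      IsCoprime.pow ⟨-1, 1, by ring⟩
    obtain ⟨p, q, hpq⟩ := hc
    exact ⟨(p * x n, q * x n), by linear_combination (-(x n)) * hpq⟩
  choose uv huv using hdec
  have hx : x = (fun n => 2 ^ n * (uv n).1) + (fun n => 3 ^ n * (uv n).2) :=
    funext fun n => huv n
  rw [hx, map_add,
    main 2 le_rfl _ (fun i => dvd_mul_right _ _),
    main 3 (by norm_num) _ (fun i => dvd_mul_right _ _)]
  norm_num

/-- Specker: a hom `ℤ^ℕ →+ ℤ` kills all but finitely many basis vectors. -/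
lemma specker_finsupp (φ : (ℕ → ℤ) →+ ℤ) : {n : ℕ | φ (specE n) ≠ 0}.Finite := by
  by_contra hfin
  have hS : {n : ℕ | φ (specE n) ≠ 0}.Infinite := hfin
  have hgt : ∀ m : ℕ, ∃ b, φ (specE b) ≠ 0 ∧ m < b := by
    intro m
    obtain ⟨b, hb1, hb2⟩ := hS.exists_gt m
    exact ⟨b, hb1, hb2⟩
  choose f hf using hgt
  set n : ℕ → ℕ := fun k => f^[k + 1] 0 with hn
  have hnsucc : ∀ k, n (k + 1) = f (n k) := by
    intro k
    rw [hn]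
    simp [Function.iterate_succ_apply']
  have hne : ∀ k, φ (specE (n k)) ≠ 0 := by
    intro k
    have : n k = f (f^[k] 0) := by rw [hn]; simp [Function.iterate_succ_apply']
    rw [this]; exact (hf _).1
  have hmono : StrictMono n := by
    apply strictMono_nat_of_lt_succ
    intro k
    rw [hnsucc k]
    exact (hf (n k)).2
  set a : ℕ → ℤ := fun k => φ (specE (n k)) with ha
  -- recursive construction of s, D
  set P : ℕ → ℤ × ℤ := fun k => Nat.rec ((0:ℤ), (1:ℤ))
    (fun k p => (p.1 + |a k| * p.2, 2 * (p.1 + |a k| * p.2) * p.2)) k with hP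
  set s : ℕ → ℤ := fun k => (P k).1 with hsdef
  set D : ℕ → ℤ := fun k => (P k).2 with hDdef
  have hs : ∀ k, s (k + 1) = s k + |a k| * D k := fun k => rfl
  have hD : ∀ k, D (k + 1) = 2 * s (k + 1) * D k := fun k => rfl
  have habs : ∀ k, 1 ≤ |a k| := fun k => Int.one_le_abs (hne k)
  have hinv : ∀ k : ℕ, 1 ≤ D k ∧ (k : ℤ) ≤ s k ∧ (k : ℤ) ≤ D k - s k := by
    intro k
    induction k with
    | zero =>
      refine ⟨le_refl _, le_refl _, ?_⟩
      show ((0:ℕ):ℤ) ≤ (1:ℤ) - 0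
      norm_num
    | succ k ih =>
      obtain ⟨h1, h2, h3⟩ := ih
      have h4 := habs k
      have hsk : ((k : ℤ) + 1) ≤ s (k + 1) := by
        rw [hs k]; nlinarith
      refine ⟨?_, by push_cast; linarith, ?_⟩
      · rw [hD k]; nlinarith
      · rw [hD k]; push_cast; nlinarith
  have hDpos : ∀ k, 0 < D k := fun k => lt_of_lt_of_le zero_lt_one (hinv k).1
  have hDdvd : ∀ k j, k ≤ j → D k ∣ D j := by
    intro k j hkj
    induction j, hkj using Nat.le_induction with
    | base => exact dvd_rfl
    | succ j hkj ih => rw [hD j]; exact ih.mul_left _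
  classical
  set b : ℕ → ℤ := fun k => if 0 ≤ a k then D k else -D k with hb
  have hbdvd : ∀ k j, k ≤ j → D k ∣ b j := by
    intro k j h
    show D k ∣ if 0 ≤ a j then D j else -D j
    split
    · exact hDdvd k j h
    · exact (hDdvd k j h).neg_right
  have hba : ∀ k, b k * a k = |a k| * D k := by
    intro k
    show (if 0 ≤ a k then D k else -D k) * a k = |a k| * D k
    split_ifs with h
    · rw [abs_of_nonneg h]; ring
    · rw [abs_of_neg (not_le.mp h)]; ring
  set x : ℕ → ℤ := fun m => if h : ∃ k, n k = m then b h.choose else 0 with hx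
  have hxn : ∀ k, x (n k) = b k := by
    intro k
    have hex : ∃ j, n j = n k := ⟨k, rfl⟩
    simp only [hx]
    rw [dif_pos hex]
    congr 1
    exact hmono.injective hex.choose_spec
  have hxz : ∀ m, (¬ ∃ k, n k = m) → x m = 0 := by
    intro m hm; rw [hx]; exact dif_neg hm
  -- sum identity
  have hsum : ∀ k, ∑ i ∈ Finset.range (n k), x i * φ (specE i) = s k := by
    intro k
    induction k with
    | zero =>
      have : ∀ i ∈ Finset.range (n 0), x i * φ (specE i) = 0 := by
        intro i hi
        rw [Finset.mem_range] at hi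
        have : x i = 0 := by
          apply hxz
          rintro ⟨j, rfl⟩
          exact absurd hi (not_lt.mpr (hmono.monotone (Nat.zero_le j)))
        rw [this, zero_mul]
      rw [Finset.sum_eq_zero this]
      rfl
    | succ k ih =>
      have hsplit : ∑ i ∈ Finset.range (n (k+1)), x i * φ (specE i)
          = ∑ i ∈ Finset.range (n k), x i * φ (specE i)
            + ∑ i ∈ Finset.Ico (n k) (n (k+1)), x i * φ (specE i) := by
        rw [Finset.range_eq_Ico, Finset.range_eq_Ico]
        exact (Finset.sum_Ico_consecutive (fun i => x i * φ (specE i)) (Nat.zero_le _)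
          (le_of_lt (hmono (Nat.lt_succ_self k)))).symm
      have hsingle : ∑ i ∈ Finset.Ico (n k) (n (k+1)), x i * φ (specE i)
          = x (n k) * φ (specE (n k)) := by
        apply Finset.sum_eq_single_of_mem
        · rw [Finset.mem_Ico]; exact ⟨le_refl _, hmono (Nat.lt_succ_self k)⟩
        · intro i hi hine
          rw [Finset.mem_Ico] at hi
          have : x i = 0 := by
            apply hxz
            rintro ⟨j, rfl⟩
            have h1 : k ≤ j := by
              by_contra hc
              exact absurd hi.1 (not_le.mpr (hmono (not_le.mp hc)))
            have h2 : j < k + 1 := by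
              by_contra hc
              exact absurd hi.2 (not_lt.mpr (hmono.monotone (not_lt.mp hc)))
            exact hine (by rw [Nat.le_antisymm h1 (Nat.lt_succ_iff.mp h2)])
          rw [this, zero_mul]
      rw [hsplit, ih, hsingle, hxn]
      show s k + b k * a k = s (k + 1)
      rw [hba, hs]
  -- divisibility of φ x - s k
  have hdvdN : ∀ k, D k ∣ φ x - s k := by
    intro k
    have hdvdx : ∀ i, n k ≤ i → D k ∣ x i := by
      intro i hi
      by_cases hex : ∃ j, n j = i
      · simp only [hx]
        rw [dif_pos hex]
        apply hbdvd
        have : n k ≤ n hex.choose := by rw [hex.choose_spec]; exact hi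
        exact hmono.le_iff_le.mp this
      · rw [hxz i hex]; exact dvd_zero _
    have := specker_key_s13 φ x (D k) (n k) hdvdx
    rwa [hsum k] at this
  -- contradiction
  set N := φ x with hN
  set k := N.natAbs + 1 with hk
  obtain ⟨h1, h2, h3⟩ := hinv k
  have hNlt : N < s k := by
    have : N ≤ (N.natAbs : ℤ) := Int.le_natAbs
    have hk' : ((N.natAbs : ℤ) + 1) ≤ s k := by exact_mod_cast h2
    linarith
  have habs2 : |N - s k| < D k := by
    rw [abs_of_neg (by linarith)]
    have hN2 : -(N : ℤ) ≤ (N.natAbs : ℤ) := by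
      rw [← Int.abs_eq_natAbs]; exact neg_le_abs N
    have hk2 : ((N.natAbs : ℤ) + 1) ≤ D k - s k := by exact_mod_cast h3
    linarith
  have hne2 : N - s k ≠ 0 := by intro h; rw [sub_eq_zero] at h; omega
  have := Int.le_of_dvd (abs_pos.mpr hne2) ((dvd_abs _ _).mpr (hdvdN k))
  linarith

/-- Homs agreeing on all basis vectors agree. -/
lemma specker_ext (φ ψ : (ℕ → ℤ) →+ ℤ) (h : ∀ n, φ (specE n) = ψ (specE n)) : φ = ψ := by
  have h0 : φ - ψ = 0 := specker_vanish _ (fun n => by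
    simp [AddMonoidHom.sub_apply, h n])
  have := congrArg (fun f : (ℕ → ℤ) →+ ℤ => f + ψ) h0
  simpa [sub_add_cancel] using this

/-- If a hom kills all basis vectors past `N`, it is a finite sum of projections. -/
lemma specker_repr (φ : (ℕ → ℤ) →+ ℤ) (N : ℕ) (h : ∀ i, N ≤ i → φ (specE i) = 0)
    (x : ℕ → ℤ) : φ x = ∑ i ∈ Finset.range N, x i * φ (specE i) := by
  classical
  let T : (ℕ → ℤ) →+ (ℕ → ℤ) :=
    { toFun := fun x i => if i < N then 0 else x i
      map_zero' := by funext i; simp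
      map_add' := by
        intro u v; funext i
        by_cases hi : i < N <;> simp [hi] }
  have hT : φ.comp T = 0 := by
    apply specker_vanish
    intro n
    by_cases hn : n < N
    · have : T (specE n) = 0 := by
        funext i
        show (if i < N then 0 else specE n i) = 0
        split_ifs with hi
        · rfl
        · rw [specE, Pi.single_apply, if_neg]
          omega
      simp [AddMonoidHom.comp_apply, this]
    · have : T (specE n) = specE n := by
        funext i
        show (if i < N then 0 else specE n i) = specE n i
        split_ifs with hi
        · rw [specE, Pi.single_apply, if_neg]
          omega
        · rfl
      rw [AddMonoidHom.comp_apply, this]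
      exact h n (not_lt.mp hn)
  have hxsplit : x = (fun i => if i < N then x i else 0) + T x := by
    funext i
    show x i = (if i < N then x i else 0) + (if i < N then 0 else x i)
    split_ifs <;> ring
  have hTx : φ (T x) = 0 := by
    have := congrArg (fun f : (ℕ → ℤ) →+ ℤ => f x) hT
    simpa [AddMonoidHom.comp_apply] using this
  have hphi : φ x = φ (fun i => if i < N then x i else 0) + φ (T x) := by
    conv_lhs => rw [hxsplit]
    rw [map_add]
  rw [hphi, hTx, add_zero, specker_head]

/-- Every compact subset of `G = Hom(ℤ^ℕ, ℤ)` (with the topology of pointwise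
convergence) is finite. -/
theorem compact_subsets_finite (K : Set ((ℕ → ℤ) →+ ℤ)) (hK : IsCompact K) :
    K.Finite := by
  classical
  have hcont : ∀ x : ℕ → ℤ, Continuous (fun g : (ℕ → ℤ) →+ ℤ => g x) :=
    fun x => (continuous_apply x).comp continuous_induced_dom
  have himg : ∀ x : ℕ → ℤ, ((fun g : (ℕ → ℤ) →+ ℤ => g x) '' K).Finite :=
    fun x => (hK.image (hcont x)).finite_of_discrete
  have hMx : ∀ x : ℕ → ℤ, ∃ B : ℤ, 0 ≤ B ∧ ∀ g ∈ K, |g x| ≤ B := by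
    intro x
    obtain ⟨B, hB⟩ := ((himg x).image abs).bddAbove
    refine ⟨max B 0, le_max_right _ _, fun g hg => le_trans ?_ (le_max_left _ _)⟩
    exact hB ⟨g x, ⟨g, hg, rfl⟩, rfl⟩
  by_cases hU : ∃ N : ℕ, ∀ g ∈ K, ∀ i, N ≤ i → g (specE i) = 0
  · obtain ⟨N, hN⟩ := hU
    have hinj : Set.InjOn (fun g : (ℕ → ℤ) →+ ℤ => fun i : Fin N => g (specE i)) K := by
      intro g hg h hh heq
      apply specker_ext
      intro m
      by_cases hm : m < N
      · exact congrFun heq ⟨m, hm⟩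
      · rw [hN g hg m (le_of_not_gt hm), hN h hh m (le_of_not_gt hm)]
    apply Set.Finite.of_finite_image _ hinj
    apply Set.Finite.subset (Set.Finite.pi (fun i : Fin N => himg (specE i)))
    rintro _ ⟨g, hg, rfl⟩ i _
    exact ⟨g, hg, rfl⟩
  · exfalso
    push_neg at hU
    have hsb' : ∀ g : (ℕ → ℤ) →+ ℤ, ∃ Ns : ℕ, ∀ i, Ns ≤ i → g (specE i) = 0 := by
      intro g
      obtain ⟨Ns, hNs⟩ := (specker_finsupp g).bddAbove
      refine ⟨Ns + 1, fun i hi => ?_⟩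
      by_contra h0
      have h2 : i ≤ Ns := hNs h0
      omega
    choose sb hsb using hsb'
    have hstep : ∀ m : ℕ, ∃ gi : ((ℕ → ℤ) →+ ℤ) × ℕ × ℕ,
        gi.1 ∈ K ∧ m < gi.2.1 ∧ gi.1 (specE gi.2.1) ≠ 0 ∧ gi.2.1 < gi.2.2 ∧
          ∀ i, gi.2.2 ≤ i → gi.1 (specE i) = 0 := by
      intro m
      obtain ⟨g, hg, i, hi1, hi2⟩ := hU (m + 1)
      refine ⟨(g, i, max (i + 1) (sb g)), hg, hi1, hi2, ?_, ?_⟩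
      · exact lt_of_lt_of_le (Nat.lt_succ_self i) (le_max_left _ _)
      · exact fun j hj => hsb g j (le_trans (le_max_right _ _) hj)
    choose step hK1 hlt1 hne1 hlt2 hz1 using hstep
    set prevN : ℕ → ℕ := fun k => Nat.rec 0 (fun _ p => (step p).2.2) k with hprevN
    set g : ℕ → (ℕ → ℤ) →+ ℤ := fun k => (step (prevN k)).1 with hg
    set idx : ℕ → ℕ := fun k => (step (prevN k)).2.1 with hidx
    set Nb : ℕ → ℕ := fun k => (step (prevN k)).2.2 with hNb
    have hgK : ∀ k, g k ∈ K := fun k => hK1 _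
    have hgne : ∀ k, g k (specE (idx k)) ≠ 0 := fun k => hne1 _
    have hidxNb : ∀ k, idx k < Nb k := fun k => hlt2 _
    have hNbidx : ∀ k, Nb k < idx (k + 1) := fun k => hlt1 (Nb k)
    have hmono : StrictMono idx :=
      strictMono_nat_of_lt_succ (fun k => lt_trans (hidxNb k) (hNbidx k))
    have hgz : ∀ k, ∀ i, Nb k ≤ i → g k (specE i) = 0 := fun k => hz1 _
    choose M hM0 hMb using fun i : ℕ => hMx (specE i)
    set t : ℕ → ℤ := fun k => Nat.rec 0 (fun j tj => tj + M (idx j) * ((j : ℤ) + tj)) k with htdef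
    set c : ℕ → ℤ := fun k => (k : ℤ) + t k with hcdef
    have ht : ∀ k, t (k + 1) = t k + M (idx k) * c k := fun k => rfl
    have htnn : ∀ k, 0 ≤ t k := by
      intro k
      induction k with
      | zero => exact le_refl 0
      | succ k ih =>
        rw [ht]
        have h1 := hM0 (idx k)
        have h2 : (0:ℤ) ≤ (k:ℤ) := Int.natCast_nonneg k
        have h3 : c k = (k:ℤ) + t k := rfl
        nlinarith
    have hcnn : ∀ k, 0 ≤ c k := fun k => add_nonneg (Int.natCast_nonneg k) (htnn k)
    have htsum : ∀ k, t k = ∑ j ∈ Finset.range k, M (idx j) * c j := by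
      intro k
      induction k with
      | zero => rfl
      | succ k ih => rw [Finset.sum_range_succ, ← ih, ht]
    set x : ℕ → ℤ := fun m => if h : ∃ k, idx k = m then c h.choose else 0 with hx
    have hxn : ∀ k, x (idx k) = c k := by
      intro k
      have hex : ∃ j, idx j = idx k := ⟨k, rfl⟩
      simp only [hx]
      rw [dif_pos hex]
      congr 1
      exact hmono.injective hex.choose_spec
    have hxz : ∀ m, (¬ ∃ k, idx k = m) → x m = 0 := by
      intro m hm; simp only [hx]; exact dif_neg hm
    have heval : ∀ k, g k x = ∑ j ∈ Finset.range (k + 1), c j * g k (specE (idx j)) := by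
      intro k
      rw [specker_repr (g k) (Nb k) (hgz k) x]
      have hsub : (Finset.range (k + 1)).image idx ⊆ Finset.range (Nb k) := by
        intro m hm
        simp only [Finset.mem_image, Finset.mem_range] at hm ⊢
        obtain ⟨j, hj, rfl⟩ := hm
        calc idx j ≤ idx k := hmono.monotone (Nat.lt_succ_iff.mp hj)
        _ < Nb k := hidxNb k
      have hzero : ∀ m ∈ Finset.range (Nb k), m ∉ (Finset.range (k + 1)).image idx →
          x m * g k (specE m) = 0 := by
        intro m hmem hnotm
        have hxm : x m = 0 := by
          apply hxz
          rintro ⟨j, rfl⟩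
          apply hnotm
          simp only [Finset.mem_image, Finset.mem_range]
          refine ⟨j, ?_, rfl⟩
          by_contra hc
          have h1 : Nb k < idx j := lt_of_lt_of_le (hNbidx k) (hmono.monotone (not_lt.mp hc))
          rw [Finset.mem_range] at hmem
          omega
        rw [hxm, zero_mul]
      rw [← Finset.sum_subset hsub hzero]
      rw [Finset.sum_image (fun u _ v _ h => hmono.injective h)]
      apply Finset.sum_congr rfl
      intro j _
      rw [hxn j]
    have hbig : ∀ k : ℕ, (k : ℤ) ≤ |g k x| := by
      intro k
      rw [heval k, Finset.sum_range_succ]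
      set S := ∑ j ∈ Finset.range k, c j * g k (specE (idx j)) with hS
      set A := g k (specE (idx k)) with hA
      have hSle : |S| ≤ t k := by
        rw [htsum]
        calc |S| ≤ ∑ j ∈ Finset.range k, |c j * g k (specE (idx j))| :=
              Finset.abs_sum_le_sum_abs _ _
        _ ≤ ∑ j ∈ Finset.range k, M (idx j) * c j := by
            apply Finset.sum_le_sum
            intro j _
            rw [abs_mul, abs_of_nonneg (hcnn j)]
            calc c j * |g k (specE (idx j))| ≤ c j * M (idx j) :=
                  mul_le_mul_of_nonneg_left (hMb (idx j) (g k) (hgK k)) (hcnn j)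
            _ = M (idx j) * c j := mul_comm _ _
      have hlast : c k ≤ |c k * A| := by
        rw [abs_mul, abs_of_nonneg (hcnn k)]
        nth_rewrite 1 [← mul_one (c k)]
        exact mul_le_mul_of_nonneg_left (Int.one_le_abs (hgne k)) (hcnn k)
      have h2 : |c k * A| ≤ |S + c k * A| + |S| :=
        calc |c k * A| = |(S + c k * A) + -S| :=
              congrArg _root_.abs (by ring)
        _ ≤ |S + c k * A| + |-S| := abs_add_le _ _
        _ = |S + c k * A| + |S| := by rw [abs_neg]
      have h3 : c k = (k : ℤ) + t k := rfl
      linarith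
    obtain ⟨B, hB0, hB⟩ := hMx x
    have h1 := hbig (B.natAbs + 1)
    have h2 := hB (g (B.natAbs + 1)) (hgK (B.natAbs + 1))
    have h3 : B ≤ (B.natAbs : ℤ) := Int.le_natAbs
    push_cast at h1
    rw [abs_of_nonneg hB0] at h1
    linarith
end

section
/- The group G is not reflexive: the canonical evaluation map α_G : G → G^^ into the second Pontryagin dual of G is not a topological isomorphism (it is not a homeomorphism). -/
/-- The Pontryagin dual of a topological abelian group: the group of continuous
homomorphisms to the circle group `ℝ/ℤ`, with the compact-open topology. -/
abbrev PontDual (A : Type*) [AddMonoid A] [TopologicalSpace A] : Type _ :=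
  ContinuousAddMonoidHom A (AddCircle (1 : ℝ))

namespace GNR

noncomputable def st (pick : ℕ → ((ℕ → ℤ) →+ ℤ) × ℕ) : ℕ → ℤ × ℕ × (ℕ → ℤ)
  | 0 => (1, 0, 0)
  | j+1 =>
    let s := st pick j
    let M := s.1; let K := s.2.1; let p := s.2.2
    let g := (pick K).1; let k := (pick K).2
    let d := g (Pi.single k 1)
    let c := ((j : ℤ) + |g p| + 1) * d.sign
    let p' := p + Pi.single k (c * M)
    (2 * M * (1 + |g p'|), k + 1, p')

variable (pick : ℕ → ((ℕ → ℤ) →+ ℤ) × ℕ)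

noncomputable def Mj (j : ℕ) : ℤ := (st pick j).1
noncomputable def Kj (j : ℕ) : ℕ := (st pick j).2.1
noncomputable def pj (j : ℕ) : ℕ → ℤ := (st pick j).2.2
noncomputable def gj (j : ℕ) : (ℕ → ℤ) →+ ℤ := (pick (Kj pick j)).1
noncomputable def kj (j : ℕ) : ℕ := (pick (Kj pick j)).2
/-- the coefficient put at coordinate `kj j` -/
noncomputable def cj (j : ℕ) : ℤ :=
  (((j : ℤ) + |gj pick j (pj pick j)| + 1) * (gj pick j (Pi.single (kj pick j) 1)).sign) * Mj pick j

lemma st_succ (j : ℕ) :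
    Mj pick (j+1) = 2 * Mj pick j * (1 + |gj pick j (pj pick (j+1))|) ∧
    Kj pick (j+1) = kj pick j + 1 ∧
    pj pick (j+1) = pj pick j + Pi.single (kj pick j) (cj pick j) := by
  refine ⟨?_, ?_, ?_⟩ <;> simp [Mj, Kj, pj, gj, kj, cj, st]

lemma Mj_pos (j : ℕ) : 0 < Mj pick j := by
  induction j with
  | zero => simp [Mj, st]
  | succ j ih =>
    rw [(st_succ pick j).1]
    have : 0 ≤ |gj pick j (pj pick (j+1))| := abs_nonneg _
    nlinarith

lemma Mj_growth (j : ℕ) : 2 * Mj pick j ≤ Mj pick (j+1) := by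
  rw [(st_succ pick j).1]
  have h1 : 0 < Mj pick j := Mj_pos pick j
  have : 0 ≤ |gj pick j (pj pick (j+1))| := abs_nonneg _
  nlinarith

lemma Mj_dvd_succ (j : ℕ) : Mj pick j ∣ Mj pick (j+1) := by
  rw [(st_succ pick j).1]
  exact ⟨2 * (1 + |gj pick j (pj pick (j+1))|), by ring⟩

lemma Mj_dvd (i j : ℕ) (h : i ≤ j) : Mj pick i ∣ Mj pick j := by
  induction j with
  | zero => simpa [Nat.le_zero.mp h]
  | succ j ih =>
    rcases Nat.lt_or_ge i (j+1) with h' | h'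
    · exact (ih (Nat.lt_succ_iff.mp h')).trans (Mj_dvd_succ pick j)
    · have : i = j + 1 := le_antisymm h h'
      simp [this]

lemma two_pow_le_Mj (j : ℕ) : (2 : ℤ)^j ≤ Mj pick j := by
  induction j with
  | zero => simp [Mj, st]
  | succ j ih =>
    calc (2:ℤ)^(j+1) = 2 * 2^j := by ring
    _ ≤ 2 * Mj pick j := by linarith
    _ ≤ Mj pick (j+1) := Mj_growth pick j

section
variable {pick}
variable (hpick : ∀ N, N ≤ (pick N).2 ∧ (pick N).1 (Pi.single (pick N).2 1) ≠ 0)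
include hpick

lemma Kj_le_kj (j : ℕ) : Kj pick j ≤ kj pick j := (hpick _).1

lemma dj_ne (j : ℕ) : gj pick j (Pi.single (kj pick j) 1) ≠ 0 := (hpick _).2

lemma Kj_lt_succ (j : ℕ) : Kj pick j < Kj pick (j+1) := by
  rw [(st_succ pick j).2.1]
  exact Nat.lt_succ_of_le (Kj_le_kj hpick j)

lemma Kj_mono : StrictMono (Kj pick) := strictMono_nat_of_lt_succ (Kj_lt_succ hpick)

lemma j_le_Kj (j : ℕ) : j ≤ Kj pick j := by
  induction j with
  | zero => exact Nat.zero_le _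
  | succ j ih => exact Nat.lt_of_le_of_lt ih (Kj_lt_succ hpick j)

lemma kj_lt_Kj_succ (j : ℕ) : kj pick j < Kj pick (j+1) := by
  rw [(st_succ pick j).2.1]; exact Nat.lt_succ_self _

/-- support of pj j is below Kj j -/
lemma pj_support (j : ℕ) : ∀ i, Kj pick j ≤ i → pj pick j i = 0 := by
  induction j with
  | zero => intro i _; simp [pj, st]
  | succ j ih =>
    intro i hi
    rw [(st_succ pick j).2.2]
    have h1 : Kj pick j ≤ i := le_trans (Kj_lt_succ hpick j).le hi
    have h2 : kj pick j ≠ i := by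
      intro h
      have := (st_succ pick j).2.1
      omega
    simp [ih i h1, Pi.single_apply, Ne.symm h2]

/-- stabilization: coordinates below Kj j never change afterwards -/
lemma pj_stab (j j' : ℕ) (h : j ≤ j') : ∀ i, i < Kj pick j → pj pick j' i = pj pick j i := by
  induction j' with
  | zero => intro i _; have : j = 0 := Nat.le_zero.mp h; simp [this]
  | succ j' ih =>
    intro i hi
    rcases Nat.lt_or_ge j (j'+1) with h' | h'
    · have hj : j ≤ j' := Nat.lt_succ_iff.mp h'
      rw [(st_succ pick j').2.2]
      have : kj pick j' ≠ i := by
        have : Kj pick j ≤ Kj pick j' := (Kj_mono hpick).le_iff_le.mpr hj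
        intro he
        exact absurd (he ▸ Kj_le_kj hpick j') (by omega)
      simp [ih hj i hi, Pi.single_apply, Ne.symm this]
    · have : j = j' + 1 := le_antisymm h h'
      simp [this]

/-- increments after stage j are divisible by Mj j -/
lemma Mj_dvd_diff (j j' : ℕ) (h : j ≤ j') : ∀ i, Mj pick j ∣ pj pick j' i - pj pick j i := by
  induction j' with
  | zero => intro i; have : j = 0 := Nat.le_zero.mp h; simp [this]
  | succ j' ih =>
    intro i
    rcases Nat.lt_or_ge j (j'+1) with h' | h'
    · have hj : j ≤ j' := Nat.lt_succ_iff.mp h'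
      rw [(st_succ pick j').2.2]
      rw [Pi.add_apply]
      have heq : pj pick j' i + (Pi.single (kj pick j') (cj pick j') : ℕ → ℤ) i - pj pick j i
          = (pj pick j' i - pj pick j i) + (Pi.single (kj pick j') (cj pick j') : ℕ → ℤ) i := by ring
      rw [heq]
      refine dvd_add (ih hj i) ?_
      rcases eq_or_ne (kj pick j') i with he | he
      · rw [← he, Pi.single_eq_same, cj]
        exact Dvd.dvd.mul_left ((Mj_dvd pick j j' hj)) _
      · simp [Pi.single_apply, Ne.symm he]
    · have : j = j' + 1 := le_antisymm h h'
      simp [this]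


omit hpick in
lemma single_eq_smul (k : ℕ) (c : ℤ) : (Pi.single k c : ℕ → ℤ) = c • (Pi.single k 1 : ℕ → ℤ) := by
  funext i
  rcases eq_or_ne i k with h | h
  · subst h; simp
  · simp [Pi.single_apply, h]

omit hpick in
lemma sign_mul_self_eq_abs (d : ℤ) : d.sign * d = |d| := by
  rcases lt_trichotomy d 0 with h|h|h
  · rw [Int.sign_eq_neg_one_of_neg h, abs_of_neg h]; ring
  · simp [h]
  · rw [Int.sign_eq_one_of_pos h, abs_of_pos h]; ring

/-- the value `B_j` is at least `j + 1`. -/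
lemma Bj_ge (j : ℕ) : (j : ℤ) + 1 ≤ gj pick j (pj pick (j+1)) := by
  have hstep := (st_succ pick j).2.2
  set g := gj pick j
  set d := g (Pi.single (kj pick j) 1) with hd
  set A := g (pj pick j) with hA
  have hBd : g (pj pick (j+1)) = A + (((j : ℤ) + |A| + 1) * d.sign * Mj pick j) * d := by
    rw [hstep, map_add, single_eq_smul, map_zsmul]
    simp only [cj, smul_eq_mul]
    rfl
  have h1 : 1 ≤ |d| := Int.one_le_abs (dj_ne hpick j)
  have hM : 1 ≤ Mj pick j := Mj_pos pick j
  have hsd : d.sign * d = |d| := sign_mul_self_eq_abs d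
  have hexp : (((j : ℤ) + |A| + 1) * d.sign * Mj pick j) * d
      = ((j : ℤ) + |A| + 1) * Mj pick j * |d| := by
    rw [← hsd]; ring
  rw [hBd, hexp]
  have hA0 : -|A| ≤ A := neg_abs_le A
  have hMd : (1:ℤ) ≤ Mj pick j * |d| := by nlinarith
  have hj0 : (0:ℤ) ≤ (j:ℤ) := Int.natCast_nonneg j
  nlinarith [mul_nonneg (by positivity : (0:ℤ) ≤ (j:ℤ) + |A| + 1)
    (by linarith : (0:ℤ) ≤ Mj pick j * |d| - 1)]

end

/-- the limit vector -/
noncomputable def xv (pick : ℕ → ((ℕ → ℤ) →+ ℤ) × ℕ) : ℕ → ℤ := fun i => pj pick (i+1) i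

section
variable {pick : ℕ → ((ℕ → ℤ) →+ ℤ) × ℕ}
variable (hpick : ∀ N, N ≤ (pick N).2 ∧ (pick N).1 (Pi.single (pick N).2 1) ≠ 0)
include hpick

lemma xv_dvd (j : ℕ) : ∀ i, Mj pick (j+1) ∣ xv pick i - pj pick (j+1) i := by
  intro i
  show Mj pick (j+1) ∣ pj pick (i+1) i - pj pick (j+1) i
  rcases Nat.lt_or_ge i (Kj pick (j+1)) with h | h
  · have hi' : i < Kj pick (i+1) := Nat.lt_of_lt_of_le (Nat.lt_succ_self i) (j_le_Kj hpick (i+1))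
    rcases le_or_gt (j+1) (i+1) with hle | hlt
    · rw [pj_stab hpick (j+1) (i+1) hle i h]; simp
    · rw [pj_stab hpick (i+1) (j+1) hlt.le i hi']; simp
  · have hij : j + 1 ≤ i + 1 := by
      have := j_le_Kj hpick (j+1)
      omega
    exact Mj_dvd_diff hpick (j+1) (i+1) hij i

/-- value of `g_j` at the limit vector is congruent to `B_j` mod `M_{j+1}` -/
lemma vj_congr (j : ℕ) :
    Mj pick (j+1) ∣ gj pick j (xv pick) - gj pick j (pj pick (j+1)) := by
  set M := Mj pick (j+1) with hM
  have hMpos : 0 < M := Mj_pos pick (j+1)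
  set y : ℕ → ℤ := fun i => (xv pick i - pj pick (j+1) i) / M with hy
  have hxy : xv pick = pj pick (j+1) + M • y := by
    funext i
    have hdvd := xv_dvd hpick j i
    simp only [Pi.add_apply, Pi.smul_apply, hy, smul_eq_mul]
    rw [Int.mul_ediv_cancel' hdvd]
    ring
  rw [hxy, map_add, map_zsmul]
  simp [smul_eq_mul]

end

theorem uniform_specker {C : Set ((ℕ → ℤ) →+ ℤ)} (hC : IsCompact C) :
    ∃ N : ℕ, ∀ g ∈ C, ∀ k, N ≤ k → g (Pi.single k 1) = 0 := by
  by_contra hcon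
  push_neg at hcon
  choose gf hg kf hk hne using hcon
  set pick : ℕ → ((ℕ → ℤ) →+ ℤ) × ℕ := fun N => (gf N, kf N) with hpickdef
  have hpick : ∀ N, N ≤ (pick N).2 ∧ (pick N).1 (Pi.single (pick N).2 1) ≠ 0 :=
    fun N => ⟨hk N, hne N⟩
  have hmem : ∀ j, gj pick j ∈ C := fun j => hg _
  set x := xv pick with hx
  -- the evaluation at `x` is continuous, so its image on `C` is finite, hence bounded
  have hcont : Continuous fun g : (ℕ → ℤ) →+ ℤ => (g : (ℕ → ℤ) → ℤ) x :=
    (continuous_apply x).comp continuous_induced_dom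
  have hfin : ((fun g : (ℕ → ℤ) →+ ℤ => (g : (ℕ → ℤ) → ℤ) x) '' C).Finite :=
    (hC.image hcont).finite (isDiscrete_iff_discreteTopology.mpr (by infer_instance))
  obtain ⟨V, hV⟩ : ∃ V : ℤ, ∀ g ∈ C, |g x| ≤ V := by
    obtain ⟨V, hV⟩ := ((hfin.image (fun n => |n|)).bddAbove)
    exact ⟨V, fun g hgC => hV (Set.mem_image_of_mem _ (Set.mem_image_of_mem _ hgC))⟩
  set j := V.toNat + 1 with hj
  have hVj : V < (j : ℤ) := by
    have := Int.self_le_toNat V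
    omega
  -- key quantities
  set B := gj pick j (pj pick (j+1)) with hB
  have hBge : (j : ℤ) + 1 ≤ B := Bj_ge hpick j
  have hBpos : (0:ℤ) ≤ B := by
    have : (0:ℤ) ≤ (j:ℤ) := Int.natCast_nonneg j
    linarith
  have hdvd : Mj pick (j+1) ∣ gj pick j x - B := vj_congr hpick j
  have hMj : (2:ℤ)^j ≤ Mj pick j := two_pow_le_Mj pick j
  have h2j : (j:ℤ) + 1 ≤ 2^j := by exact_mod_cast Nat.lt_two_pow_self (n := j)
  have hVMj : V < Mj pick j := by linarith
  have hMsucc : Mj pick (j+1) = 2 * Mj pick j * (1 + |B|) := (st_succ pick j).1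
  have habsB : |B| = B := abs_of_nonneg hBpos
  have hvx : |gj pick j x| ≤ V := hV _ (hmem j)
  have hlt : |gj pick j x - B| < Mj pick (j+1) := by
    have h1 : |gj pick j x - B| ≤ |gj pick j x| + |B| := by
      calc |gj pick j x - B| = |gj pick j x + (-B)| := by ring_nf
      _ ≤ |gj pick j x| + |(-B)| := abs_add_le _ _
      _ = |gj pick j x| + |B| := by rw [abs_neg]
    rw [hMsucc, habsB]
    have hMj1 : (1:ℤ) ≤ Mj pick j := Mj_pos pick j
    nlinarith
  have heq0 := Int.eq_zero_of_abs_lt_dvd hdvd hlt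
  have heq : gj pick j x = B := by linarith
  have : B ≤ |gj pick j x| := heq ▸ le_abs_self _
  linarith


/-! ### Part 2: AddCircle lemmas -/

lemma norm_coe_of_le_half {y : ℝ} (h : |y| ≤ 1/2) : ‖((y : ℝ) : AddCircle (1:ℝ))‖ = |y| :=
  (AddCircle.norm_coe_eq_abs_iff (1:ℝ) one_ne_zero).mpr (by rw [abs_one]; linarith)

lemma exists_zsmul_norm_ge {β : AddCircle (1:ℝ)} (hβ : β ≠ 0) :
    ∃ t : ℤ, 1/8 ≤ ‖t • β‖ := by
  rcases le_or_gt (1/8 : ℝ) ‖β‖ with h | h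
  · exact ⟨1, by rwa [one_zsmul]⟩
  induction β using QuotientAddGroup.induction_on with
  | H x =>
    set y : ℝ := x - round x with hy
    have hxy : ((y : ℝ) : AddCircle (1:ℝ)) = (x : AddCircle (1:ℝ)) := by
      have : ((round x : ℝ) : AddCircle (1:ℝ)) = 0 := by
        rw [show ((round x : ℝ)) = (round x : ℤ) • (1:ℝ) by simp, AddCircle.coe_zsmul,
          AddCircle.coe_period, smul_zero]
      rw [hy, AddCircle.coe_sub, this, sub_zero]
    have hnorm : ‖(x : AddCircle (1:ℝ))‖ = |y| := by
      rw [AddCircle.norm_eq]; norm_num [hy]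
    have hypos : 0 < |y| := by
      rw [← hnorm, norm_pos_iff]; exact hβ
    have hysmall : |y| < 1/8 := by rw [← hnorm]; exact h
    set t : ℤ := ⌈1/(8 * |y|)⌉ with ht
    have htpos : (0:ℝ) < 1/(8*|y|) := by positivity
    have ht1 : (1:ℝ)/(8*|y|) ≤ (t:ℝ) := Int.le_ceil _
    have ht2 : (t:ℝ) < 1/(8*|y|) + 1 := Int.ceil_lt_add_one _
    have htpos' : (0:ℤ) < t := by
      have : (0:ℝ) < (t:ℝ) := lt_of_lt_of_le htpos ht1
      exact_mod_cast this
    have hty1 : 1/8 ≤ (t:ℝ) * |y| := by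
      have h8 : (1:ℝ)/8 = (1/(8*|y|)) * |y| := by field_simp
      rw [h8]
      nlinarith
    have hty2 : (t:ℝ) * |y| ≤ 1/2 := by
      have hlt : (t:ℝ) * |y| < (1/(8*|y|) + 1) * |y| := by nlinarith
      have h2 : (1/(8*|y|) + 1) * |y| = 1/8 + |y| := by field_simp
      nlinarith
    refine ⟨t, ?_⟩
    rw [← hxy, ← AddCircle.coe_zsmul]
    have : ‖((t • y : ℝ) : AddCircle (1:ℝ))‖ = |t • y| := by
      apply norm_coe_of_le_half
      rw [zsmul_eq_mul, abs_mul]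
      calc |(t:ℝ)| * |y| = (t:ℝ) * |y| := by
            rw [abs_of_pos]; exact_mod_cast htpos'
      _ ≤ 1/2 := hty2
    rw [this, zsmul_eq_mul, abs_mul, abs_of_pos (show (0:ℝ) < (t:ℝ) by exact_mod_cast htpos')]
    exact hty1


/-! ### Part 3: the characters and the main theorem -/

abbrev PontDual' (A : Type*) [AddMonoid A] [TopologicalSpace A] : Type _ := PontDual A

open Filter Topology Set

noncomputable def theta : AddCircle (1:ℝ) := ((Real.sqrt 2 : ℝ) : AddCircle (1:ℝ))

/-- the continuous character `g ↦ g x • √2` of `G`. -/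
noncomputable def chi (x : ℕ → ℤ) : PontDual' ((ℕ → ℤ) →+ ℤ) :=
  { toAddMonoidHom := AddMonoidHom.mk' (fun g : (ℕ → ℤ) →+ ℤ => g x • theta)
      (by intro a b; simp [add_smul])
    continuous_toFun := by
      have h1 : Continuous fun g : (ℕ → ℤ) →+ ℤ => (g : (ℕ → ℤ) → ℤ) x :=
        (continuous_apply x).comp continuous_induced_dom
      exact (continuous_of_discreteTopology (f := fun n : ℤ => n • theta)).comp h1 }

@[simp] lemma chi_apply (x : ℕ → ℤ) (g : (ℕ → ℤ) →+ ℤ) : chi x g = g x • theta := rfl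

lemma chi_tendsto : Tendsto (fun k => chi (Pi.single k 1)) atTop (𝓝 0) := by
  rw [(ContinuousAddMonoidHom.isInducing_toContinuousMap _ _).tendsto_nhds_iff]
  rw [ContinuousMap.tendsto_iff_forall_isCompact_tendstoUniformlyOn]
  intro C hCcomp
  obtain ⟨N, hN⟩ := uniform_specker hCcomp
  intro u hu
  filter_upwards [eventually_ge_atTop N] with k hkN g hgC
  have h0 : g (Pi.single k 1) = 0 := hN g hgC k hkN
  have hz : (ContinuousAddMonoidHom.toContinuousMap (chi (Pi.single k 1))) g = 0 := by
    show chi (Pi.single k 1) g = 0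
    rw [chi_apply, h0, zero_zsmul]
  have hz0 : (ContinuousAddMonoidHom.toContinuousMap
      (0 : PontDual' ((ℕ → ℤ) →+ ℤ))) g = 0 := rfl
  rw [Function.comp_apply]
  rw [hz0, hz]
  exact refl_mem_uniformity hu


theorem main :
    ¬ ∃ e : ((ℕ → ℤ) →+ ℤ) ≃ₜ PontDual' (PontDual' ((ℕ → ℤ) →+ ℤ)),
        ∀ (g : (ℕ → ℤ) →+ ℤ) (χ : PontDual' ((ℕ → ℤ) →+ ℤ)), e g χ = χ g := by
  rintro ⟨e, he⟩
  classical
  set K : Set (PontDual' ((ℕ → ℤ) →+ ℤ)) :=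
    insert 0 (Set.range fun k => chi (Pi.single k 1)) with hK
  have hKcomp : IsCompact K := chi_tendsto.isCompact_insert_range
  set U : Set (AddCircle (1:ℝ)) := Metric.ball 0 (1/8) with hU
  have hUopen : IsOpen U := Metric.isOpen_ball
  set O : Set (PontDual' (PontDual' ((ℕ → ℤ) →+ ℤ))) :=
    ContinuousAddMonoidHom.toContinuousMap ⁻¹' {f | Set.MapsTo f K U} with hO
  have hOopen : IsOpen O :=
    (ContinuousMap.isOpen_setOf_mapsTo hKcomp hUopen).preimage
      (ContinuousAddMonoidHom.isInducing_toContinuousMap _ _).continuous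
  have hSopen : IsOpen (e ⁻¹' O) := hOopen.preimage e.continuous
  have hmemO : ∀ g : (ℕ → ℤ) →+ ℤ, g ∈ e ⁻¹' O ↔ ∀ χ ∈ K, e g χ ∈ U := by
    intro g
    constructor
    · intro h χ hχ; exact h hχ
    · intro h χ hχ; exact h χ hχ
  have h0S : (0 : (ℕ → ℤ) →+ ℤ) ∈ e ⁻¹' O := by
    rw [hmemO]
    intro χ hχ
    rw [he 0 χ, map_zero]
    simp [hU]
  obtain ⟨W, hWopen, hWeq⟩ := isOpen_induced_iff.mp hSopen
  have h0W : (fun g : (ℕ → ℤ) →+ ℤ => (g : (ℕ → ℤ) → ℤ)) (0 : (ℕ → ℤ) →+ ℤ) ∈ W := by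
    rw [← Set.mem_preimage, hWeq]; exact h0S
  obtain ⟨I, u, hu1, hu2⟩ := isOpen_pi_iff.mp hWopen _ h0W
  have hbox : ∀ g : (ℕ → ℤ) →+ ℤ, (∀ x ∈ I, g x = 0) →
      ∀ k : ℕ, ‖g (Pi.single k 1) • theta‖ < 1/8 := by
    intro g hg k
    have hpi : (g : (ℕ → ℤ) → ℤ) ∈ Set.pi ↑I u := by
      intro x hx
      have h0u : (0 : ℤ) ∈ u x := by
        have := (hu1 x hx).2
        simpa using this
      simpa [hg x hx] using h0u
    have hgS : g ∈ e ⁻¹' O := by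
      rw [← hWeq]
      exact hu2 hpi
    rw [hmemO] at hgS
    have hmem : chi (Pi.single k 1) ∈ K := Set.mem_insert_of_mem _ ⟨k, rfl⟩
    have hin := hgS _ hmem
    rw [he g _, chi_apply] at hin
    simpa [hU, Metric.mem_ball, dist_zero_right] using hin
  -- linear algebra: find a nonzero integer vector annihilating all x ∈ I
  set r := I.card with hr
  set xs : Fin r → (ℕ → ℤ) := fun j => (I.equivFin.symm j : ℕ → ℤ) with hxs
  set φ : (Fin (r+1) → ℤ) →ₗ[ℤ] (Fin r → ℤ) :=
    { toFun := fun a j => ∑ n : Fin (r+1), a n * xs j (n : ℕ)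
      map_add' := by
        intro a b; funext j
        simp [add_mul, Finset.sum_add_distrib]
      map_smul' := by
        intro d a; funext j
        simp [Finset.mul_sum, mul_assoc] } with hφ
  have hninj : ¬ Function.Injective φ := by
    intro hinj
    have := le_of_fin_injective ℤ φ hinj
    omega
  obtain ⟨a, b, hfab, hab⟩ := Function.not_injective_iff.mp hninj
  set c : Fin (r+1) → ℤ := a - b with hc
  have hc0 : φ c = 0 := by rw [hc, map_sub, hfab, sub_self]
  have hcne : c ≠ 0 := sub_ne_zero.mpr hab
  obtain ⟨n₀, hn₀⟩ : ∃ n, c n ≠ 0 := by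
    by_contra hno; push_neg at hno
    exact hcne (funext fun n => hno n)
  have hβ : (c n₀ • theta : AddCircle (1:ℝ)) ≠ 0 := by
    intro hcontra
    rw [theta, ← AddCircle.coe_zsmul, AddCircle.coe_eq_zero_iff] at hcontra
    obtain ⟨m, hm⟩ := hcontra
    have hirr : Irrational ((c n₀ : ℝ) * Real.sqrt 2) := irrational_sqrt_two.intCast_mul hn₀
    apply hirr.ne_int m
    rw [zsmul_eq_mul, zsmul_eq_mul, mul_one] at hm
    exact hm.symm
  obtain ⟨t, ht⟩ := exists_zsmul_norm_ge hβ
  set gstar : (ℕ → ℤ) →+ ℤ := AddMonoidHom.mk'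
    (fun v => ∑ n : Fin (r+1), t * c n * v (n : ℕ))
    (by intro v w; simp [mul_add, Finset.sum_add_distrib]) with hgstar
  have hgI : ∀ x ∈ I, gstar x = 0 := by
    intro x hx
    have hj : xs (I.equivFin ⟨x, hx⟩) = x := by rw [hxs]; simp
    have hzero : (∑ n : Fin (r+1), c n * x (n:ℕ)) = 0 := by
      have hcf := congrFun hc0 (I.equivFin ⟨x, hx⟩)
      simpa [hφ, hj] using hcf
    show (∑ n : Fin (r+1), t * c n * x (n:ℕ)) = 0
    calc (∑ n : Fin (r+1), t * c n * x (n:ℕ))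
        = t * ∑ n : Fin (r+1), c n * x (n:ℕ) := by
          rw [Finset.mul_sum]
          apply Finset.sum_congr rfl
          intro n _
          ring
    _ = 0 := by rw [hzero, mul_zero]
  have hval : gstar (Pi.single (n₀ : ℕ) 1) = t * c n₀ := by
    show (∑ n : Fin (r+1), t * c n * (Pi.single ((n₀ : ℕ)) (1:ℤ) : ℕ → ℤ) (n:ℕ)) = t * c n₀
    rw [Finset.sum_eq_single n₀]
    · simp
    · intro n _ hne
      have : ((n:ℕ)) ≠ ((n₀:ℕ)) := fun h => hne (Fin.val_injective h)
      simp [Pi.single_apply, this]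
    · intro h
      exact absurd (Finset.mem_univ n₀) h
  have hlt := hbox gstar hgI (n₀ : ℕ)
  rw [hval, mul_smul] at hlt
  linarith

end GNR


/-- `G = Hom(ℤ^ℕ, ℤ)` is not reflexive: the canonical evaluation map
`α_G : G → G^^`, `g ↦ (χ ↦ χ g)`, is not a topological isomorphism; i.e.
there is no additive homeomorphism `G ≃ₜ G^^` given by evaluation. -/
theorem G_not_reflexive :
    ¬ ∃ e : ((ℕ → ℤ) →+ ℤ) ≃ₜ PontDual (PontDual ((ℕ → ℤ) →+ ℤ)),
        ∀ (g : (ℕ → ℤ) →+ ℤ) (χ : PontDual ((ℕ → ℤ) →+ ℤ)), e g χ = χ g := by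
  exact GNR.main
end

section
/- The product ℤ^(ℤ^ℕ) of copies of the discrete group ℤ indexed by a set of cardinality continuum contains a countable closed subgroup H that is not reflexive: the canonical evaluation map α_H : H → H^^ into the second Pontryagin dual of H (where H carries the subspace topology) is not a topological isomorphism. -/
noncomputable section
open Finset

theorem keyLemma (φ : (ℕ → ℤ) →+ ℤ) (v : ℕ → ℕ → ℤ) (n : ℕ → ℕ)
    (hn : StrictMono n) (hsupp : ∀ k m, m < n k → v k m = 0)
    (ht : ∀ k, φ (v k) ≠ 0) : False := by
  classical
  set t : ℕ → ℤ := fun k => φ (v k) with htdef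
  -- recursive sequences S, D
  let SD : ℕ → ℤ × ℤ := fun k => Nat.rec ((0 : ℤ), (1 : ℤ))
    (fun k p => (p.1 + p.2 * t k, 2 * (|p.1 + p.2 * t k| + 1) * p.2)) k
  set S : ℕ → ℤ := fun k => (SD k).1 with hSdef
  set D : ℕ → ℤ := fun k => (SD k).2 with hDdef
  have hS0 : S 0 = 0 := rfl
  have hD0 : D 0 = 1 := rfl
  have hSsucc : ∀ k, S (k + 1) = S k + D k * t k := fun k => rfl
  have hDsucc : ∀ k, D (k + 1) = 2 * (|S (k + 1)| + 1) * D k := fun k => rfl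
  have hD1 : ∀ k, 0 < D k := by
    intro k; induction k with
    | zero => norm_num [hD0]
    | succ k ih =>
      rw [hDsucc]
      positivity
  have hDdvd : ∀ k l, k ≤ l → D k ∣ D l := by
    intro k l hkl
    induction l with
    | zero => simp_all
    | succ l ih =>
      rcases Nat.lt_or_ge k (l+1) with h | h
      · have := ih (Nat.lt_succ_iff.mp h)
        rw [hDsucc]; exact this.mul_left _
      · have : k = l + 1 := le_antisymm hkl h
        subst this; rfl
  have hSD : ∀ k, 2 * |S k| < D k := by
    intro k
    cases k with
    | zero => simp [hS0, hD0]
    | succ k =>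
      rw [hDsucc]
      have h1 : 0 < D k := hD1 k
      nlinarith [abs_nonneg (S (k+1))]
  have hDk : ∀ k : ℕ, (k : ℤ) < D k := by
    intro k; induction k with
    | zero => simp [hD0]
    | succ k ih =>
      rw [hDsucc]
      have h1 : 0 < D k := hD1 k
      have : (1:ℤ) ≤ |S (k+1)| + 1 := by linarith [abs_nonneg (S (k+1))]
      push_cast
      nlinarith
  have hSsum : ∀ K, S K = ∑ k ∈ range K, D k * t k := by
    intro K; induction K with
    | zero => simp [hS0]
    | succ K ih => rw [hSsucc, sum_range_succ, ih]
  -- the vector z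
  set z : ℕ → ℤ := fun m => ∑ k ∈ range (m+1), D k * v k m with hzdef
  set y : ℕ → ℕ → ℤ := fun K m => ∑ k ∈ Ico K (m+1), (D k / D K) * v k m with hydef
  have hnk : ∀ k, k ≤ n k := fun k => hn.le_apply
  have hzy : ∀ K, z = (∑ k ∈ range K, D k • v k) + D K • y K := by
    intro K
    funext m
    have hDyK : D K * y K m = ∑ k ∈ Ico K (m+1), D k * v k m := by
      rw [hydef]
      simp only []
      rw [Finset.mul_sum]
      refine Finset.sum_congr rfl (fun k hk => ?_)
      rw [← mul_assoc, Int.mul_ediv_cancel' (hDdvd K k (mem_Ico.mp hk).1)]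
    have hA : (∑ k ∈ range K, D k • v k) m = ∑ k ∈ range K, D k * v k m := by
      simp [Finset.sum_apply]
    simp only [Pi.add_apply, Pi.smul_apply, smul_eq_mul, hA]
    rw [hDyK]
    rcases le_or_gt K (m+1) with h | h
    · exact (Finset.sum_range_add_sum_Ico _ h).symm
    · -- K > m+1 : Ico K (m+1) empty; and terms in [m+1, K) vanish
      rw [Ico_eq_empty (by omega), sum_empty, add_zero]
      refine Finset.sum_subset (Finset.range_subset_range.mpr (by omega)) (fun x hx hx' => ?_)
      have hmx : m < x := by
        have := Finset.mem_range.not.mp hx'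
        omega
      rw [hsupp x m (lt_of_lt_of_le hmx (hnk x)), mul_zero]
  have hφz : ∀ K, D K ∣ φ z - S K := by
    intro K
    rw [hzy K, map_add, map_sum]
    have : ∀ k ∈ range K, φ (D k • v k) = D k * t k := by
      intro k _; rw [map_zsmul, smul_eq_mul, htdef]
    rw [Finset.sum_congr rfl this, ← hSsum, map_zsmul]
    simp [smul_eq_mul]
  -- escape
  set m₀ : ℤ := φ z with hm0
  have hesc : ∀ K : ℕ, 2 * |m₀| < (K : ℤ) → S K = m₀ := by
    intro K hK
    by_contra hne
    have hd : D K ∣ m₀ - S K := hφz K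
    have hdne : m₀ - S K ≠ 0 := fun h => hne (by omega)
    have habs : D K ≤ |m₀ - S K| := Int.le_of_dvd (abs_pos.mpr hdne) ((dvd_abs _ _).mpr hd)
    have h1 : |m₀ - S K| ≤ |m₀| + |S K| := abs_sub _ _
    have h2 : 2 * |S K| < D K := hSD K
    have h3 : (K : ℤ) < D K := hDk K
    omega
  obtain ⟨K, hK⟩ : ∃ K : ℕ, 2 * |m₀| < (K : ℤ) := ⟨(2 * |m₀|).toNat + 1, by
    have := Int.toNat_of_nonneg (by positivity : (0:ℤ) ≤ 2 * |m₀|)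
    push_cast; omega⟩
  have h1 := hesc K hK
  have h2 := hesc (K+1) (by push_cast; omega)
  have : D K * t K = 0 := by
    have := hSsucc K
    omega
  rcases mul_eq_zero.mp this with h | h
  · exact absurd h (ne_of_gt (hD1 K))
  · exact ht K h

def ee (n : ℕ) : ℕ → ℤ := Pi.single n 1

theorem suppFinite (φ : (ℕ → ℤ) →+ ℤ) : {n | φ (ee n) ≠ 0}.Finite := by
  by_contra hinf
  replace hinf : {n | φ (ee n) ≠ 0}.Infinite := hinf
  refine keyLemma φ (fun k => ee (Nat.nth (fun n => φ (ee n) ≠ 0) k)) _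
    (Nat.nth_strictMono hinf) (fun k m hm => ?_) (fun k => Nat.nth_mem_of_infinite hinf k)
  exact Pi.single_eq_of_ne (by omega) 1

theorem exists_suppBound (φ : (ℕ → ℤ) →+ ℤ) : ∃ N, ∀ n, N ≤ n → φ (ee n) = 0 := by
  obtain ⟨N, hN⟩ := (suppFinite φ).bddAbove
  exact ⟨N + 1, fun n hn => by_contra fun h => by
    have := hN (Set.mem_setOf.mpr h); omega⟩

theorem tailZero (φ : (ℕ → ℤ) →+ ℤ) (N : ℕ) (hN : ∀ n, N ≤ n → φ (ee n) = 0)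
    (x : ℕ → ℤ) (hx : ∀ m, m < N → x m = 0) : φ x = 0 := by
  classical
  set v : ℕ → ℕ → ℤ := fun k m => if m < N + k then 0 else x m with hv
  have hv0 : v 0 = x := by
    funext m
    show (if m < N + 0 then 0 else x m) = x m
    by_cases h : m < N + 0
    · rw [if_pos h]
      exact (hx m (by omega)).symm
    · rw [if_neg h]
  have hvs : ∀ k, v k = v (k+1) + (x (N + k)) • ee (N + k) := by
    intro k
    funext m
    simp only [hv, Pi.add_apply, Pi.smul_apply, ee, smul_eq_mul]
    rcases lt_trichotomy m (N + k) with h | h | h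
    · rw [if_pos h, if_pos (by omega), Pi.single_eq_of_ne (by omega), mul_zero, add_zero]
    · subst h
      rw [if_neg (by omega), if_pos (by omega), Pi.single_eq_same, mul_one, zero_add]
    · rw [if_neg (by omega), if_neg (by omega), Pi.single_eq_of_ne (by omega), mul_zero, add_zero]
  have hvc : ∀ k, φ (v k) = φ x := by
    intro k
    induction k with
    | zero => rw [hv0]
    | succ k ih =>
      rw [← ih, hvs k, map_add, map_zsmul, hN (N + k) (by omega), smul_zero, add_zero]
  by_contra hne
  refine keyLemma φ v (fun k => N + k) (fun a b hab => Nat.add_lt_add_left hab N) (fun k m hm => ?_)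
    (fun k => by rw [hvc k]; exact hne)
  simp [hv, hm]

theorem reprSum (φ : (ℕ → ℤ) →+ ℤ) (N : ℕ) (hN : ∀ n, N ≤ n → φ (ee n) = 0)
    (x : ℕ → ℤ) : φ x = ∑ n ∈ range N, x n * φ (ee n) := by
  classical
  set x1 : ℕ → ℤ := fun m => if m < N then x m else 0 with hx1
  set x2 : ℕ → ℤ := fun m => if m < N then 0 else x m with hx2
  have hsplit : x = x1 + x2 := by
    funext m
    by_cases h : m < N <;> simp [hx1, hx2, h]
  have h1 : x1 = ∑ n ∈ range N, x n • ee n := by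
    funext m
    rw [Finset.sum_apply]
    have : ∀ n, (x n • ee n) m = (Pi.single n (x n) : ℕ → ℤ) m := by
      intro n
      simp [ee, Pi.single_apply, mul_comm]
    rw [Finset.sum_congr rfl (fun n _ => this n), Finset.sum_pi_single]
    simp only [hx1, Finset.mem_range]
  have h2 : φ x2 = 0 := tailZero φ N hN x2 (fun m hm => by simp [hx2, hm])
  conv_lhs => rw [hsplit]
  rw [map_add, h2, add_zero, h1, map_sum]
  exact Finset.sum_congr rfl (fun n _ => by rw [map_zsmul, smul_eq_mul])

theorem hom_ext_ee (φ ψ : (ℕ → ℤ) →+ ℤ) (h : ∀ n, φ (ee n) = ψ (ee n)) (x : ℕ → ℤ) :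
    φ x = ψ x := by
  obtain ⟨N1, hN1⟩ := exists_suppBound φ
  obtain ⟨N2, hN2⟩ := exists_suppBound ψ
  rw [reprSum φ (max N1 N2) (fun n hn => hN1 n (le_trans (le_max_left _ _) hn)) x,
    reprSum ψ (max N1 N2) (fun n hn => hN2 n (le_trans (le_max_right _ _) hn)) x]
  exact Finset.sum_congr rfl (fun n _ => by rw [h n])

def Hgrp : AddSubgroup ((ℕ → ℤ) → ℤ) where
  carrier := {f | ∀ x y, f (x + y) = f x + f y}
  add_mem' := by
    intro a b ha hb
    intro x y
    simp only [Pi.add_apply, ha x y, hb x y]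
    ring
  zero_mem' := by intro x y; simp
  neg_mem' := by
    intro a ha x y
    simp only [Pi.neg_apply, ha x y]
    ring

def toHom (h : Hgrp) : (ℕ → ℤ) →+ ℤ := AddMonoidHom.mk' h.1 (fun x y => h.2 x y)

@[simp] theorem toHom_apply (h : Hgrp) (x : ℕ → ℤ) : toHom h x = h.1 x := rfl

theorem mem_Hgrp (f : (ℕ → ℤ) → ℤ) : f ∈ Hgrp ↔ ∀ x y, f (x + y) = f x + f y := Iff.rfl

theorem Hgrp_ext {h₁ h₂ : Hgrp} (h : ∀ n, toHom h₁ (ee n) = toHom h₂ (ee n)) : h₁ = h₂ := by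
  refine Subtype.ext (funext fun x => ?_)
  exact hom_ext_ee (toHom h₁) (toHom h₂) h x

instance : Countable Hgrp := by
  classical
  have hinj : Function.Injective (fun h : Hgrp =>
      (⟨(suppFinite (toHom h)).toFinset, fun n => toHom h (ee n),
        fun n => by simp [Set.Finite.mem_toFinset]⟩ : ℕ →₀ ℤ)) := by
    intro h₁ h₂ he
    refine Hgrp_ext (fun n => ?_)
    have := congrArg (fun F : ℕ →₀ ℤ => F n) he
    simpa using this
  exact hinj.countable

theorem Hclosed : IsClosed (Hgrp : Set ((ℕ → ℤ) → ℤ)) := by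
  have : (Hgrp : Set ((ℕ → ℤ) → ℤ)) =
      ⋂ (x : ℕ → ℤ) (y : ℕ → ℤ), {f | f (x + y) = f x + f y} := by
    ext f
    simp only [Set.mem_iInter, Set.mem_setOf_eq]
    exact Iff.rfl
  rw [this]
  exact isClosed_iInter fun x => isClosed_iInter fun y =>
    isClosed_eq (continuous_apply (x + y)) ((continuous_apply x).add (continuous_apply y))

-- little list lemma
theorem le_foldr_max (l : List ℕ) (a : ℕ) (ha : a ∈ l) : a ≤ l.foldr max 0 := by
  induction l with
  | nil => simp at ha
  | cons b t ih =>
    rcases List.mem_cons.mp ha with h | h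
    · subst h; exact le_max_left _ _
    · exact le_trans (ih h) (le_max_right _ _)

theorem listsum_range (f : ℕ → ℤ) (k : ℕ) :
    ((List.range k).map f).sum = ∑ j ∈ range k, f j := by
  induction k with
  | zero => simp
  | succ k ih => rw [List.range_succ, List.map_append, List.sum_append, Finset.sum_range_succ, ih]; simp

theorem eval_image_finite {K : Set Hgrp} (hK : IsCompact K) (x : ℕ → ℤ) :
    ((fun h : Hgrp => h.1 x) '' K).Finite := by
  have hc : Continuous (fun h : Hgrp => h.1 x) := (continuous_apply x).comp continuous_subtype_val
  exact (hK.image hc).finite ⟨inferInstance⟩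

theorem unif_supp {K : Set Hgrp} (hK : IsCompact K) :
    ∃ N, ∀ h ∈ K, ∀ n, N ≤ n → toHom h (ee n) = 0 := by
  classical
  by_contra hcon
  push_neg at hcon
  -- selection function
  have hsel : ∀ M : ℕ, ∃ p : Hgrp × ℕ, p.1 ∈ K ∧ M ≤ p.2 ∧ toHom p.1 (ee p.2) ≠ 0 := by
    intro M
    obtain ⟨h, hh, n, hn, hne⟩ := hcon M
    exact ⟨(h, n), hh, hn, hne⟩
  set suppB : Hgrp → ℕ := fun h => Nat.find (exists_suppBound (toHom h)) with hsuppB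
  have suppB_spec : ∀ (h : Hgrp) (n : ℕ), suppB h ≤ n → toHom h (ee n) = 0 := by
    intro h n hn
    exact Nat.find_spec (exists_suppBound (toHom h)) n hn
  set ps : List (ℕ × Hgrp × ℤ) → Hgrp → ℤ :=
    fun L h => (L.map (fun p => p.2.2 * toHom h (ee p.1))).sum with hps
  set step : List (ℕ × Hgrp × ℤ) → ℕ × Hgrp × ℤ := fun L =>
    let M := ((L.map fun p => max p.1 (suppB p.2.1)).foldr max 0) + 1
    let q := Classical.choose (hsel M)
    ((Classical.choose (hsel M)).2, (Classical.choose (hsel M)).1,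
      ((L.length : ℤ) + |ps L (Classical.choose (hsel M)).1|) * toHom (Classical.choose (hsel M)).1 (ee (Classical.choose (hsel M)).2)) with hstep
  set LL : ℕ → List (ℕ × Hgrp × ℤ) := fun k => Nat.rec [] (fun _ L => L ++ [step L]) k with hLL
  set trip : ℕ → ℕ × Hgrp × ℤ := fun k => step (LL k) with htrip
  set nn : ℕ → ℕ := fun k => (trip k).1 with hnn
  set hh : ℕ → Hgrp := fun k => (trip k).2.1 with hhh
  set cc : ℕ → ℤ := fun k => (trip k).2.2 with hcc
  have hLLs : ∀ k, LL (k + 1) = LL k ++ [trip k] := fun k => rfl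
  have hLLget : ∀ k, LL k = (List.range k).map trip := by
    intro k
    induction k with
    | zero => rfl
    | succ k ih => rw [hLLs, ih, List.range_succ, List.map_append]; rfl
  have hLLlen : ∀ k, (LL k).length = k := by
    intro k; rw [hLLget]; simp
  -- basic properties of trip k from selection
  have hM : ∀ k, ∃ M, (∀ j, j < k → max (nn j) (suppB (hh j)) < M) ∧
      hh k ∈ K ∧ M ≤ nn k ∧ toHom (hh k) (ee (nn k)) ≠ 0 ∧
      cc k = ((k : ℤ) + |ps (LL k) (hh k)|) * toHom (hh k) (ee (nn k)) := by
    intro k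
    set M := ((( LL k).map fun p => max p.1 (suppB p.2.1)).foldr max 0) + 1 with hMdef
    obtain ⟨hmem, hle, hne⟩ := Classical.choose_spec (hsel M)
    refine ⟨M, fun j hj => ?_, hmem, hle, hne, ?_⟩
    · have hmem2 : trip j ∈ LL k := by
        rw [hLLget]
        exact List.mem_map_of_mem (List.mem_range.mpr hj)
      have : max (nn j) (suppB (hh j)) ≤ ((LL k).map fun p => max p.1 (suppB p.2.1)).foldr max 0 :=
        le_foldr_max _ _ (List.mem_map_of_mem hmem2)
      omega
    · show (trip k).2.2 = _
      rw [htrip, hstep]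
      simp only [hLLlen k]
      rfl
  have hKmem : ∀ k, hh k ∈ K := fun k => (hM k).choose_spec.2.1
  have hdd : ∀ k, toHom (hh k) (ee (nn k)) ≠ 0 := fun k => (hM k).choose_spec.2.2.2.1
  have hccval : ∀ k, cc k = ((k : ℤ) + |ps (LL k) (hh k)|) * toHom (hh k) (ee (nn k)) :=
    fun k => (hM k).choose_spec.2.2.2.2
  have hlt : ∀ j k, j < k → nn j < nn k ∧ suppB (hh j) ≤ nn k := by
    intro j k hjk
    obtain ⟨M, h1, _, h3, _⟩ := hM k
    have := h1 j hjk
    constructor <;> omega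
  have hnn_inj : Function.Injective nn := by
    intro a b hab
    rcases lt_trichotomy a b with h | h | h
    · exact absurd hab (ne_of_lt (hlt a b h).1)
    · exact h
    · exact absurd hab.symm (ne_of_lt (hlt b a h).1)
  set x : ℕ → ℤ := fun m => if hm : ∃ j, nn j = m then cc hm.choose else 0 with hx
  have hx_nn : ∀ j, x (nn j) = cc j := by
    intro j
    have hex : ∃ j', nn j' = nn j := ⟨j, rfl⟩
    have : x (nn j) = cc hex.choose := dif_pos hex
    rw [this, hnn_inj hex.choose_spec]
  have hx0 : ∀ m, x m ≠ 0 → ∃ j, nn j = m := by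
    intro m hm
    by_contra hno
    exact hm (dif_neg hno)
  -- evaluation formula
  have heval : ∀ k : ℕ, ((k : ℤ) + |ps (LL k) (hh k)|) * (toHom (hh k) (ee (nn k)) * toHom (hh k) (ee (nn k))) + ps (LL k) (hh k) = toHom (hh k) x := by
    intro k
    set B := suppB (hh k) with hB
    set g : ℕ → ℤ := fun n => x n * toHom (hh k) (ee n) with hg
    set T := range (max B (nn k + 1)) with hT
    have step1 : toHom (hh k) x = ∑ n ∈ range B, g n :=
      reprSum (toHom (hh k)) B (suppB_spec (hh k)) x
    have step2 : ∑ n ∈ range B, g n = ∑ n ∈ T, g n := by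
      refine Finset.sum_subset (Finset.range_subset_range.mpr (le_max_left _ _)) (fun n hn hn' => ?_)
      have : B ≤ n := by
        have := Finset.mem_range.not.mp hn'
        omega
      rw [hg]
      simp only []
      rw [suppB_spec (hh k) n this, mul_zero]
    have hIsub : (range (k+1)).image nn ⊆ T := by
      intro n hn
      obtain ⟨j, hj, rfl⟩ := Finset.mem_image.mp hn
      have hjk : j ≤ k := Nat.lt_succ_iff.mp (Finset.mem_range.mp hj)
      have hle : nn j ≤ nn k := by
        rcases Nat.lt_or_ge j k with h | h
        · exact le_of_lt (hlt j k h).1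
        · have hjke : j = k := le_antisymm hjk h
          subst hjke
          exact le_refl _
      rw [hT]
      exact Finset.mem_range.mpr (by omega)
    have step3 : ∑ n ∈ T, g n = ∑ n ∈ (range (k+1)).image nn, g n := by
      refine (Finset.sum_subset hIsub (fun n hn hn' => ?_)).symm
      by_contra hgne
      obtain ⟨j, hj⟩ := hx0 n (fun h0 => hgne (by rw [hg]; simp only []; rw [h0, zero_mul]))
      rcases Nat.lt_or_ge k j with h | h
      · have : suppB (hh k) ≤ nn j := (hlt k j h).2
        refine hgne ?_
        rw [hg]
        simp only []
        rw [← hj, suppB_spec (hh k) (nn j) this, mul_zero]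
      · exact hn' (Finset.mem_image.mpr ⟨j, Finset.mem_range.mpr (by omega), hj⟩)
    have step4 : ∑ n ∈ (range (k+1)).image nn, g n = ∑ j ∈ range (k+1), g (nn j) :=
      Finset.sum_image (fun a _ b _ hab => hnn_inj hab)
    have step5 : ∑ j ∈ range (k+1), g (nn j) =
        (∑ j ∈ range k, cc j * toHom (hh k) (ee (nn j))) + cc k * toHom (hh k) (ee (nn k)) := by
      rw [Finset.sum_range_succ]
      congr 1
      · refine Finset.sum_congr rfl (fun j _ => ?_)
        rw [hg]; simp only []; rw [hx_nn j]
      · rw [hg]; simp only []; rw [hx_nn k]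
    have step6 : ps (LL k) (hh k) = ∑ j ∈ range k, cc j * toHom (hh k) (ee (nn j)) := by
      rw [hps]
      simp only []
      rw [hLLget k, List.map_map]
      have : ((fun p : ℕ × Hgrp × ℤ => p.2.2 * toHom (hh k) (ee p.1)) ∘ trip) =
          fun j => cc j * toHom (hh k) (ee (nn j)) := rfl
      rw [this, listsum_range]
    rw [step1, step2, step3, step4, step5, ← step6, hccval k]
    ring
  have hval : ∀ k : ℕ, (k : ℤ) ≤ toHom (hh k) x := by
    intro k
    have h1 := heval k
    set d := toHom (hh k) (ee (nn k)) with hd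
    have hd1 : 1 ≤ d * d := by
      rcases lt_or_gt_of_ne (hdd k) with h | h <;> nlinarith
    set p := ps (LL k) (hh k) with hp
    nlinarith [abs_nonneg p, neg_abs_le p, le_abs_self p]
  obtain ⟨C, hC⟩ := (eval_image_finite hK x).bddAbove
  have hCk : ∀ k : ℕ, (k : ℤ) ≤ C := by
    intro k
    refine le_trans (hval k) (hC ?_)
    exact Set.mem_image_of_mem _ (hKmem k)
  have := hCk (C.toNat + 1)
  have h2 := Int.self_le_toNat C
  push_cast at this
  omega

theorem compact_finite {K : Set Hgrp} (hK : IsCompact K) : K.Finite := by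
  classical
  obtain ⟨N, hN⟩ := unif_supp hK
  have hinj : Set.InjOn (fun h : Hgrp => fun n : Fin N => h.1 (ee n)) K := by
    intro h₁ h₁m h₂ h₂m he
    refine Hgrp_ext (fun n => ?_)
    rcases Nat.lt_or_ge n N with h | h
    · have := congrFun he ⟨n, h⟩
      simpa using this
    · rw [hN h₁ h₁m n h, hN h₂ h₂m n h]
  have himg : ((fun h : Hgrp => fun n : Fin N => h.1 (ee n)) '' K).Finite := by
    refine Set.Finite.subset (Set.Finite.pi (t := fun n : Fin N => (fun h : Hgrp => h.1 (ee n)) '' K)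
      (fun n => eval_image_finite hK (ee n))) ?_
    rintro - ⟨h, hm, rfl⟩
    intro n _
    exact Set.mem_image_of_mem _ hm
  exact Set.Finite.of_finite_image himg hinj

abbrev Circ := AddCircle (1:ℝ)

theorem circ_coe_zsmul (k : ℤ) (x : ℝ) : k • ((x : ℝ) : Circ) = ((k * x : ℝ) : Circ) := by
  have := map_zsmul (QuotientAddGroup.mk' (AddSubgroup.zmultiples (1:ℝ))) k x
  simp only [QuotientAddGroup.mk'_apply] at this
  rw [← this, zsmul_eq_mul]

theorem circ_norm_small {s : ℝ} (hs : |s| < 1/2) : ‖((s:ℝ) : Circ)‖ = |s| := by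
  rw [AddCircle.norm_eq]
  have h1 : round ((1:ℝ)⁻¹ * s) = 0 := by
    rw [inv_one, one_mul, round_eq_zero_iff]
    constructor
    · linarith [neg_abs_le s]
    · linarith [le_abs_self s]
  rw [h1]
  push_cast
  ring_nf

theorem circle_escape (u : Circ) (h : ∀ k : ℤ, ‖k • u‖ < 1/4) : u = 0 := by
  by_contra hu
  obtain ⟨r0, rfl⟩ := QuotientAddGroup.mk_surjective u
  set r : ℝ := r0 - round r0 with hrdef
  have hrc : ((r : ℝ) : Circ) = (r0 : Circ) := by
    have h2 : ((round r0 : ℝ) : Circ) = 0 := by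
      rw [AddCircle.coe_eq_zero_iff]
      exact ⟨round r0, by simp⟩
    have h3 : ((r : ℝ) : Circ) = (r0 : Circ) - ((round r0 : ℝ) : Circ) := by
      rw [hrdef]
      exact map_sub (QuotientAddGroup.mk' (AddSubgroup.zmultiples (1:ℝ))) r0 (round r0 : ℝ)
    rw [h3, h2, sub_zero]
  have hr2 : |r| ≤ 1/2 := abs_sub_round r0
  have hrne : r ≠ 0 := by
    intro h0
    apply hu
    rw [← hrc, h0]
    simp
  have hd : 0 < |r| := abs_pos.mpr hrne
  have h1 := h 1
  rw [one_smul, ← hrc] at h1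
  have hrlt : |r| < 1/2 := by
    rcases lt_or_eq_of_le hr2 with h' | h'
    · exact h'
    · exfalso
      rcases abs_eq (by norm_num : (0:ℝ) ≤ 1/2) |>.mp h' with h'' | h''
      · rw [h''] at h1
        rw [AddCircle.norm_eq] at h1
        have : round ((1:ℝ)⁻¹ * (1/2)) = 1 := by
          rw [inv_one, one_mul, round_eq]
          norm_num
        rw [this] at h1
        push_cast at h1
        rw [show ((1:ℝ)/2 - 1*1 : ℝ) = -(1/2) by ring, abs_neg,
          abs_of_pos (by norm_num : (0:ℝ) < 1/2)] at h1
        norm_num at h1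
      · rw [h''] at h1
        rw [AddCircle.norm_eq] at h1
        have : round ((1:ℝ)⁻¹ * (-(1/2))) = 0 := by
          rw [inv_one, one_mul, round_eq]
          norm_num
        rw [this] at h1
        push_cast at h1
        rw [show (-(1/2) - 0*1 : ℝ) = -(1/2) by ring, abs_neg,
          abs_of_pos (by norm_num : (0:ℝ) < 1/2)] at h1
        norm_num at h1
  rw [circ_norm_small hrlt] at h1
  -- minimal k with 1/4 ≤ k * |r|
  have hex : ∃ k : ℕ, 1/4 ≤ (k:ℝ) * |r| := by
    obtain ⟨k, hk⟩ := exists_nat_gt (1/(4*|r|))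
    refine ⟨k, ?_⟩
    rw [div_lt_iff₀ (by positivity)] at hk
    nlinarith
  set k0 := Nat.find hex with hk0def
  have hk0 : 1/4 ≤ (k0:ℝ) * |r| := Nat.find_spec hex
  have hk0ne : k0 ≠ 0 := by
    intro h0
    rw [h0] at hk0
    norm_num at hk0
  have hprev : ((k0 - 1 : ℕ):ℝ) * |r| < 1/4 := by
    have := Nat.find_min hex (m := k0 - 1) (by omega)
    push_neg at this
    exact this
  have hcast : ((k0:ℝ)) = ((k0 - 1 : ℕ):ℝ) + 1 := by
    have : k0 - 1 + 1 = k0 := by omega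
    rw [← this]
    push_cast
    ring
  have hlt2 : (k0:ℝ) * |r| < 1/2 := by
    rw [hcast]
    nlinarith
  have hk := h (k0 : ℤ)
  rw [← hrc] at hk
  have hsm : ((k0:ℤ) • ((r:ℝ):Circ)) = (((k0:ℝ) * r : ℝ) : Circ) := by
    rw [circ_coe_zsmul]
    push_cast
    ring_nf
  rw [hsm] at hk
  have habs : |(k0:ℝ) * r| = (k0:ℝ) * |r| := by
    rw [abs_mul, abs_of_nonneg (by positivity : (0:ℝ) ≤ (k0:ℝ))]
  rw [circ_norm_small (by rw [habs]; exact hlt2), habs] at hk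
  linarith

abbrev D1 := ContinuousAddMonoidHom ↥Hgrp Circ
abbrev D2 := ContinuousAddMonoidHom D1 Circ

def chr (x : ℕ → ℤ) (t : Circ) : D1 :=
  ⟨AddMonoidHom.mk' (fun h : ↥Hgrp => (h.1 x) • t)
      (by intro a b; exact add_zsmul t (a.1 x) (b.1 x)),
    (continuous_of_discreteTopology (f := fun k : ℤ => k • t)).comp
      ((continuous_apply x).comp continuous_subtype_val)⟩

@[simp] theorem chr_apply (x : ℕ → ℤ) (t : Circ) (h : ↥Hgrp) :
    chr x t h = (h.1 x) • t := rfl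

/-- evaluation at a point as an `AddMonoidHom` on the dual -/
def evalH (h : ↥Hgrp) : D1 →+ Circ := AddMonoidHom.mk' (fun χ => χ h) (fun _ _ => rfl)

def evalH2 (χ : D1) : D2 →+ Circ := AddMonoidHom.mk' (fun ψ => ψ χ) (fun _ _ => rfl)

def Psi : OnePoint (Circ × ℕ) → D1 := fun p => p.elim 0 (fun q => chr (ee q.2) q.1)

theorem Psi_cont : Continuous Psi := by
  refine continuous_induced_rng.mpr ?_
  refine ContinuousMap.continuous_compactOpen.mpr (fun Kc hKc U hU => ?_)
  have hKfin : Kc.Finite := compact_finite hKc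
  obtain ⟨N, hN⟩ := unif_supp hKc
  have hpre : (OnePoint.some ⁻¹'
      {p : OnePoint (Circ × ℕ) | Set.MapsTo (⇑((ContinuousAddMonoidHom.toContinuousMap ∘ Psi) p)) Kc U}) =
      {q : Circ × ℕ | ∀ h ∈ Kc, (h.1 (ee q.2)) • q.1 ∈ U} := rfl
  have hopen_plane : IsOpen {q : Circ × ℕ | ∀ h ∈ Kc, (h.1 (ee q.2)) • q.1 ∈ U} := by
    have heq : {q : Circ × ℕ | ∀ h ∈ Kc, (h.1 (ee q.2)) • q.1 ∈ U} =
        ⋂ h ∈ Kc, {q : Circ × ℕ | (h.1 (ee q.2)) • q.1 ∈ U} := by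
      ext q; simp [Set.mem_iInter]
    rw [heq]
    refine hKfin.isOpen_biInter (fun h _ => ?_)
    have hc : Continuous (fun q : Circ × ℕ => (h.1 (ee q.2)) • q.1) := by
      have h1 : Continuous (fun q : Circ × ℕ => ((h.1 (ee q.2), q.1) : ℤ × Circ)) :=
        Continuous.prodMk ((continuous_of_discreteTopology
          (f := fun n : ℕ => h.1 (ee n))).comp continuous_snd) continuous_fst
      exact continuous_smul.comp h1
    exact hc.isOpen_preimage U hU
  rw [OnePoint.isOpen_def]
  constructor
  · intro hinf
    have h0U : ∀ h ∈ Kc, (0 : Circ) ∈ U := by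
      intro h hm
      have := hinf hm
      exact this
    rw [hpre]
    refine IsCompact.of_isClosed_subset (isCompact_univ.prod ((Set.finite_Iio N).isCompact))
      hopen_plane.isClosed_compl ?_
    intro q hq
    simp only [Set.mem_compl_iff, Set.mem_setOf_eq, not_forall] at hq
    obtain ⟨h, hm, hne⟩ := hq
    refine Set.mem_prod.mpr ⟨trivial, ?_⟩
    show q.2 ∈ Set.Iio N
    by_contra hge
    simp only [Set.mem_Iio, not_lt] at hge
    refine hne ?_
    have h0 : h.1 (ee q.2) = 0 := hN h hm q.2 hge
    rw [h0, zero_zsmul]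
    exact h0U h hm
  · rw [hpre]
    exact hopen_plane

def K0 : Set D1 := Set.range Psi

theorem K0_compact : IsCompact K0 := isCompact_range Psi_cont

theorem zero_mem_K0 : (0 : D1) ∈ K0 := ⟨OnePoint.infty, rfl⟩

theorem chr_mem_K0 (n : ℕ) (t : Circ) : chr (ee n) t ∈ K0 := ⟨OnePoint.some (t, n), rfl⟩

theorem circBaer : Module.Baer ℤ Circ := by
  intro I g
  obtain ⟨a, ha⟩ := (IsPrincipalIdealRing.principal I).principal
  by_cases h0 : a = 0
  · refine ⟨0, fun x hx => ?_⟩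
    subst h0
    have hx' := hx
    rw [ha] at hx'
    obtain ⟨c, hc⟩ := Submodule.mem_span_singleton.mp hx'
    have hx0 : x = 0 := by rw [← hc]; simp
    have hmem0 : (⟨x, hx⟩ : I) = 0 := Subtype.ext hx0
    rw [hmem0, map_zero]
    simp
  · have haI : a ∈ I := by rw [ha]; exact Submodule.mem_span_singleton_self a
    set y := DivisibleBy.div (g ⟨a, haI⟩) a with hy0
    have hy : a • y = g ⟨a, haI⟩ := DivisibleBy.div_cancel _ h0
    refine ⟨LinearMap.toSpanSingleton ℤ Circ y, fun x hx => ?_⟩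
    obtain ⟨c, hc⟩ := Submodule.mem_span_singleton.mp (by rw [← ha]; exact hx)
    have hxc : (⟨x, hx⟩ : I) = c • (⟨a, haI⟩ : I) := Subtype.ext (by
      simp only [SetLike.mk_smul_mk]
      exact hc.symm)
    calc LinearMap.toSpanSingleton ℤ Circ y x = x • y := LinearMap.toSpanSingleton_apply ℤ Circ y x
      _ = (c * a) • y := by rw [← hc]; norm_num
      _ = c • (a • y) := mul_smul c a y
      _ = c • g ⟨a, haI⟩ := by rw [hy]
      _ = g (c • ⟨a, haI⟩) := (map_smul g c _).symm
      _ = g ⟨x, hx⟩ := by rw [← hxc]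

def suppB (h : ↥Hgrp) : ℕ := (exists_suppBound (toHom h)).choose

theorem suppB_spec (h : ↥Hgrp) (n : ℕ) (hn : suppB h ≤ n) : toHom h (ee n) = 0 :=
  (exists_suppBound (toHom h)).choose_spec n hn

def W0 : Set D2 := {ψ : D2 | ∀ χ ∈ K0, ψ χ ∈ Metric.ball (0:Circ) (1/4)}

theorem W0_open : IsOpen W0 := by
  have heq : W0 = ContinuousAddMonoidHom.toContinuousMap ⁻¹'
      {f : C(D1, Circ) | Set.MapsTo f K0 (Metric.ball (0:Circ) (1/4))} := rfl
  rw [heq]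
  exact (ContinuousMap.isOpen_setOf_mapsTo K0_compact Metric.isOpen_ball).preimage
    (ContinuousAddMonoidHom.isInducing_toContinuousMap _ _).continuous

theorem W0_eq : W0 = {(0 : D2)} := by
  apply Set.eq_singleton_iff_unique_mem.mpr
  constructor
  · intro χ _
    show ((0 : D2) χ) ∈ Metric.ball (0:Circ) (1/4)
    have h00 : (0 : D2) χ = 0 := rfl
    rw [h00]
    exact Metric.mem_ball_self (by norm_num)
  intro ψ hψ
  -- (a) ψ kills all chr (ee n) t
  have hchr0 : ∀ (n : ℕ) (t : Circ), ψ (chr (ee n) t) = 0 := by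
    intro n t
    refine circle_escape _ (fun k => ?_)
    have hsm : k • (chr (ee n) t) = chr (ee n) (k • t) := by
      ext h
      have h1 : (k • chr (ee n) t) h = k • (chr (ee n) t h) := map_zsmul (evalH h) k _
      rw [h1, chr_apply, chr_apply, smul_comm]
    have h2 : k • (ψ (chr (ee n) t)) = ψ (chr (ee n) (k • t)) := by
      rw [← map_zsmul ψ, hsm]
    rw [h2]
    have := hψ _ (chr_mem_K0 n (k • t))
    rwa [mem_ball_zero_iff] at this
  -- (b) continuity of ψ at 0 gives a finite "window"
  have hU : ψ ⁻¹' (Metric.ball (0:Circ) (1/4)) ∈ nhds (0 : D1) := by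
    have h0 : ψ (0 : D1) = 0 := map_zero ψ
    refine (map_continuous ψ).continuousAt.preimage_mem_nhds ?_
    rw [h0]
    exact Metric.ball_mem_nhds _ (by norm_num)
  rw [(ContinuousAddMonoidHom.isInducing_toContinuousMap _ _).nhds_eq_comap] at hU
  obtain ⟨S, hS, hSsub⟩ := Filter.mem_comap.mp hU
  have hbasis := TopologicalSpace.isTopologicalBasis_of_subbasis
    (ContinuousMap.compactOpen_eq (X := ↥Hgrp) (Y := Circ))
  obtain ⟨B0, hB0mem, hmem0, hBsub⟩ := hbasis.mem_nhds_iff.mp hS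
  obtain ⟨F, ⟨hFfin, hFsub⟩, rfl⟩ := hB0mem
  have hchoice : ∀ s : F, ∃ Kc Uc, IsCompact Kc ∧ IsOpen Uc ∧
      (s : Set C(↥Hgrp, Circ)) = {f : C(↥Hgrp, Circ) | Set.MapsTo f Kc Uc} := by
    intro ⟨s, hs⟩
    have := hFsub hs
    obtain ⟨Kc, hKc, Uc, hUc, hEq⟩ := this
    exact ⟨Kc, Uc, hKc, hUc, hEq.symm⟩
  choose Kf Uf hKf hUf hsEq using hchoice
  have : Finite F := hFfin.to_subtype
  set Wset : Set ↥Hgrp := ⋃ s : F, Kf s with hWset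
  have hWfin : Wset.Finite := Set.finite_iUnion (fun s => compact_finite (hKf s))
  -- the subgroup trick : ψ kills everything vanishing on Wset
  have hV0 : ∀ χ : D1, (∀ h ∈ Wset, χ h = 0) → ψ χ = 0 := by
    intro χ hχ
    refine circle_escape _ (fun k => ?_)
    have hin : ∀ (c : D1), (∀ h ∈ Wset, c h = 0) →
        ContinuousAddMonoidHom.toContinuousMap c ∈ ⋂₀ F := by
      intro c hc
      refine Set.mem_sInter.mpr (fun s hs => ?_)
      have heqs : s = {f : C(↥Hgrp, Circ) | Set.MapsTo f (Kf ⟨s, hs⟩) (Uf ⟨s, hs⟩)} :=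
        hsEq ⟨s, hs⟩
      rw [heqs]
      intro h hh
      have hc0 : c h = 0 := hc h (Set.mem_iUnion.mpr ⟨⟨s, hs⟩, hh⟩)
      show (c : ↥Hgrp → Circ) h ∈ Uf ⟨s, hs⟩
      rw [hc0]
      -- 0 ∈ Uf s : from hmem0
      have hm0 := Set.mem_sInter.mp hmem0 s hs
      rw [heqs] at hm0
      have := hm0 hh
      simpa using this
    have hkχ : ∀ h ∈ Wset, (k • χ) h = 0 := by
      intro h hm
      have : (k • χ) h = k • (χ h) := map_zsmul (evalH h) k χ
      rw [this, hχ h hm, smul_zero]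
    have hball : ψ (k • χ) ∈ Metric.ball (0:Circ) (1/4) :=
      hSsub (hBsub (hin (k • χ) hkχ))
    rw [map_zsmul ψ] at hball
    rwa [mem_ball_zero_iff] at hball
  -- (c) decomposition of an arbitrary χ₀
  refine DFunLike.ext _ _ (fun χ₀ => ?_)
  show ψ χ₀ = (0 : D2) χ₀
  have hzero : (0 : D2) χ₀ = 0 := rfl
  rw [hzero]
  set N : ℕ := hWfin.toFinset.sup suppB with hN
  have hNW : ∀ h ∈ Wset, ∀ n, N ≤ n → toHom h (ee n) = 0 := by
    intro h hm n hn
    refine suppB_spec h n (le_trans ?_ hn)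
    exact Finset.le_sup (hWfin.mem_toFinset.mpr hm)
  set π : ↥Hgrp →+ (Fin N → ℤ) :=
    AddMonoidHom.mk' (fun h => fun i => toHom h (ee i)) (fun a b => funext fun i => rfl) with hπ
  set Hsub : AddSubgroup ↥Hgrp := AddSubgroup.closure Wset with hHsub
  have hsub_supp : ∀ h ∈ Hsub, ∀ n, N ≤ n → toHom h (ee n) = 0 := by
    have hle : Hsub ≤ {
        carrier := {h : ↥Hgrp | ∀ n, N ≤ n → toHom h (ee n) = 0}
        add_mem' := by
          intro a b ha hb n hn
          show (a.1 + b.1) (ee n) = 0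
          rw [Pi.add_apply]
          have h1 : a.1 (ee n) = 0 := ha n hn
          have h2 : b.1 (ee n) = 0 := hb n hn
          rw [h1, h2, add_zero]
        zero_mem' := fun n _ => rfl
        neg_mem' := by
          intro a ha n hn
          show (-a.1) (ee n) = 0
          rw [Pi.neg_apply]
          have h1 : a.1 (ee n) = 0 := ha n hn
          rw [h1, neg_zero] } := AddSubgroup.closure_le _ |>.mpr hNW
    exact fun h hm => hle hm
  have hπinj : ∀ h₁ ∈ Hsub, ∀ h₂ ∈ Hsub, π h₁ = π h₂ → h₁ = h₂ := by
    intro h₁ hm₁ h₂ hm₂ he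
    refine Hgrp_ext (fun n => ?_)
    rcases Nat.lt_or_ge n N with h | h
    · exact congrFun he ⟨n, h⟩
    · rw [hsub_supp h₁ hm₁ n h, hsub_supp h₂ hm₂ n h]
  set Bsub : Submodule ℤ (Fin N → ℤ) := AddSubgroup.toIntSubmodule (AddSubgroup.map π Hsub)
    with hBsubdef
  have hBmem : ∀ b : Bsub, ∃ h ∈ Hsub, π h = b.1 := by
    intro b
    have : b.1 ∈ AddSubgroup.map π Hsub := b.2
    exact AddSubgroup.mem_map.mp this
  set pick : Bsub → ↥Hgrp := fun b => (hBmem b).choose with hpick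
  have pick_mem : ∀ b, pick b ∈ Hsub := fun b => (hBmem b).choose_spec.1
  have pick_eq : ∀ b, π (pick b) = b.1 := fun b => (hBmem b).choose_spec.2
  set f0 : Bsub →+ Circ := AddMonoidHom.mk' (fun b => χ₀ (pick b)) (by
    intro a b
    show χ₀ (pick (a + b)) = χ₀ (pick a) + χ₀ (pick b)
    have hadd : pick (a + b) = pick a + pick b := by
      refine hπinj _ (pick_mem _) _ (AddSubgroup.add_mem _ (pick_mem a) (pick_mem b)) ?_
      rw [map_add, pick_eq, pick_eq, pick_eq]
      rfl
    rw [hadd, map_add]) with hf0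
  obtain ⟨g, hg⟩ := (circBaer.injective).out Bsub.subtype (Submodule.injective_subtype Bsub)
    f0.toIntLinearMap
  set d : D1 := ∑ i : Fin N, chr (ee i) (g (Pi.single i 1)) with hd
  have hd_eval : ∀ h ∈ Hsub, d h = χ₀ h := by
    intro h hm
    have h1 : d h = ∑ i : Fin N, (h.1 (ee i)) • g (Pi.single i 1) := by
      have := map_sum (evalH h) (fun i : Fin N => chr (ee i) (g (Pi.single i 1))) Finset.univ
      exact this
    have h2 : ∀ i : Fin N, (h.1 (ee i)) • g (Pi.single i 1) = g ((toHom h (ee i)) • Pi.single i 1) := by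
      intro i
      rw [map_smul]
      rfl
    have h3 : (∑ i : Fin N, (toHom h (ee i)) • Pi.single i (1:ℤ)) = π h := by
      funext j
      rw [Finset.sum_apply]
      have h4 : ∀ i : Fin N, (((toHom h (ee i)) • Pi.single i (1:ℤ) : Fin N → ℤ)) j
          = (Pi.single i (toHom h (ee i)) : Fin N → ℤ) j := by
        intro i
        simp [Pi.single_apply, mul_comm]
      rw [Finset.sum_congr rfl (fun i _ => h4 i), Finset.sum_pi_single]
      rw [if_pos (Finset.mem_univ j)]
      rfl
    have hπmem : π h ∈ Bsub := AddSubgroup.mem_map.mpr ⟨h, hm, rfl⟩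
    have h5 : g (π h) = f0 ⟨π h, hπmem⟩ := hg ⟨π h, hπmem⟩
    have h6 : f0 ⟨π h, hπmem⟩ = χ₀ (pick ⟨π h, hπmem⟩) := rfl
    have h7 : pick ⟨π h, hπmem⟩ = h := hπinj _ (pick_mem _) _ hm (pick_eq ⟨π h, hπmem⟩)
    rw [h1, Finset.sum_congr rfl (fun i _ => h2 i), ← map_sum g, h3, h5, h6, h7]
  have hψd : ψ d = 0 := by
    rw [hd, map_sum ψ]
    exact Finset.sum_eq_zero (fun i _ => hchr0 i _)
  have hdiff : ∀ h ∈ Wset, (χ₀ - d) h = 0 := by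
    intro h hm
    have : (χ₀ - d) h = χ₀ h - d h := map_sub (evalH h) χ₀ d
    rw [this, hd_eval h (AddSubgroup.subset_closure hm), sub_self]
  have := hV0 _ hdiff
  have hsum : ψ χ₀ = ψ (χ₀ - d) + ψ d := by rw [← map_add ψ]; congr 1; abel
  rw [hsum, this, hψd, add_zero]

theorem exists_int_kernel (I : Finset (ℕ → ℤ)) :
    ∃ a : Fin (I.card + 1) → ℤ, a ≠ 0 ∧
      ∀ x ∈ I, ∑ n : Fin (I.card + 1), a n * x (n : ℕ) = 0 := by
  classical
  set k := I.card with hk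
  set T : (Fin (k+1) → ℚ) →ₗ[ℚ] ({x // x ∈ I} → ℚ) :=
    { toFun := fun v => fun x => ∑ n : Fin (k+1), v n * (x.1 (n:ℕ) : ℚ)
      map_add' := by
        intro v w
        funext x
        simp [add_mul, Finset.sum_add_distrib]
      map_smul' := by
        intro c v
        funext x
        simp [Finset.mul_sum, mul_assoc] } with hT
  have hninj : ¬ Function.Injective T := by
    intro hinj
    have h1 := LinearMap.finrank_le_finrank_of_injective hinj
    rw [Module.finrank_pi, Module.finrank_pi] at h1
    simp only [Fintype.card_fin, Fintype.card_coe] at h1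
    omega
  obtain ⟨v₁, v₂, he, hvne⟩ := Function.not_injective_iff.mp hninj
  set v := v₁ - v₂ with hv
  have hv0 : v ≠ 0 := sub_ne_zero.mpr hvne
  have hTv : T v = 0 := by rw [map_sub, he, sub_self]
  set dd : ℕ := ∏ n : Fin (k+1), (v n).den with hdd
  have hdpos : 0 < dd := Finset.prod_pos (fun n _ => (v n).pos)
  set a : Fin (k+1) → ℤ := fun n =>
    ((∏ m ∈ Finset.univ.erase n, (v m).den : ℕ) : ℤ) * (v n).num with ha
  have hcast : ∀ n, ((a n : ℚ)) = (dd : ℚ) * v n := by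
    intro n
    have hden : ((v n).den : ℚ) ≠ 0 := Nat.cast_ne_zero.mpr (v n).den_nz
    have hsplit : ((v n).den) * (∏ m ∈ Finset.univ.erase n, (v m).den) = dd :=
      Finset.mul_prod_erase Finset.univ (fun m => (v m).den) (mem_univ n)
    have h1 : ((dd : ℚ)) = ((v n).den : ℚ) * ((∏ m ∈ Finset.univ.erase n, (v m).den : ℕ) : ℚ) := by
      exact_mod_cast hsplit.symm
    have h2 : (dd : ℚ) * v n
        = ((v n).den : ℚ) * ((∏ m ∈ Finset.univ.erase n, (v m).den : ℕ) : ℚ)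
          * (((v n).num : ℚ) / ((v n).den : ℚ)) := by
      rw [← h1, Rat.num_div_den]
    rw [h2, ha]
    push_cast
    field_simp
  have haker : ∀ x ∈ I, ∑ n : Fin (k+1), a n * x (n:ℕ) = 0 := by
    intro x hx
    have hq : ((∑ n : Fin (k+1), a n * x (n:ℕ) : ℤ) : ℚ)
        = (dd : ℚ) * (T v ⟨x, hx⟩) := by
      push_cast
      rw [show (T v ⟨x, hx⟩) = ∑ n : Fin (k+1), v n * (x (n:ℕ) : ℚ) from rfl, Finset.mul_sum]
      refine Finset.sum_congr rfl (fun n _ => ?_)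
      rw [hcast n]
      ring
    rw [hTv] at hq
    simp only [Pi.zero_apply, mul_zero] at hq
    exact_mod_cast hq
  refine ⟨a, ?_, haker⟩
  obtain ⟨n₀, hn₀⟩ := Function.ne_iff.mp hv0
  intro h0
  have : a n₀ = 0 := by rw [h0]; rfl
  have h2 : ((a n₀ : ℚ)) = 0 := by exact_mod_cast this
  rw [hcast n₀] at h2
  rcases mul_eq_zero.mp h2 with h | h
  · exact absurd h (by positivity)
  · exact hn₀ h

theorem Hgrp_not_isOpen_singleton (h₀ : ↥Hgrp) : ¬ IsOpen ({h₀} : Set ↥Hgrp) := by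
  intro hop
  obtain ⟨O, hO, hOeq⟩ := isOpen_induced_iff.mp hop
  have hmem : h₀.1 ∈ O := by
    have : h₀ ∈ Subtype.val ⁻¹' O := by rw [hOeq]; exact Set.mem_singleton _
    exact this
  obtain ⟨I, u, hu, hsub⟩ := isOpen_pi_iff.mp hO h₀.1 hmem
  obtain ⟨a, hane, haker⟩ := exists_int_kernel I
  set ℓ : (ℕ → ℤ) → ℤ := fun x => ∑ n : Fin (I.card+1), a n * x (n:ℕ) with hℓ
  have hℓH : ℓ ∈ Hgrp := by
    intro x y
    simp only [hℓ, Pi.add_apply, mul_add, Finset.sum_add_distrib]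
  set g : ↥Hgrp := ⟨h₀.1 + ℓ, Hgrp.add_mem h₀.2 hℓH⟩ with hg
  have hgO : g.1 ∈ O := by
    refine hsub ?_
    intro x hx
    have hxI : x ∈ I := hx
    have hzero : ℓ x = 0 := haker x hxI
    show (h₀.1 + ℓ) x ∈ u x
    rw [Pi.add_apply, hzero, add_zero]
    exact (hu x hxI).2
  have hgh : g = h₀ := by
    have : g ∈ Subtype.val ⁻¹' O := hgO
    rw [hOeq] at this
    exact this
  obtain ⟨n₀, hn₀⟩ := Function.ne_iff.mp hane
  have hℓe : ℓ (ee (n₀:ℕ)) = a n₀ := by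
    rw [hℓ]
    simp only [ee]
    rw [Finset.sum_eq_single n₀]
    · rw [Pi.single_eq_same, mul_one]
    · intro b _ hb
      rw [Pi.single_eq_of_ne (fun hc => hb (Fin.val_injective hc)) 1, mul_zero]
    · intro hn
      exact absurd (Finset.mem_univ n₀) hn
  have : g.1 (ee (n₀:ℕ)) = h₀.1 (ee (n₀:ℕ)) + a n₀ := by
    show (h₀.1 + ℓ) (ee (n₀:ℕ)) = _
    rw [Pi.add_apply, hℓe]
  rw [hgh] at this
  have han : a n₀ ≠ 0 := by simpa using hn₀
  omega

/-- The product `ℤ^(ℤ^ℕ)` of copies of the discrete group `ℤ` indexed by a set of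
cardinality continuum contains a countable closed subgroup `H` which is not reflexive:
the canonical evaluation map `α_H : H → H^^`, `h ↦ (χ ↦ χ h)`, into the second
Pontryagin dual of `H` (with the subspace topology on `H`) is not a topological
isomorphism. -/
theorem exists_countable_closed_nonreflexive_subgroup :
    ∃ H : AddSubgroup ((ℕ → ℤ) → ℤ),
      Countable H ∧ IsClosed (H : Set ((ℕ → ℤ) → ℤ)) ∧
      ¬ ∃ e : H ≃ₜ PontDual (PontDual H),
          ∀ (h : H) (χ : PontDual H), e h χ = χ h := by
  refine ⟨Hgrp, inferInstance, Hclosed, ?_⟩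
  rintro ⟨e, -⟩
  have hop : IsOpen (e ⁻¹' W0) := W0_open.preimage e.continuous
  have heq : e ⁻¹' W0 = {e.symm 0} := by
    rw [W0_eq]
    ext h
    simp only [Set.mem_preimage, Set.mem_singleton_iff]
    constructor
    · intro hh
      rw [← Homeomorph.symm_apply_apply e h, hh]
    · intro hh
      rw [hh, Homeomorph.apply_symm_apply]
  rw [heq] at hop
  exact Hgrp_not_isOpen_singleton _ hop

end
end
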